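/- arXiv:2205.03697 — 7 statements merged into one kernel-verified Lean document; each statement's English description precedes it below -/
import Mathlib

section
/- For all positive integers n, the total number of even parts counted over all partitions of n into distinct parts equals the number of partitions of n in which exactly one part is repeated and that repeated part is odd, minus the number of partitions of n in which exactly one part is repeated and that repeated part is even. -/
open Finset Multiset

/-- `a n`: the total number of even parts in all partitions of `n` into distinct parts. -/
def totalEvenDistinct (n : ℕ) : ℕ :=
  ∑ lam ∈ Nat.Partition.distincts n, (lam.parts.filter (fun x => Even x)).card

/-- `c_o n`: partitions of `n` with exactly one repeated part, that part odd. -/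
noncomputable def cOdd (n : ℕ) : ℕ :=
  Nat.card {lam : n.Partition //
    ∃ j, Odd j ∧ 2 ≤ lam.parts.count j ∧ ∀ i, i ≠ j → lam.parts.count i ≤ 1}

/-- `c_e n`: partitions of `n` with exactly one repeated part, that part even. -/
noncomputable def cEven (n : ℕ) : ℕ :=
  Nat.card {lam : n.Partition //
    ∃ j, Even j ∧ 2 ≤ lam.parts.count j ∧ ∀ i, i ≠ j → lam.parts.count i ≤ 1}

namespace AuxMerca

/-- number of distinct partitions of `m` -/
def D (m : ℕ) : ℕ := (Nat.Partition.distincts m).card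

/-- distinct partitions of `m` avoiding the part `j` -/
def Eset (j m : ℕ) : Finset (Nat.Partition m) :=
  (Nat.Partition.distincts m).filter (fun lam => j ∉ lam.parts)

def E (j m : ℕ) : ℕ := (Eset j m).card

lemma part_le {n : ℕ} (lam : Nat.Partition n) {i : ℕ} (hi : i ∈ lam.parts) : i ≤ n := by
  have := Multiset.single_le_sum (fun x _ => Nat.zero_le x) i hi
  simpa [lam.parts_sum] using this

lemma mem_distincts {n : ℕ} {lam : Nat.Partition n} :
    lam ∈ Nat.Partition.distincts n ↔ lam.parts.Nodup := by
  simp [Nat.Partition.distincts]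

lemma mem_Eset {j m : ℕ} {lam : Nat.Partition m} :
    lam ∈ Eset j m ↔ lam.parts.Nodup ∧ j ∉ lam.parts := by
  simp [Eset, mem_distincts, Finset.mem_filter]

/-- removing/inserting the part `j` -/
lemma card_contains (j m : ℕ) (hj : 0 < j) (hjm : j ≤ m) :
    ((Nat.Partition.distincts m).filter (fun lam => j ∈ lam.parts)).card = E j (m - j) := by
  classical
  refine Finset.card_bij'
    (fun lam h => ⟨lam.parts.erase j,
      fun hi => lam.parts_pos (Multiset.mem_of_mem_erase hi), ?_⟩)
    (fun mu h => ⟨j ::ₘ mu.parts,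
      fun hi => ?_, ?_⟩) ?_ ?_ ?_ ?_
  · have hmem : j ∈ lam.parts := (Finset.mem_filter.mp h).2
    have h2 : j + (lam.parts.erase j).sum = lam.parts.sum := by
      rw [← Multiset.sum_cons, Multiset.cons_erase hmem]
    have h3 := lam.parts_sum
    omega
  · rcases Multiset.mem_cons.mp hi with rfl | hi
    · exact hj
    · exact mu.parts_pos hi
  · have h2 := mu.parts_sum
    simp only [Multiset.sum_cons, h2]
    omega
  · intro lam h
    have hmem : j ∈ lam.parts := (Finset.mem_filter.mp h).2
    have hnd : lam.parts.Nodup := mem_distincts.mp (Finset.mem_filter.mp h).1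
    rw [mem_Eset]
    exact ⟨hnd.erase j, fun hc => ((hnd.mem_erase_iff).mp hc).1 rfl⟩
  · intro mu h
    rw [mem_Eset] at h
    rw [Finset.mem_filter, mem_distincts]
    exact ⟨Multiset.nodup_cons.mpr ⟨h.2, h.1⟩, Multiset.mem_cons_self j _⟩
  · intro lam h
    have hmem : j ∈ lam.parts := (Finset.mem_filter.mp h).2
    ext1
    simp [Multiset.cons_erase hmem]
  · intro mu h
    ext1
    simp [Multiset.erase_cons_head]

lemma D_split (j m : ℕ) (hj : 0 < j) (hjm : j ≤ m) : D m = E j m + E j (m - j) := by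
  classical
  have h := Finset.card_filter_add_card_filter_not
    (s := Nat.Partition.distincts m) (p := fun lam => j ∈ lam.parts)
  rw [card_contains j m hj hjm] at h
  have : E j m = ((Nat.Partition.distincts m).filter (fun lam => ¬ j ∈ lam.parts)).card := rfl
  have hD : D m = (Nat.Partition.distincts m).card := rfl
  omega

lemma E_of_lt {j m : ℕ} (h : m < j) : E j m = D m := by
  unfold E Eset D
  congr 1
  apply Finset.filter_true_of_mem
  intro lam _ hc
  exact absurd (part_le lam hc) (by omega)

lemma Ealt (j : ℕ) (hj : 0 < j) : ∀ m, (E j m : ℤ) =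
    ∑ t ∈ Finset.range (m / j + 1), (-1 : ℤ)^t * (D (m - t*j) : ℤ) := by
  intro m
  induction m using Nat.strong_induction_on with
  | _ m ih =>
    by_cases h : m < j
    · rw [Nat.div_eq_of_lt h]
      simp [E_of_lt h]
    · push_neg at h
      have hsplit := D_split j m hj h
      have ih' := ih (m - j) (by omega)
      have hdiv : m / j = (m - j) / j + 1 := Nat.div_eq_sub_div hj h
      rw [hdiv, Finset.sum_range_succ']
      have hterm : ∀ t, (-1:ℤ)^(t+1) * (D (m - (t+1)*j) : ℤ)
          = -((-1:ℤ)^t * (D (m - j - t*j) : ℤ)) := by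
        intro t
        have : m - (t+1)*j = m - j - t*j := by
          rw [Nat.sub_sub]
          congr 1
          ring
        rw [this, pow_succ]
        ring
      rw [Finset.sum_congr rfl (fun t _ => hterm t), Finset.sum_neg_distrib, ← ih']
      have hc : (D m : ℤ) = (E j m : ℤ) + (E j (m - j) : ℤ) := by exact_mod_cast hsplit
      simp only [pow_zero, one_mul, Nat.sub_zero, zero_mul]
      omega



lemma stepA (n : ℕ) (hn : 1 ≤ n) :
    totalEvenDistinct n = ∑ k ∈ Finset.Icc 1 (n/2), E (2*k) (n - 2*k) := by
  classical
  have key : ∀ lam ∈ Nat.Partition.distincts n,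
      (lam.parts.filter (fun x => Even x)).card
        = ∑ k ∈ Finset.Icc 1 (n/2), (if 2*k ∈ lam.parts then 1 else 0) := by
    intro lam hlam
    have hnd : lam.parts.Nodup := mem_distincts.mp hlam
    rw [← Finset.card_filter]
    have h1 : (lam.parts.filter (fun x => Even x)).card
        = ((lam.parts.toFinset).filter (fun x => Even x)).card := by
      rw [← Multiset.toFinset_filter]
      exact (Multiset.toFinset_card_of_nodup (hnd.filter _)).symm
    rw [h1]
    refine Finset.card_bij' (fun x _ => x / 2) (fun k _ => 2 * k) ?_ ?_ ?_ ?_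
    · intro x hx
      simp only [Finset.mem_filter, Multiset.mem_toFinset] at hx
      obtain ⟨hx1, hx2⟩ := hx
      have hpos : 0 < x := lam.parts_pos hx1
      have hle : x ≤ n := part_le lam hx1
      obtain ⟨c, hc⟩ := hx2
      simp only [Finset.mem_filter, Finset.mem_Icc]
      have h2 : 2 * (x / 2) = x := by omega
      refine ⟨⟨by omega, ?_⟩, by simpa [h2] using hx1⟩
      have := Nat.div_le_div_right (c := 2) hle
      omega
    · intro k hk
      simp only [Finset.mem_filter, Finset.mem_Icc] at hk
      simp only [Finset.mem_filter, Multiset.mem_toFinset]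
      exact ⟨hk.2, ⟨k, by ring⟩⟩
    · intro x hx
      simp only [Finset.mem_filter, Multiset.mem_toFinset] at hx
      obtain ⟨c, hc⟩ := hx.2
      omega
    · intro k _
      omega
  rw [totalEvenDistinct, Finset.sum_congr rfl key, Finset.sum_comm]
  apply Finset.sum_congr rfl
  intro k hk
  simp only [Finset.mem_Icc] at hk
  have h2k : 2 * k ≤ n := by
    have := (Nat.le_div_iff_mul_le (by norm_num : 0 < 2)).mp hk.2
    omega
  rw [← Finset.card_filter]
  exact card_contains (2*k) n (by omega) h2k

lemma stepA2 (n k : ℕ) (hk : 0 < k) (hkn : 2*k ≤ n) :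
    (E (2*k) (n - 2*k) : ℤ) =
      ∑ s ∈ Finset.Icc 1 (n / (2*k)), (-1 : ℤ)^(s+1) * (D (n - 2*k*s) : ℤ) := by
  rw [Ealt (2*k) (by omega) (n - 2*k)]
  rw [show (n - 2*k)/(2*k) + 1 = n/(2*k) from (Nat.div_eq_sub_div (by omega) hkn).symm]
  refine Finset.sum_nbij' (fun t => t + 1) (fun s => s - 1) ?_ ?_ ?_ ?_ ?_
  · intro t ht
    simp only [Finset.mem_range] at ht
    simp only [Finset.mem_Icc]
    omega
  · intro s hs
    simp only [Finset.mem_Icc] at hs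
    simp only [Finset.mem_range]
    omega
  · intro t _
    omega
  · intro s hs
    simp only [Finset.mem_Icc] at hs
    omega
  · intro t ht
    have h1 : n - 2*k - t*(2*k) = n - 2*k*(t+1) := by
      rw [Nat.sub_sub]
      congr 1
      ring
    rw [h1]
    have h2 : (-1:ℤ)^(t+1+1) = (-1:ℤ)^t := by
      rw [pow_succ, pow_succ]; ring
    rw [h2]


open scoped Classical


noncomputable def Xset (j n : ℕ) : Finset (Nat.Partition n) :=
  Finset.univ.filter (fun lam => 2 ≤ lam.parts.count j ∧ ∀ i, i ≠ j → lam.parts.count i ≤ 1)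

noncomputable def X (j n : ℕ) : ℕ := (Xset j n).card

lemma count_mul_le {n : ℕ} (lam : Nat.Partition n) (j : ℕ) :
    lam.parts.count j * j ≤ n := by
  have h1 : Multiset.replicate (lam.parts.count j) j ≤ lam.parts := by
    rw [← Multiset.filter_eq']
    exact Multiset.filter_le _ _
  have h2 : (Multiset.replicate (lam.parts.count j) j).sum ≤ lam.parts.sum := by
    obtain ⟨u, hu⟩ := Multiset.le_iff_exists_add.mp h1
    have h3 := congrArg Multiset.sum hu
    rw [Multiset.sum_add] at h3
    omega
  simpa [Multiset.sum_replicate, lam.parts_sum] using h2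

lemma X_eq (j n : ℕ) (hj : 0 < j) :
    X j n = ∑ m ∈ Finset.Icc 2 (n / j), E j (n - j*m) := by
  classical
  have hXU : Xset j n = (Finset.Icc 2 (n/j)).biUnion (fun m =>
      Finset.univ.filter (fun lam =>
        lam.parts.count j = m ∧ ∀ i, i ≠ j → lam.parts.count i ≤ 1)) := by
    ext lam
    simp only [Xset, Finset.mem_filter, Finset.mem_biUnion, Finset.mem_Icc,
      Finset.mem_univ, true_and]
    constructor
    · rintro ⟨h2, hle⟩
      refine ⟨lam.parts.count j, ⟨h2, ?_⟩, rfl, hle⟩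
      have := count_mul_le lam j
      exact (Nat.le_div_iff_mul_le hj).mpr this
    · rintro ⟨m, ⟨hm2, _⟩, hcnt, hle⟩
      exact ⟨by omega, hle⟩
  have hdisj : ∀ m ∈ Finset.Icc 2 (n/j), ∀ m' ∈ Finset.Icc 2 (n/j), m ≠ m' →
      Disjoint (Finset.univ.filter (fun lam : Nat.Partition n =>
        lam.parts.count j = m ∧ ∀ i, i ≠ j → lam.parts.count i ≤ 1))
        (Finset.univ.filter (fun lam =>
        lam.parts.count j = m' ∧ ∀ i, i ≠ j → lam.parts.count i ≤ 1)) := by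
    intro m _ m' _ hne
    rw [Finset.disjoint_left]
    intro lam h1 h2
    simp only [Finset.mem_filter] at h1 h2
    exact hne (h1.2.1 ▸ h2.2.1 ▸ rfl)
  rw [X, hXU, Finset.card_biUnion hdisj]
  apply Finset.sum_congr rfl
  intro m hm
  simp only [Finset.mem_Icc] at hm
  have hjm : j * m ≤ n := by
    have h1 := (Nat.le_div_iff_mul_le hj).mp hm.2
    have h2 : m * j = j * m := Nat.mul_comm m j
    omega
  refine Finset.card_bij'
    (fun lam h => ⟨lam.parts.filter (fun x => ¬ x = j),
      fun hi => lam.parts_pos (Multiset.mem_of_mem_filter hi), ?_⟩)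
    (fun mu h => ⟨mu.parts + Multiset.replicate m j, fun hi => ?_, ?_⟩) ?_ ?_ ?_ ?_
  · -- sum of filtered = n - j*m
    have hcnt : lam.parts.count j = m := (Finset.mem_filter.mp h).2.1
    have hsplit := Multiset.filter_add_not (fun x => x = j) lam.parts
    have hsum := congrArg Multiset.sum hsplit
    rw [Multiset.sum_add] at hsum
    have heq : Multiset.filter (fun x => x = j) lam.parts
        = Multiset.replicate m j := by rw [Multiset.filter_eq', hcnt]
    rw [heq, Multiset.sum_replicate, smul_eq_mul, lam.parts_sum] at hsum
    have h2 : m * j = j * m := Nat.mul_comm m j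
    omega
  · rcases Multiset.mem_add.mp hi with hi | hi
    · exact mu.parts_pos hi
    · rw [Multiset.eq_of_mem_replicate hi]; exact hj
  · rw [Multiset.sum_add, mu.parts_sum, Multiset.sum_replicate, smul_eq_mul]
    have h2 : m * j = j * m := Nat.mul_comm m j
    omega
  · intro lam h
    have h' := (Finset.mem_filter.mp h).2
    rw [mem_Eset]
    constructor
    · rw [Multiset.nodup_iff_count_le_one]
      intro i
      rw [Multiset.count_filter]
      by_cases hij : i = j
      · simp [hij]
      · simpa [hij] using h'.2 i hij
    · intro hc
      exact (Multiset.of_mem_filter hc) rfl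
  · intro mu h
    rw [mem_Eset] at h
    rw [Finset.mem_filter]
    refine ⟨Finset.mem_univ _, ?_, ?_⟩
    · have h3 : Multiset.count j (Multiset.replicate m j) = m := by simp
      rw [Multiset.count_add, h3, Multiset.count_eq_zero_of_notMem h.2]
      omega
    · intro i hij
      have h3 : Multiset.count i (Multiset.replicate m j) = 0 := by
        simp [Multiset.count_replicate, Ne.symm hij]
      rw [Multiset.count_add, h3, Nat.add_zero]
      exact Multiset.nodup_iff_count_le_one.mp h.1 i
  · intro lam h
    have hcnt : lam.parts.count j = m := (Finset.mem_filter.mp h).2.1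
    ext1
    simp only
    have heq : Multiset.replicate m j = Multiset.filter (fun x => x = j) lam.parts := by
      rw [Multiset.filter_eq', hcnt]
    rw [heq, add_comm]
    exact Multiset.filter_add_not (fun x => x = j) lam.parts
  · intro mu h
    rw [mem_Eset] at h
    ext1
    simp only
    rw [Multiset.filter_add]
    have h1 : Multiset.filter (fun x => ¬ x = j) mu.parts = mu.parts :=
      Multiset.filter_eq_self.mpr (fun a ha hc => h.2 (hc ▸ ha))
    have h2 : Multiset.filter (fun x => ¬ x = j) (Multiset.replicate m j) = 0 :=
      Multiset.filter_eq_nil.mpr (fun a ha hc => hc (Multiset.eq_of_mem_replicate ha))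
    rw [h1, h2, add_zero]



lemma cOdd_eq (n : ℕ) :
    cOdd n = ∑ j ∈ (Finset.Icc 1 n).filter (fun j => Odd j), X j n := by
  classical
  rw [cOdd, Nat.card_eq_fintype_card, Fintype.card_subtype]
  have hset : Finset.univ.filter (fun lam : Nat.Partition n =>
        ∃ j, Odd j ∧ 2 ≤ lam.parts.count j ∧ ∀ i, i ≠ j → lam.parts.count i ≤ 1)
      = ((Finset.Icc 1 n).filter (fun j => Odd j)).biUnion (fun j => Xset j n) := by
    ext lam
    simp only [Finset.mem_filter, Finset.mem_biUnion, Finset.mem_univ, true_and,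
      Finset.mem_Icc, Xset]
    constructor
    · rintro ⟨j, hodd, h2, hle⟩
      have hjmem : j ∈ lam.parts := by
        rw [← Multiset.count_pos]; omega
      exact ⟨j, ⟨⟨lam.parts_pos hjmem, part_le lam hjmem⟩, hodd⟩, h2, hle⟩
    · rintro ⟨j, ⟨_, hodd⟩, h2, hle⟩
      exact ⟨j, hodd, h2, hle⟩
  have hdisj : ∀ j ∈ (Finset.Icc 1 n).filter (fun j => Odd j),
      ∀ j' ∈ (Finset.Icc 1 n).filter (fun j => Odd j), j ≠ j' →
      Disjoint (Xset j n) (Xset j' n) := by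
    intro j _ j' _ hne
    rw [Finset.disjoint_left]
    intro lam h1 h2
    simp only [Xset, Finset.mem_filter] at h1 h2
    have := h2.2.2 j hne
    omega
  rw [hset, Finset.card_biUnion hdisj]
  rfl

lemma cEven_eq (n : ℕ) :
    cEven n = ∑ j ∈ (Finset.Icc 1 n).filter (fun j => Even j), X j n := by
  classical
  rw [cEven, Nat.card_eq_fintype_card, Fintype.card_subtype]
  have hset : Finset.univ.filter (fun lam : Nat.Partition n =>
        ∃ j, Even j ∧ 2 ≤ lam.parts.count j ∧ ∀ i, i ≠ j → lam.parts.count i ≤ 1)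
      = ((Finset.Icc 1 n).filter (fun j => Even j)).biUnion (fun j => Xset j n) := by
    ext lam
    simp only [Finset.mem_filter, Finset.mem_biUnion, Finset.mem_univ, true_and,
      Finset.mem_Icc, Xset]
    constructor
    · rintro ⟨j, hpar, h2, hle⟩
      have hjmem : j ∈ lam.parts := by
        rw [← Multiset.count_pos]; omega
      exact ⟨j, ⟨⟨lam.parts_pos hjmem, part_le lam hjmem⟩, hpar⟩, h2, hle⟩
    · rintro ⟨j, ⟨_, hpar⟩, h2, hle⟩
      exact ⟨j, hpar, h2, hle⟩
  have hdisj : ∀ j ∈ (Finset.Icc 1 n).filter (fun j => Even j),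
      ∀ j' ∈ (Finset.Icc 1 n).filter (fun j => Even j), j ≠ j' →
      Disjoint (Xset j n) (Xset j' n) := by
    intro j _ j' _ hne
    rw [Finset.disjoint_left]
    intro lam h1 h2
    simp only [Xset, Finset.mem_filter] at h1 h2
    have := h2.2.2 j hne
    omega
  rw [hset, Finset.card_biUnion hdisj]
  rfl

lemma pair_sum (q : ℕ) (f : ℕ → ℤ) :
    (∑ m ∈ Finset.Icc 2 q, f m) =
      ∑ s ∈ Finset.Icc 1 (q/2), (f (2*s) + if 2*s+1 ≤ q then f (2*s+1) else 0) := by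
  induction q with
  | zero => simp
  | succ q ih =>
    rcases Nat.lt_or_ge q 1 with hq | hq
    · interval_cases q
      simp
    · rw [Finset.sum_Icc_succ_top (by omega) f, ih]
      rcases Nat.even_or_odd q with he | ho
      · -- q = 2*s0, q+1 odd
        obtain ⟨s0, hs0⟩ := he
        have hs0' : 1 ≤ s0 := by omega
        obtain ⟨s1, rfl⟩ : ∃ s1, s0 = s1 + 1 := ⟨s0 - 1, by omega⟩
        have h1 : (q+1)/2 = s1+1 := by omega
        have h2 : q/2 = s1+1 := by omega
        rw [h1, h2, Finset.sum_Icc_succ_top (by omega), Finset.sum_Icc_succ_top (by omega)]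
        have h3 : ∀ s ∈ Finset.Icc 1 s1,
            (f (2*s) + if 2*s+1 ≤ q then f (2*s+1) else 0)
              = (f (2*s) + if 2*s+1 ≤ q+1 then f (2*s+1) else 0) := by
          intro s hs
          simp only [Finset.mem_Icc] at hs
          have c1 : 2*s+1 ≤ q := by omega
          rw [if_pos c1, if_pos (by omega)]
        rw [Finset.sum_congr rfl h3]
        have c2 : ¬ (2*(s1+1)+1 ≤ q) := by omega
        have c3 : 2*(s1+1)+1 ≤ q+1 := by omega
        rw [if_neg c2, if_pos c3]
        have : q + 1 = 2*(s1+1)+1 := by omega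
        rw [this]
        ring
      · -- q odd : q = 2*s0+1
        obtain ⟨s0, hs0⟩ := ho
        have h1 : (q+1)/2 = s0+1 := by omega
        have h2 : q/2 = s0 := by omega
        rw [h1, h2, Finset.sum_Icc_succ_top (by omega)]
        have h3 : ∀ s ∈ Finset.Icc 1 s0,
            (f (2*s) + if 2*s+1 ≤ q then f (2*s+1) else 0)
              = (f (2*s) + if 2*s+1 ≤ q+1 then f (2*s+1) else 0) := by
          intro s hs
          simp only [Finset.mem_Icc] at hs
          rw [if_pos (by omega), if_pos (by omega)]
        rw [Finset.sum_congr rfl h3]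
        have c2 : ¬ (2*(s0+1)+1 ≤ q+1) := by omega
        rw [if_neg c2]
        have : q + 1 = 2*(s0+1) := by omega
        rw [this]
        ring

lemma X_eq_D (j n : ℕ) (hj : 0 < j) :
    (X j n : ℤ) = ∑ s ∈ Finset.Icc 1 (n / (2*j)), (D (n - 2*j*s) : ℤ) := by
  rw [X_eq j n hj]
  push_cast
  rw [pair_sum (n/j) (fun m => (E j (n - j*m) : ℤ))]
  have hIcc : n / j / 2 = n / (2*j) := by
    rw [Nat.div_div_eq_div_mul, Nat.mul_comm]
  rw [hIcc]
  apply Finset.sum_congr rfl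
  intro s hs
  simp only [Finset.mem_Icc] at hs
  have hs2 : 2*s ≤ n / j := by
    have : s * (2*j) ≤ n := by
      have := hs.2
      exact (Nat.le_div_iff_mul_le (by omega)).mp this
    apply (Nat.le_div_iff_mul_le hj).mpr
    nlinarith
  have hkey : n - j*(2*s) = n - 2*j*s := by
    congr 1
    ring
  by_cases hc : 2*s+1 ≤ n / j
  · rw [if_pos hc]
    have hle : j ≤ n - 2*j*s := by
      have h1 : (2*s+1) * j ≤ n := (Nat.le_div_iff_mul_le hj).mp hc
      have h2 : 2*j*s = 2*s*j := by ring
      have h3 : (2*s+1)*j = 2*s*j + j := by ring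
      omega
    have hsplit := D_split j (n - 2*j*s) hj hle
    have h4 : n - j*(2*s+1) = (n - 2*j*s) - j := by
      rw [Nat.sub_sub]
      congr 1
      ring
    rw [hkey, h4]
    push_cast [hsplit]
    ring
  · rw [if_neg hc, hkey]
    have hlt : n - 2*j*s < j := by
      have h1 : n < (2*s+1) * j := by
        have := (Nat.div_lt_iff_lt_mul hj).mp (by omega : n / j < 2*s+1)
        omega
      have h2 : 2*s*j ≤ n := (Nat.le_div_iff_mul_le hj).mp hs2
      have h3 : 2*j*s = 2*s*j := by ring
      have h4 : (2*s+1)*j = 2*s*j + j := by ring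
      omega
    rw [E_of_lt hlt]
    ring


lemma inner_Icc (n j : ℕ) (hj : 1 ≤ j) :
    Finset.Icc 1 (n / (2*j)) = (Finset.Icc 1 n).filter (fun s => 2*j*s ≤ n) := by
  ext s
  simp only [Finset.mem_Icc, Finset.mem_filter]
  constructor
  · rintro ⟨h1, h2⟩
    have h3 : s * (2*j) ≤ n := (Nat.le_div_iff_mul_le (by omega)).mp h2
    have h4 : s ≤ s * (2*j) := Nat.le_mul_of_pos_right s (by omega)
    refine ⟨⟨h1, by omega⟩, by nlinarith⟩
  · rintro ⟨⟨h1, _⟩, h3⟩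
    refine ⟨h1, (Nat.le_div_iff_mul_le (by omega)).mpr (by nlinarith)⟩

lemma swap_sum (n : ℕ) (g : ℕ → ℕ → ℤ) :
    ∑ j ∈ Finset.Icc 1 n, ∑ s ∈ Finset.Icc 1 (n / (2*j)), g j s
      = ∑ j ∈ Finset.Icc 1 n, ∑ s ∈ Finset.Icc 1 (n / (2*j)), g s j := by
  have key : ∀ h : ℕ → ℕ → ℤ, (∑ j ∈ Finset.Icc 1 n, ∑ s ∈ Finset.Icc 1 (n / (2*j)), h j s)
      = ∑ p ∈ ((Finset.Icc 1 n) ×ˢ (Finset.Icc 1 n)).filter (fun p => 2*p.1*p.2 ≤ n), h p.1 p.2 := by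
    intro h
    rw [Finset.sum_filter, Finset.sum_product]
    apply Finset.sum_congr rfl
    intro j hj
    simp only [Finset.mem_Icc] at hj
    rw [← Finset.sum_filter, inner_Icc n j hj.1]
  rw [key g, key (fun a b => g b a)]
  refine Finset.sum_nbij' (fun p => Prod.swap p) (fun p => Prod.swap p) ?_ ?_ ?_ ?_ ?_
  · intro p hp
    simp only [Finset.mem_filter, Finset.mem_product] at hp ⊢
    refine ⟨⟨hp.1.2, hp.1.1⟩, ?_⟩
    have := hp.2
    simp only [Prod.fst_swap, Prod.snd_swap]
    nlinarith [hp.2]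
  · intro p hp
    simp only [Finset.mem_filter, Finset.mem_product] at hp ⊢
    refine ⟨⟨hp.1.2, hp.1.1⟩, ?_⟩
    simp only [Prod.fst_swap, Prod.snd_swap]
    nlinarith [hp.2]
  · intro p _; simp
  · intro p _; simp
  · intro p _; simp



end AuxMerca


open AuxMerca in
theorem total_even_eq_cOdd_sub_cEven (n : ℕ) (hn : 1 ≤ n) :
    (totalEvenDistinct n : ℤ) = (cOdd n : ℤ) - (cEven n : ℤ) := by
  classical
  have ha : (totalEvenDistinct n : ℤ)
      = ∑ k ∈ Finset.Icc 1 n, ∑ s ∈ Finset.Icc 1 (n / (2*k)),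
          (-1:ℤ)^(s+1) * (D (n - 2*k*s) : ℤ) := by
    rw [stepA n hn]
    push_cast
    have h1 : ∀ k ∈ Finset.Icc 1 (n/2), (E (2*k) (n - 2*k) : ℤ)
        = ∑ s ∈ Finset.Icc 1 (n / (2*k)), (-1:ℤ)^(s+1) * (D (n - 2*k*s) : ℤ) := by
      intro k hk
      simp only [Finset.mem_Icc] at hk
      have h2 : 2*k ≤ n := by
        have := (Nat.le_div_iff_mul_le (by norm_num : 0 < 2)).mp hk.2
        omega
      exact stepA2 n k (by omega) h2
    rw [Finset.sum_congr rfl h1]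
    apply Finset.sum_subset
    · intro k hk
      simp only [Finset.mem_Icc] at hk ⊢
      have := Nat.div_le_self n 2
      omega
    · intro k hk hk'
      simp only [Finset.mem_Icc] at hk hk'
      have h3 : n < 2*k := by
        by_contra hcon
        push_neg at hcon
        exact hk' ⟨hk.1, (Nat.le_div_iff_mul_le (by norm_num : 0 < 2)).mpr (by omega)⟩
      have h4 : n / (2*k) = 0 := Nat.div_eq_of_lt h3
      rw [h4]
      simp
  rw [ha, swap_sum n (fun k s => (-1:ℤ)^(s+1) * (D (n - 2*k*s) : ℤ))]
  have hb : ∀ j ∈ Finset.Icc 1 n,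
      (∑ s ∈ Finset.Icc 1 (n/(2*j)), (-1:ℤ)^(j+1) * (D (n - 2*s*j) : ℤ))
        = (-1:ℤ)^(j+1) * (X j n : ℤ) := by
    intro j hj
    simp only [Finset.mem_Icc] at hj
    rw [← Finset.mul_sum]
    congr 1
    rw [X_eq_D j n (by omega)]
    apply Finset.sum_congr rfl
    intro s _
    congr 2
    ring
  rw [Finset.sum_congr rfl hb]
  rw [← Finset.sum_filter_add_sum_filter_not (Finset.Icc 1 n) (fun j => Odd j)]
  rw [cOdd_eq n, cEven_eq n]
  push_cast
  have hodd : ∀ j ∈ (Finset.Icc 1 n).filter (fun j => Odd j),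
      (-1:ℤ)^(j+1) * (X j n : ℤ) = (X j n : ℤ) := by
    intro j hj
    have h1 : Odd j := (Finset.mem_filter.mp hj).2
    rw [Even.neg_one_pow h1.add_one, one_mul]
  have heven : ∀ j ∈ (Finset.Icc 1 n).filter (fun j => ¬ Odd j),
      (-1:ℤ)^(j+1) * (X j n : ℤ) = -(X j n : ℤ) := by
    intro j hj
    have h1 : Even j := Nat.not_odd_iff_even.mp (Finset.mem_filter.mp hj).2
    rw [Odd.neg_one_pow h1.add_one, neg_one_mul]
  rw [Finset.sum_congr rfl hodd, Finset.sum_congr rfl heven]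
  have hfe : (Finset.Icc 1 n).filter (fun j => ¬ Odd j)
      = (Finset.Icc 1 n).filter (fun j => Even j) := by
    apply Finset.filter_congr
    intro j _
    simp [Nat.not_odd_iff_even]
  rw [hfe, Finset.sum_neg_distrib]
  ring
end

section
/- For all positive integers n, a(n) = (-1)^n (b_o(n) - b_e(n)), where a(n) is the total number of even parts in all partitions of n into distinct parts, and b_o(n) (resp. b_e(n)) is the number of partitions of n into an odd (resp. even) number of parts in which the set of distinct even parts has exactly one element. -/
/-- `b_o n`: partitions of `n` into an odd number of parts whose set of even parts is a singleton. -/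
noncomputable def bOdd (n : ℕ) : ℕ :=
  Nat.card {lam : n.Partition //
    Odd (Multiset.card lam.parts) ∧
      ∃ j, Even j ∧ j ∈ lam.parts ∧ ∀ i ∈ lam.parts, Even i → i = j}

/-- `b_e n`: partitions of `n` into an even number of parts whose set of even parts is a singleton. -/
noncomputable def bEven (n : ℕ) : ℕ :=
  Nat.card {lam : n.Partition //
    Even (Multiset.card lam.parts) ∧
      ∃ j, Even j ∧ j ∈ lam.parts ∧ ∀ i ∈ lam.parts, Even i → i = j}

open PowerSeries

namespace Theorems100

noncomputable section

variable {α : Type*}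

open Finset

open scoped Classical

/-- The partial product for the generating function for odd partitions.
TODO: As `m` tends to infinity, this converges (in the `X`-adic topology).

If `m` is sufficiently large, the `i`th coefficient gives the number of odd partitions of the
natural number `i`: proved in `oddGF_prop`.
It is stated for an arbitrary field `α`, though it usually suffices to use `ℚ` or `ℝ`.
-/
def partialOddGF (m : ℕ) [Field α] :=
  ∏ i ∈ range m, (1 - (X : PowerSeries α) ^ (2 * i + 1))⁻¹

/-- The partial product for the generating function for distinct partitions.
TODO: As `m` tends to infinity, this converges (in the `X`-adic topology).

If `m` is sufficiently large, the `i`th coefficient gives the number of distinct partitions of the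
natural number `i`: proved in `distinctGF_prop`.
It is stated for an arbitrary commutative semiring `α`, though it usually suffices to use `ℕ`, `ℚ`
or `ℝ`.
-/
def partialDistinctGF (m : ℕ) [CommSemiring α] :=
  ∏ i ∈ range m, (1 + (X : PowerSeries α) ^ (i + 1))

open Finset.HasAntidiagonal

universe u
variable {ι : Type u}

/-- A convenience constructor for the power series whose coefficients indicate a subset. -/
def indicatorSeries (α : Type*) [Semiring α] (s : Set ℕ) : PowerSeries α :=
  PowerSeries.mk fun n => if n ∈ s then 1 else 0

theorem coeff_indicator (s : Set ℕ) [Semiring α] (n : ℕ) :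
    coeff (R := α) n (indicatorSeries _ s) = if n ∈ s then 1 else 0 :=
  coeff_mk _ _

theorem coeff_indicator_pos (s : Set ℕ) [Semiring α] (n : ℕ) (h : n ∈ s) :
    coeff (R := α) n (indicatorSeries _ s) = 1 := by rw [coeff_indicator, if_pos h]

theorem coeff_indicator_neg (s : Set ℕ) [Semiring α] (n : ℕ) (h : n ∉ s) :
    coeff (R := α) n (indicatorSeries _ s) = 0 := by rw [coeff_indicator, if_neg h]

theorem constantCoeff_indicator (s : Set ℕ) [Semiring α] :
    constantCoeff (R := α) (indicatorSeries _ s) = if 0 ∈ s then 1 else 0 :=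
  rfl

theorem two_series (i : ℕ) [Semiring α] :
    1 + (X : PowerSeries α) ^ i.succ = indicatorSeries α {0, i.succ} := by
  ext n
  simp only [coeff_indicator, coeff_one, coeff_X_pow, Set.mem_insert_iff, Set.mem_singleton_iff,
    map_add]
  cases' n with d
  · simp [(Nat.succ_ne_zero i).symm]
  · simp [Nat.succ_ne_zero d]

theorem num_series' [Field α] (i : ℕ) :
    (1 - (X : PowerSeries α) ^ (i + 1))⁻¹ = indicatorSeries α {k | i + 1 ∣ k} := by
  rw [PowerSeries.inv_eq_iff_mul_eq_one]
  · ext n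
    cases n with
    | zero => simp [mul_sub, zero_pow, constantCoeff_indicator]
    | succ n =>
      simp only [coeff_one, if_false, mul_sub, mul_one, coeff_indicator,
        LinearMap.map_sub, reduceCtorEq]
      simp_rw [coeff_mul, coeff_X_pow, coeff_indicator, @boole_mul _ _ _ _]
      erw [@sum_ite _ _ _ _ _ (fun _ => Classical.propDecidable _), sum_ite]
      simp_rw [@filter_filter _ _ _ _ _, sum_const_zero, add_zero, sum_const, nsmul_eq_mul, mul_one,
        sub_eq_iff_eq_add, zero_add]
      symm
      split_ifs with h
      · suffices #{a ∈ antidiagonal (n + 1) | i + 1 ∣ a.fst ∧ a.snd = i + 1} = 1 by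
          simp only [Set.mem_setOf_eq]; convert congr_arg ((↑) : ℕ → α) this; norm_cast
        rw [card_eq_one]
        cases' h with p hp
        refine ⟨((i + 1) * (p - 1), i + 1), ?_⟩
        ext ⟨a₁, a₂⟩
        simp only [mem_filter, Prod.mk.injEq, HasAntidiagonal.mem_antidiagonal, mem_singleton]
        constructor
        · rintro ⟨a_left, ⟨a, rfl⟩, rfl⟩
          refine ⟨?_, rfl⟩
          rw [Nat.mul_sub_left_distrib, ← hp, ← a_left, mul_one, Nat.add_sub_cancel]
        · rintro ⟨rfl, rfl⟩
          match p with
          | 0 => rw [mul_zero] at hp; cases hp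
          | p + 1 => rw [hp]; simp [mul_add]
      · suffices #{a ∈ antidiagonal (n + 1) | i + 1 ∣ a.fst ∧ a.snd = i + 1} = 0 by
          simp only [Set.mem_setOf_eq]; convert congr_arg ((↑) : ℕ → α) this; norm_cast
        rw [card_eq_zero]
        apply eq_empty_of_forall_notMem
        simp only [Prod.forall, mem_filter, not_and, HasAntidiagonal.mem_antidiagonal]
        rintro _ h₁ h₂ ⟨a, rfl⟩ rfl
        apply h
        simp [← h₂]
  · simp [zero_pow]

def mkOdd : ℕ ↪ ℕ :=
  ⟨fun i => 2 * i + 1, fun x y h => by linarith⟩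

-- The main workhorse of the partition theorem proof.
theorem partialGF_prop (α : Type*) [CommSemiring α] (n : ℕ) (s : Finset ℕ) (hs : ∀ i ∈ s, 0 < i)
    (c : ℕ → Set ℕ) (hc : ∀ i, i ∉ s → 0 ∈ c i) :
    #{p : n.Partition | (∀ j, p.parts.count j ∈ c j) ∧ ∀ j ∈ p.parts, j ∈ s} =
      coeff (R := α) n (∏ i ∈ s, indicatorSeries α ((· * i) '' c i)) := by
  simp_rw [coeff_prod, coeff_indicator, prod_boole, sum_boole]
  apply congr_arg
  simp only [mem_univ, forall_true_left, not_and, not_forall, exists_prop,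
    Set.mem_image, not_exists]
  set φ : (a : Nat.Partition n) →
    a ∈ filter (fun p ↦ (∀ (j : ℕ), Multiset.count j p.parts ∈ c j) ∧ ∀ j ∈ p.parts, j ∈ s) univ →
    ℕ →₀ ℕ := fun p _ => {
      toFun := fun i => Multiset.count i p.parts • i
      support := Finset.filter (fun i => i ≠ 0) p.parts.toFinset
      mem_support_toFun := fun a => by
        simp only [smul_eq_mul, ne_eq, mul_eq_zero, Multiset.count_eq_zero]
        rw [not_or, not_not]
        simp only [Multiset.mem_toFinset, not_not, mem_filter] }
  refine Finset.card_bij φ ?_ ?_ ?_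
  · intro a ha
    simp only [φ, not_forall, not_exists, not_and, exists_prop, mem_filter]
    rw [mem_finsuppAntidiag]
    dsimp only [ne_eq, smul_eq_mul, id_eq, eq_mpr_eq_cast, le_eq_subset, Finsupp.coe_mk]
    simp only [mem_univ, forall_true_left, not_and, not_forall, exists_prop,
      mem_filter, true_and] at ha
    refine ⟨⟨?_, fun i ↦ ?_⟩, fun i _ ↦ ⟨a.parts.count i, ha.1 i, rfl⟩⟩
    · conv_rhs => simp [← a.parts_sum]
      rw [sum_multiset_count_of_subset _ s]
      · simp only [smul_eq_mul]
      · intro i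
        simp only [Multiset.mem_toFinset, not_not, mem_filter]
        apply ha.2
    · simp only [ne_eq, Multiset.mem_toFinset, not_not, mem_filter, and_imp]
      exact fun hi _ ↦ ha.2 i hi
  · intro p₁ hp₁ p₂ hp₂ h
    apply Nat.Partition.ext
    simp only [true_and, mem_univ, mem_filter] at hp₁ hp₂
    ext i
    simp only [φ, ne_eq, Multiset.mem_toFinset, not_not, smul_eq_mul, Finsupp.mk.injEq] at h
    by_cases hi : i = 0
    · rw [hi]
      rw [Multiset.count_eq_zero_of_notMem]
      · rw [Multiset.count_eq_zero_of_notMem]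
        intro a; exact Nat.lt_irrefl 0 (hs 0 (hp₂.2 0 a))
      intro a; exact Nat.lt_irrefl 0 (hs 0 (hp₁.2 0 a))
    · rw [← mul_left_inj' hi]
      rw [funext_iff] at h
      exact h.2 i
  · simp only [φ, mem_filter, mem_finsuppAntidiag, mem_univ, exists_prop, true_and, and_assoc]
    rintro f ⟨hf, hf₃, hf₄⟩
    have hf' : f ∈ finsuppAntidiag s n := mem_finsuppAntidiag.mpr ⟨hf, hf₃⟩
    simp only [mem_finsuppAntidiag] at hf'
    refine ⟨⟨∑ i ∈ s, Multiset.replicate (f i / i) i, ?_, ?_⟩, ?_, ?_, ?_⟩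
    · intro i hi
      simp only [exists_prop, Multiset.mem_sum, mem_map, Function.Embedding.coeFn_mk] at hi
      rcases hi with ⟨t, ht, z⟩
      apply hs
      rwa [Multiset.eq_of_mem_replicate z]
    · simp_rw [Multiset.sum_sum, Multiset.sum_replicate, Nat.nsmul_eq_mul]
      rw [← hf'.1]
      refine sum_congr rfl fun i hi => Nat.div_mul_cancel ?_
      rcases hf₄ i hi with ⟨w, _, hw₂⟩
      rw [← hw₂]
      exact dvd_mul_left _ _
    · intro i
      simp_rw [Multiset.count_sum', Multiset.count_replicate, sum_ite_eq']
      split_ifs with h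
      · rcases hf₄ i h with ⟨w, hw₁, hw₂⟩
        rwa [← hw₂, Nat.mul_div_cancel _ (hs i h)]
      · exact hc _ h
    · intro i hi
      rw [Multiset.mem_sum] at hi
      rcases hi with ⟨j, hj₁, hj₂⟩
      rwa [Multiset.eq_of_mem_replicate hj₂]
    · ext i
      simp_rw [Multiset.count_sum', Multiset.count_replicate, sum_ite_eq']
      simp only [ne_eq, Multiset.mem_toFinset, not_not, smul_eq_mul, ite_mul,
        zero_mul, Finsupp.coe_mk]
      split_ifs with h
      · apply Nat.div_mul_cancel
        rcases hf₄ i h with ⟨w, _, hw₂⟩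
        apply Dvd.intro_left _ hw₂
      · apply symm
        rw [← Finsupp.notMem_support_iff]
        exact notMem_mono hf'.2 h

theorem partialOddGF_prop [Field α] (n m : ℕ) :
    #{p : n.Partition | ∀ j ∈ p.parts, j ∈ (range m).map mkOdd} = coeff (R := α) n (partialOddGF m) := by
  rw [partialOddGF]
  convert partialGF_prop α n
    ((range m).map mkOdd) _ (fun _ => Set.univ) (fun _ _ => trivial) using 2
  · congr
    simp only [true_and, forall_const, Set.mem_univ]
  · rw [Finset.prod_map]
    simp_rw [num_series']
    congr! 2 with x
    ext k
    constructor
    · rintro ⟨p, rfl⟩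
      refine ⟨p, ⟨⟩, ?_⟩
      apply mul_comm
    rintro ⟨a_w, -, rfl⟩
    apply Dvd.intro_left a_w rfl
  · intro i
    rw [mem_map]
    rintro ⟨a, -, rfl⟩
    exact Nat.succ_pos _

/-- If m is big enough, the partial product's coefficient counts the number of odd partitions -/
theorem oddGF_prop [Field α] (n m : ℕ) (h : n < m * 2) :
    #(Nat.Partition.odds n) = coeff (R := α) n (partialOddGF m) := by
  rw [← partialOddGF_prop, Nat.Partition.odds, Nat.Partition.restricted]
  congr with p
  apply forall₂_congr
  intro i hi
  have hin : i ≤ n := by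
    simpa [p.parts_sum] using Multiset.single_le_sum (fun _ _ => Nat.zero_le _) _ hi
  simp only [mkOdd, exists_prop, mem_range, Function.Embedding.coeFn_mk, mem_map]
  constructor
  · intro hi₂
    have := Nat.mod_add_div i 2
    rw [Nat.not_even_iff] at hi₂
    rw [hi₂, add_comm] at this
    refine ⟨i / 2, ?_, this⟩
    rw [Nat.div_lt_iff_lt_mul zero_lt_two]
    exact lt_of_le_of_lt hin h
  · rintro ⟨a, -, rfl⟩
    rw [even_iff_two_dvd]
    apply Nat.two_not_dvd_two_mul_add_one

theorem partialDistinctGF_prop [CommSemiring α] (n m : ℕ) :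
    #{p : n.Partition |
        p.parts.Nodup ∧ ∀ j ∈ p.parts, j ∈ (range m).map ⟨Nat.succ, Nat.succ_injective⟩} =
      coeff (R := α) n (partialDistinctGF m) := by
  rw [partialDistinctGF]
  convert partialGF_prop α n
    ((range m).map ⟨Nat.succ, Nat.succ_injective⟩) _ (fun _ => {0, 1}) (fun _ _ => Or.inl rfl)
    using 2
  · congr! with p
    rw [Multiset.nodup_iff_count_le_one]
    congr! 1 with i
    rcases Multiset.count i p.parts with (_ | _ | ms) <;> simp
  · simp_rw [Finset.prod_map, two_series]
    congr with i
    simp [Set.image_pair]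
  · simp only [mem_map, Function.Embedding.coeFn_mk]
    rintro i ⟨_, _, rfl⟩
    apply Nat.succ_pos

/-- If m is big enough, the partial product's coefficient counts the number of distinct partitions
-/
theorem distinctGF_prop [CommSemiring α] (n m : ℕ) (h : n < m + 1) :
    #(Nat.Partition.distincts n) = coeff (R := α) n (partialDistinctGF m) := by
  rw [← partialDistinctGF_prop, Nat.Partition.distincts]
  congr with p
  apply (and_iff_left _).symm
  intro i hi
  have : i ≤ n := by
    simpa [p.parts_sum] using Multiset.single_le_sum (fun _ _ => Nat.zero_le _) _ hi
  simp only [mkOdd, exists_prop, mem_range, Function.Embedding.coeFn_mk, mem_map]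
  refine ⟨i - 1, ?_, Nat.succ_pred_eq_of_pos (p.parts_pos hi)⟩
  rw [tsub_lt_iff_right (Nat.one_le_iff_ne_zero.mpr (p.parts_pos hi).ne')]
  exact lt_of_le_of_lt this h

/-- The key proof idea for the partition theorem, showing that the generating functions for both
sequences are ultimately the same (since the factor converges to 0 as m tends to infinity).
It's enough to not take the limit though, and just consider large enough `m`.
-/
theorem same_gf [Field α] (m : ℕ) :
    (partialOddGF m * (range m).prod fun i => 1 - (X : PowerSeries α) ^ (m + i + 1)) =
      partialDistinctGF m := by
  rw [partialOddGF, partialDistinctGF]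
  induction' m with m ih
  · simp
  set! π₀ : PowerSeries α := ∏ i ∈ range m, (1 - X ^ (m + 1 + i + 1)) with hπ₀
  set! π₁ : PowerSeries α := ∏ i ∈ range m, (1 - X ^ (2 * i + 1))⁻¹ with hπ₁
  set! π₂ : PowerSeries α := ∏ i ∈ range m, (1 - X ^ (m + i + 1)) with hπ₂
  set! π₃ : PowerSeries α := ∏ i ∈ range m, (1 + X ^ (i + 1)) with hπ₃
  rw [← hπ₃] at ih
  have h : constantCoeff (R := α) (1 - X ^ (2 * m + 1)) ≠ 0 := by
    rw [RingHom.map_sub, RingHom.map_pow, constantCoeff_one, constantCoeff_X,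
      zero_pow (2 * m).succ_ne_zero, sub_zero]
    exact one_ne_zero
  calc
    (∏ i ∈ range (m + 1), (1 - X ^ (2 * i + 1))⁻¹) *
          ∏ i ∈ range (m + 1), (1 - X ^ (m + 1 + i + 1)) =
        π₁ * (1 - X ^ (2 * m + 1))⁻¹ * (π₀ * (1 - X ^ (m + 1 + m + 1))) := by
      rw [prod_range_succ _ m, ← hπ₁, prod_range_succ _ m, ← hπ₀]
    _ = π₁ * (1 - X ^ (2 * m + 1))⁻¹ * (π₀ * ((1 + X ^ (m + 1)) * (1 - X ^ (m + 1)))) := by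
      rw [← sq_sub_sq, one_pow, add_assoc _ m 1, ← two_mul (m + 1), pow_mul']
    _ = π₀ * (1 - X ^ (m + 1)) * (1 - X ^ (2 * m + 1))⁻¹ * (π₁ * (1 + X ^ (m + 1))) := by ring
    _ =
        (∏ i ∈ range (m + 1), (1 - X ^ (m + 1 + i))) * (1 - X ^ (2 * m + 1))⁻¹ *
          (π₁ * (1 + X ^ (m + 1))) := by
      rw [prod_range_succ', add_zero, hπ₀]; simp_rw [← add_assoc]
    _ = π₂ * (1 - X ^ (m + 1 + m)) * (1 - X ^ (2 * m + 1))⁻¹ * (π₁ * (1 + X ^ (m + 1))) := by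
      rw [add_right_comm, hπ₂, ← prod_range_succ]; simp_rw [add_right_comm]
    _ = π₂ * (1 - X ^ (2 * m + 1)) * (1 - X ^ (2 * m + 1))⁻¹ * (π₁ * (1 + X ^ (m + 1))) := by
      rw [two_mul, add_right_comm _ m 1]
    _ = (1 - X ^ (2 * m + 1)) * (1 - X ^ (2 * m + 1))⁻¹ * π₂ * (π₁ * (1 + X ^ (m + 1))) := by ring
    _ = π₂ * (π₁ * (1 + X ^ (m + 1))) := by rw [PowerSeries.mul_inv_cancel _ h, one_mul]
    _ = π₁ * π₂ * (1 + X ^ (m + 1)) := by ring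
    _ = π₃ * (1 + X ^ (m + 1)) := by rw [ih]
    _ = _ := by rw [prod_range_succ]

theorem same_coeffs [Field α] (m n : ℕ) (h : n ≤ m) :
    coeff (R := α) n (partialOddGF m) = coeff (R := α) n (partialDistinctGF m) := by
  rw [← same_gf, coeff_mul_prod_one_sub_of_lt_order]
  rintro i -
  rw [order_X_pow]
  exact mod_cast Nat.lt_succ_of_le (le_add_right h)

theorem partition_theorem (n : ℕ) : #(Nat.Partition.odds n) = #(Nat.Partition.distincts n) := by
  suffices (#(Nat.Partition.odds n) : ℚ) = #(Nat.Partition.distincts n) from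
    mod_cast this
  rw [distinctGF_prop n (n + 1) (by linarith)]
  rw [oddGF_prop n (n + 1) (by linarith)]
  apply same_coeffs (n + 1) n n.le_succ

end

end Theorems100

namespace Aux
open Finset Multiset Nat.Partition
open scoped Classical

noncomputable def D (M : ℕ) : ℕ := #(Nat.Partition.distincts M)
noncomputable def Dk (k M : ℕ) : ℕ :=
  #((Nat.Partition.distincts M).filter (fun lam => 2*k ∉ lam.parts))
noncomputable def O (M : ℕ) : ℕ := #(Nat.Partition.odds M)

/-- junk-tolerant partition constructor -/
noncomputable def mkPart (M : ℕ) (s : Multiset ℕ) : Nat.Partition M :=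
  if h : (∀ i ∈ s, 0 < i) ∧ s.sum = M then ⟨s, fun hi => h.1 _ hi, h.2⟩
  else ⟨Multiset.replicate M 1, fun hi => by simp [Multiset.eq_of_mem_replicate hi],
    by simp [Multiset.sum_replicate]⟩

lemma mkPart_parts {M : ℕ} {s : Multiset ℕ} (h1 : ∀ i ∈ s, 0 < i) (h2 : s.sum = M) :
    (mkPart M s).parts = s := by
  rw [mkPart, dif_pos ⟨h1, h2⟩]

lemma card_le_sum {s : Multiset ℕ} (h : ∀ i ∈ s, 0 < i) : Multiset.card s ≤ s.sum := by
  induction s using Multiset.induction_on with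
  | empty => simp
  | cons a s ih =>
    simp only [Multiset.card_cons, Multiset.sum_cons]
    have ha := h a (Multiset.mem_cons_self _ _)
    have := ih (fun i hi => h i (Multiset.mem_cons_of_mem hi))
    omega

lemma neg_one_pow_sum_add_card (s : Multiset ℕ) :
    (-1 : ℤ) ^ (s.sum + Multiset.card s) =
      (-1) ^ (Multiset.card (s.filter (fun x => Even x))) := by
  induction s using Multiset.induction_on with
  | empty => simp
  | cons a s ih =>
    simp only [Multiset.sum_cons, Multiset.card_cons, Multiset.filter_cons]
    by_cases ha : Even a
    · rw [if_pos ha]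
      have h1 : a + s.sum + (Multiset.card s + 1) = (a + 1) + (s.sum + Multiset.card s) := by ring
      rw [h1, pow_add, ih]
      simp only [Multiset.card_add]
      have : Odd (a + 1) := Even.add_one ha
      rw [this.neg_one_pow]
      simp only [Multiset.card_singleton]
      ring
    · rw [if_neg ha]
      have h1 : a + s.sum + (Multiset.card s + 1) = (a + 1) + (s.sum + Multiset.card s) := by ring
      rw [h1, pow_add, ih]
      have : Even (a + 1) := Odd.add_one (Nat.not_even_iff_odd.1 ha)
      rw [this.neg_one_pow, one_mul]
      simp


lemma part_le {M : ℕ} (lam : Nat.Partition M) {a : ℕ} (ha : a ∈ lam.parts) : a ≤ M := by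
  have := Multiset.single_le_sum (fun x _ => Nat.zero_le x) a ha
  rwa [lam.parts_sum] at this

/-- removing the marked part `j`: bijection between distinct partitions of `M` containing `j`
and distinct partitions of `M - j` not containing `j`. -/
lemma card_mem_part (j M : ℕ) (hj : 0 < j) (hjM : j ≤ M) :
    #((Nat.Partition.distincts M).filter (fun lam => j ∈ lam.parts)) =
      #((Nat.Partition.distincts (M - j)).filter (fun lam => j ∉ lam.parts)) := by
  apply Finset.card_nbij' (i := fun lam => mkPart (M - j) (lam.parts.erase j))
    (j := fun mu => mkPart M (j ::ₘ mu.parts))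
  · intro lam hlam
    simp only [Finset.mem_coe, Finset.mem_filter, Nat.Partition.distincts, Finset.mem_univ, true_and] at hlam ⊢
    obtain ⟨hnd, hmem⟩ := hlam
    have hcons : j ::ₘ lam.parts.erase j = lam.parts := Multiset.cons_erase hmem
    have hsum : (lam.parts.erase j).sum = M - j := by
      have : (j ::ₘ lam.parts.erase j).sum = M := by rw [hcons, lam.parts_sum]
      rw [Multiset.sum_cons] at this; omega
    have hpos : ∀ i ∈ lam.parts.erase j, 0 < i :=
      fun i hi => lam.parts_pos (Multiset.mem_of_mem_erase hi)
    rw [mkPart_parts hpos hsum]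
    exact ⟨hnd.erase j, Multiset.Nodup.notMem_erase hnd⟩
  · intro mu hmu
    simp only [Finset.mem_coe, Finset.mem_filter, Nat.Partition.distincts, Finset.mem_univ, true_and] at hmu ⊢
    obtain ⟨hnd, hnmem⟩ := hmu
    have hpos : ∀ i ∈ j ::ₘ mu.parts, 0 < i := by
      intro i hi
      rcases Multiset.mem_cons.1 hi with h | h
      · omega
      · exact mu.parts_pos h
    have hsum : (j ::ₘ mu.parts).sum = M := by
      rw [Multiset.sum_cons, mu.parts_sum]; omega
    rw [mkPart_parts hpos hsum]
    exact ⟨by rw [Multiset.nodup_cons]; exact ⟨hnmem, hnd⟩, Multiset.mem_cons_self _ _⟩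
  · intro lam hlam
    simp only [Finset.mem_coe, Finset.mem_filter] at hlam
    have hmem : j ∈ lam.parts := hlam.2
    have hcons : j ::ₘ lam.parts.erase j = lam.parts := Multiset.cons_erase hmem
    have hsum : (lam.parts.erase j).sum = M - j := by
      have : (j ::ₘ lam.parts.erase j).sum = M := by rw [hcons, lam.parts_sum]
      rw [Multiset.sum_cons] at this; omega
    have hpos : ∀ i ∈ lam.parts.erase j, 0 < i :=
      fun i hi => lam.parts_pos (Multiset.mem_of_mem_erase hi)
    ext1
    rw [mkPart_parts (by
      intro i hi
      rw [mkPart_parts hpos hsum] at hi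
      rcases Multiset.mem_cons.1 hi with h | h
      · omega
      · exact lam.parts_pos (Multiset.mem_of_mem_erase h)) (by
      rw [mkPart_parts hpos hsum, Multiset.sum_cons, hsum]; omega)]
    rw [mkPart_parts hpos hsum, hcons]
  · intro mu hmu
    simp only [Finset.mem_coe, Finset.mem_filter] at hmu
    have hpos : ∀ i ∈ j ::ₘ mu.parts, 0 < i := by
      intro i hi
      rcases Multiset.mem_cons.1 hi with h | h
      · omega
      · exact mu.parts_pos h
    have hsum : (j ::ₘ mu.parts).sum = M := by
      rw [Multiset.sum_cons, mu.parts_sum]; omega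
    ext1
    rw [mkPart_parts (by
        intro i hi
        rw [mkPart_parts hpos hsum, Multiset.erase_cons_head] at hi
        exact mu.parts_pos hi) (by
        rw [mkPart_parts hpos hsum, Multiset.erase_cons_head, mu.parts_sum])]
    rw [mkPart_parts hpos hsum, Multiset.erase_cons_head]

lemma Dk_eq_D {k M : ℕ} (h : M < 2*k) : Dk k M = D M := by
  rw [Dk, D, Finset.filter_true_of_mem]
  intro lam _ hmem
  exact absurd (part_le lam hmem) (by omega)

lemma D_split (k M : ℕ) (hk : 1 ≤ k) (h : 2*k ≤ M) : D M = Dk k (M - 2*k) + Dk k M := by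
  have := Finset.card_filter_add_card_filter_not
    (s := Nat.Partition.distincts M) (p := fun lam => 2*k ∈ lam.parts)
  rw [D, ← this, card_mem_part (2*k) M (by omega) h]
  rfl


lemma pointwiseA {n : ℕ} {lam : Nat.Partition n} (hlam : lam ∈ Nat.Partition.distincts n) :
    (lam.parts.filter (fun x => Even x)).card =
      #((Finset.Icc 1 n).filter (fun k => 2*k ∈ lam.parts)) := by
  have hnd : lam.parts.Nodup := by
    simpa [Nat.Partition.distincts] using hlam
  rw [← Multiset.toFinset_card_of_nodup (hnd.filter _)]
  apply Finset.card_nbij' (i := fun x => x / 2) (j := fun k => 2 * k)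
  · intro x hx
    rw [Finset.mem_coe, Multiset.mem_toFinset, Multiset.mem_filter] at hx
    obtain ⟨hxmem, hxe⟩ := hx
    have hx2 : 2 * (x / 2) = x := Nat.mul_div_cancel' hxe.two_dvd
    have hxpos : 0 < x := lam.parts_pos hxmem
    have hxle : x ≤ n := part_le lam hxmem
    simp only [Finset.mem_coe, Finset.mem_filter, Finset.mem_Icc, hx2]
    exact ⟨⟨by omega, by omega⟩, hxmem⟩
  · intro k hk
    rw [Finset.mem_coe, Finset.mem_filter] at hk
    rw [Finset.mem_coe, Multiset.mem_toFinset, Multiset.mem_filter]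
    exact ⟨hk.2, ⟨k, by ring⟩⟩
  · intro x hx
    rw [Finset.mem_coe, Multiset.mem_toFinset, Multiset.mem_filter] at hx
    exact Nat.mul_div_cancel' hx.2.two_dvd
  · intro k _
    dsimp only
    omega

lemma stepA (n : ℕ) :
    totalEvenDistinct n =
      ∑ k ∈ Finset.Icc 1 n, (if 2*k ≤ n then Dk k (n - 2*k) else 0) := by
  rw [totalEvenDistinct]
  rw [Finset.sum_congr rfl (fun lam hlam => pointwiseA hlam)]
  simp only [Finset.card_filter]
  rw [Finset.sum_comm]
  refine Finset.sum_congr rfl (fun k hk => ?_)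
  rw [Finset.mem_Icc] at hk
  rw [← Finset.card_filter]
  by_cases h2k : 2*k ≤ n
  · rw [if_pos h2k, card_mem_part (2*k) n (by omega) h2k]
    rfl
  · rw [if_neg h2k, Finset.card_eq_zero, Finset.filter_eq_empty_iff]
    intro lam _ hmem
    exact absurd (part_le lam hmem) (by omega)

lemma telescope (n k : ℕ) (hk : 1 ≤ k) :
    ((if 2*k ≤ n then (Dk k (n - 2*k) : ℤ) else 0)) =
      ∑ i ∈ Finset.range n, (-1:ℤ)^i * (if 2*k*(i+1) ≤ n then (D (n - 2*k*(i+1)) : ℤ) else 0) := by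
  set f : ℕ → ℤ := fun i => (-1:ℤ)^i * (if 2*k*(i+1) ≤ n then (Dk k (n - 2*k*(i+1)) : ℤ) else 0)
    with hf
  have key : ∀ i, (-1:ℤ)^i * (if 2*k*(i+1) ≤ n then (D (n - 2*k*(i+1)) : ℤ) else 0)
      = f i - f (i+1) := by
    intro i
    have hstep : 2*k*(i+1+1) = 2*k*(i+1) + 2*k := by ring
    simp only [hf, pow_succ]
    by_cases h1 : 2*k*(i+1) ≤ n
    · by_cases h2 : 2*k*(i+1+1) ≤ n
      · have hle : 2*k ≤ n - 2*k*(i+1) := by omega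
        have hD : D (n - 2*k*(i+1)) = Dk k (n - 2*k*(i+1+1)) + Dk k (n - 2*k*(i+1)) := by
          rw [D_split k (n - 2*k*(i+1)) hk hle]
          congr 2
          omega
        rw [if_pos h1, if_pos h1, if_pos h2, hD]
        push_cast
        ring
      · have hlt : n - 2*k*(i+1) < 2*k := by omega
        rw [if_pos h1, if_pos h1, if_neg h2, ← Dk_eq_D hlt]
        ring
    · rw [if_neg h1, if_neg h1, if_neg (by omega)]
      ring
  rw [Finset.sum_congr rfl (fun i _ => key i), Finset.sum_range_sub' f n]
  have h2kn1 : ¬ 2*k*(n+1) ≤ n := by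
    have : n + 1 ≤ 2*k*(n+1) := Nat.le_mul_of_pos_left _ (by omega)
    omega
  simp only [hf]
  rw [if_neg h2kn1, mul_zero, sub_zero, pow_zero, one_mul]
  norm_num


variable {n : ℕ}



def P (lam : Nat.Partition n) : Prop :=
  ∃ j, Even j ∧ j ∈ lam.parts ∧ ∀ i ∈ lam.parts, Even i → i = j

noncomputable def evens (lam : Nat.Partition n) : Multiset ℕ :=
  lam.parts.filter (fun x => Even x)

noncomputable def mval (lam : Nat.Partition n) : ℕ := Multiset.card (evens lam)

noncomputable def jval (lam : Nat.Partition n) : ℕ := (evens lam).toFinset.sum id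

lemma struct {lam : Nat.Partition n} (hP : P lam) :
    evens lam = Multiset.replicate (mval lam) (jval lam) ∧ 0 < mval lam ∧
      Even (jval lam) ∧ jval lam ∈ lam.parts := by
  obtain ⟨j, hje, hjm, hju⟩ := hP
  have hrep : evens lam = Multiset.replicate (mval lam) j := by
    rw [mval]
    exact Multiset.eq_replicate_card.2 (fun b hb => by
      rw [evens, Multiset.mem_filter] at hb
      exact hju b hb.1 hb.2)
  have hmem : j ∈ evens lam := by
    rw [evens, Multiset.mem_filter]; exact ⟨hjm, hje⟩
  have hm : 0 < mval lam := by
    rw [mval, Multiset.card_pos]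
    exact fun h => by simp [h] at hmem
  have hj : jval lam = j := by
    rw [jval, hrep, Multiset.toFinset_replicate, if_neg (by omega)]
    simp
  rw [hj]
  exact ⟨hrep, hm, hj ▸ hje, hj ▸ hjm⟩

lemma evens_sum_le {lam : Nat.Partition n} :
    (evens lam).sum + (lam.parts.filter (fun x => ¬ Even x)).sum = n := by
  rw [evens, ← Multiset.sum_add, Multiset.filter_add_not, lam.parts_sum]

lemma key_ineq {lam : Nat.Partition n} (hP : P lam) :
    2 * (jval lam / 2) * mval lam ≤ n ∧
      (lam.parts.filter (fun x => ¬ Even x)).sum = n - 2 * (jval lam / 2) * mval lam := by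
  obtain ⟨hrep, hm, hje, hjm⟩ := struct hP
  have h2 : 2 * (jval lam / 2) = jval lam := Nat.mul_div_cancel' hje.two_dvd
  have hsum : (evens lam).sum = jval lam * mval lam := by
    rw [hrep, Multiset.sum_replicate, smul_eq_mul, Nat.mul_comm]
  have := evens_sum_le (lam := lam)
  rw [hsum] at this
  constructor
  · rw [h2]
    omega
  · rw [h2]
    omega

lemma maps_to (lam : Nat.Partition n) (hP : P lam) :
    (jval lam / 2, mval lam) ∈ Finset.Icc 1 n ×ˢ Finset.Icc 1 n := by
  obtain ⟨hrep, hm, hje, hjm⟩ := struct hP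
  have hjpos : 0 < jval lam := lam.parts_pos hjm
  have hj2 : 2 ≤ jval lam := by
    rcases hje with ⟨r, hr⟩
    omega
  have hjn : jval lam ≤ n := part_le lam hjm
  have hcard : mval lam ≤ n := by
    calc mval lam ≤ Multiset.card lam.parts :=
          Multiset.card_le_card (Multiset.filter_le _ _)
    _ ≤ lam.parts.sum := card_le_sum (fun i hi => lam.parts_pos hi)
    _ = n := lam.parts_sum
  simp only [Finset.mem_product, Finset.mem_Icc]
  refine ⟨⟨?_, ?_⟩, ⟨hm, hcard⟩⟩ <;> omega

lemma fiber_card (k m : ℕ) (hk : 1 ≤ k) (hm : 1 ≤ m) (hkm : 2*k*m ≤ n) :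
    #((Finset.univ.filter (P (n := n))).filter
        (fun lam => (jval lam / 2, mval lam) = (k, m))) = O (n - 2*k*m) := by
  rw [O]
  apply Finset.card_nbij'
    (i := fun lam => mkPart (n - 2*k*m) (lam.parts.filter (fun x => ¬ Even x)))
    (j := fun nu => mkPart n (Multiset.replicate m (2*k) + nu.parts))
  · intro lam hlam
    simp only [Finset.mem_coe, Finset.mem_filter, Finset.mem_univ, true_and, Prod.mk.injEq] at hlam
    obtain ⟨hP, hfk, hfm⟩ := hlam
    obtain ⟨hle, hsum⟩ := key_ineq hP
    rw [hfk, hfm] at hsum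
    rw [Finset.mem_coe, Nat.Partition.odds, Nat.Partition.restricted, Finset.mem_filter]
    refine ⟨Finset.mem_univ _, ?_⟩
    rw [mkPart_parts (fun i hi => lam.parts_pos (Multiset.mem_of_mem_filter hi)) hsum]
    intro i hi
    exact (Multiset.mem_filter.1 hi).2
  · intro nu hnu
    rw [Finset.mem_coe, Nat.Partition.odds, Nat.Partition.restricted, Finset.mem_filter] at hnu
    have hpos : ∀ i ∈ Multiset.replicate m (2*k) + nu.parts, 0 < i := by
      intro i hi
      rcases Multiset.mem_add.1 hi with h | h
      · rw [Multiset.eq_of_mem_replicate h]; omega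
      · exact nu.parts_pos h
    have hsum : (Multiset.replicate m (2*k) + nu.parts).sum = n := by
      rw [Multiset.sum_add, Multiset.sum_replicate, smul_eq_mul, nu.parts_sum]
      have : m * (2*k) = 2*k*m := by ring
      omega
    have hparts := mkPart_parts hpos hsum
    have hevens : evens (mkPart n (Multiset.replicate m (2*k) + nu.parts))
        = Multiset.replicate m (2*k) := by
      rw [evens, hparts, Multiset.filter_add]
      rw [Multiset.filter_eq_self.2 (fun a ha => by
        rw [Multiset.eq_of_mem_replicate ha]; exact ⟨k, by ring⟩)]
      rw [Multiset.filter_eq_nil.2 (fun a ha => hnu.2 a ha), add_zero]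
    simp only [Finset.mem_coe, Finset.mem_filter, Finset.mem_univ, true_and, Prod.mk.injEq]
    refine ⟨⟨2*k, ⟨k, by ring⟩, ?_, ?_⟩, ?_, ?_⟩
    · rw [hparts]
      exact Multiset.mem_add.2 (Or.inl (Multiset.mem_replicate.2 ⟨by omega, rfl⟩))
    · intro i hi hie
      rw [hparts] at hi
      rcases Multiset.mem_add.1 hi with h | h
      · exact Multiset.eq_of_mem_replicate h
      · exact absurd hie (hnu.2 i h)
    · rw [jval, hevens, Multiset.toFinset_replicate, if_neg (by omega)]
      simp only [Finset.sum_singleton, id]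
      omega
    · rw [mval, hevens, Multiset.card_replicate]
  · intro lam hlam
    simp only [Finset.mem_coe, Finset.mem_filter, Finset.mem_univ, true_and, Prod.mk.injEq] at hlam
    obtain ⟨hP, hfk, hfm⟩ := hlam
    obtain ⟨hrep, hmpos, hje, hjm⟩ := struct hP
    obtain ⟨hle, hsum⟩ := key_ineq hP
    rw [hfk, hfm] at hsum hle
    have hj2k : jval lam = 2*k := by
      have := Nat.mul_div_cancel' hje.two_dvd
      omega
    have hpos1 : ∀ i ∈ lam.parts.filter (fun x => ¬ Even x), 0 < i :=
      fun i hi => lam.parts_pos (Multiset.mem_of_mem_filter hi)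
    have hparts1 := mkPart_parts hpos1 hsum
    have hpos2 : ∀ i ∈ Multiset.replicate m (2*k) +
        (mkPart (n - 2*k*m) (lam.parts.filter (fun x => ¬ Even x))).parts, 0 < i := by
      intro i hi
      rcases Multiset.mem_add.1 hi with h | h
      · rw [Multiset.eq_of_mem_replicate h]; omega
      · rw [hparts1] at h
        exact hpos1 i h
    have hsum2 : (Multiset.replicate m (2*k) +
        (mkPart (n - 2*k*m) (lam.parts.filter (fun x => ¬ Even x))).parts).sum = n := by
      rw [Multiset.sum_add, Multiset.sum_replicate, smul_eq_mul, hparts1, hsum]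
      have : m * (2*k) = 2*k*m := by ring
      omega
    ext1
    rw [mkPart_parts hpos2 hsum2, hparts1]
    have : Multiset.replicate m (2*k) = evens lam := by
      rw [hrep, hfm, hj2k]
    rw [this, evens, Multiset.filter_add_not]
  · intro nu hnu
    rw [Finset.mem_coe, Nat.Partition.odds, Nat.Partition.restricted, Finset.mem_filter] at hnu
    have hpos : ∀ i ∈ Multiset.replicate m (2*k) + nu.parts, 0 < i := by
      intro i hi
      rcases Multiset.mem_add.1 hi with h | h
      · rw [Multiset.eq_of_mem_replicate h]; omega
      · exact nu.parts_pos h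
    have hsum : (Multiset.replicate m (2*k) + nu.parts).sum = n := by
      rw [Multiset.sum_add, Multiset.sum_replicate, smul_eq_mul, nu.parts_sum]
      have : m * (2*k) = 2*k*m := by ring
      omega
    have hparts := mkPart_parts hpos hsum
    have hfilter : (Multiset.replicate m (2*k) + nu.parts).filter (fun x => ¬ Even x)
        = nu.parts := by
      rw [Multiset.filter_add]
      rw [Multiset.filter_eq_nil.2 (fun a ha => by
        rw [Multiset.eq_of_mem_replicate ha]
        exact not_not.2 ⟨k, by ring⟩)]
      rw [Multiset.filter_eq_self.2 (fun a ha => hnu.2 a ha), zero_add]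
    ext1
    rw [mkPart_parts (by
        rw [hparts, hfilter]; exact fun i hi => nu.parts_pos hi) (by
        rw [hparts, hfilter, nu.parts_sum]), hparts, hfilter]

lemma fiber_empty (p : ℕ × ℕ) (hp : ¬ 2*p.1*p.2 ≤ n) :
    ((Finset.univ.filter (P (n := n))).filter
        (fun lam => (jval lam / 2, mval lam) = p)) = ∅ := by
  rw [Finset.filter_eq_empty_iff]
  intro lam hlam
  rw [Finset.mem_filter] at hlam
  obtain ⟨hle, _⟩ := key_ineq hlam.2
  intro heq
  rw [← heq] at hp
  exact hp hle


lemma bOdd_eq (n : ℕ) :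
    bOdd n = #((Finset.univ.filter (P (n := n))).filter
      (fun lam => Odd (Multiset.card lam.parts))) := by
  rw [bOdd, Nat.card_eq_fintype_card, Fintype.card_subtype, Finset.filter_filter]
  congr 1
  exact Finset.filter_congr (fun x _ => by simp only [P]; tauto)

lemma bEven_eq (n : ℕ) :
    bEven n = #((Finset.univ.filter (P (n := n))).filter
      (fun lam => ¬ Odd (Multiset.card lam.parts))) := by
  rw [bEven, Nat.card_eq_fintype_card, Fintype.card_subtype, Finset.filter_filter]
  congr 1
  exact Finset.filter_congr (fun x _ => by
    simp only [P, Nat.not_odd_iff_even]; tauto)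

lemma signed_sum (n : ℕ) :
    (bOdd n : ℤ) - bEven n =
      ∑ lam ∈ Finset.univ.filter (P (n := n)), (-1:ℤ)^(Multiset.card lam.parts + 1) := by
  rw [← Finset.sum_filter_add_sum_filter_not (Finset.univ.filter (P (n := n)))
    (fun lam => Odd (Multiset.card lam.parts))]
  have h1 : ∀ lam ∈ (Finset.univ.filter (P (n := n))).filter
      (fun lam => Odd (Multiset.card lam.parts)),
      (-1:ℤ)^(Multiset.card lam.parts + 1) = 1 := by
    intro lam hlam
    have : Odd (Multiset.card lam.parts) := (Finset.mem_filter.1 hlam).2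
    exact Even.neg_one_pow this.add_one
  have h2 : ∀ lam ∈ (Finset.univ.filter (P (n := n))).filter
      (fun lam => ¬ Odd (Multiset.card lam.parts)),
      (-1:ℤ)^(Multiset.card lam.parts + 1) = -1 := by
    intro lam hlam
    have : ¬ Odd (Multiset.card lam.parts) := (Finset.mem_filter.1 hlam).2
    exact Odd.neg_one_pow ((Nat.not_odd_iff_even.1 this).add_one)
  rw [Finset.sum_congr rfl h1, Finset.sum_congr rfl h2,
    Finset.sum_const, Finset.sum_const, bOdd_eq, bEven_eq]
  push_cast
  ring

lemma rhs_eq (n : ℕ) :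
    (-1:ℤ)^n * ((bOdd n : ℤ) - bEven n) =
      ∑ k ∈ Finset.Icc 1 n, ∑ i ∈ Finset.range n,
        (-1:ℤ)^i * (if 2*k*(i+1) ≤ n then (O (n - 2*k*(i+1)) : ℤ) else 0) := by
  rw [signed_sum, Finset.mul_sum]
  have hpt : ∀ lam : Nat.Partition n,
      (-1:ℤ)^n * (-1:ℤ)^(Multiset.card lam.parts + 1) = (-1:ℤ)^(mval lam + 1) := by
    intro lam
    have h := neg_one_pow_sum_add_card lam.parts
    rw [lam.parts_sum] at h
    rw [pow_succ, pow_succ, ← mul_assoc, ← pow_add, h, mval, evens]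
  rw [Finset.sum_congr rfl (fun lam _ => hpt lam)]
  rw [← Finset.sum_fiberwise_of_maps_to (fun lam hlam => maps_to lam
    ((Finset.mem_filter.1 hlam).2)) (fun lam => (-1:ℤ)^(mval lam + 1))]
  have hinner : ∀ p ∈ Finset.Icc 1 n ×ˢ Finset.Icc 1 n,
      ∑ lam ∈ (Finset.univ.filter (P (n := n))).filter
        (fun lam => (jval lam / 2, mval lam) = p), (-1:ℤ)^(mval lam + 1)
      = (-1:ℤ)^(p.2 + 1) * (if 2*p.1*p.2 ≤ n then (O (n - 2*p.1*p.2) : ℤ) else 0) := by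
    intro p hp
    obtain ⟨k, m⟩ := p
    dsimp only
    rw [Finset.mem_product, Finset.mem_Icc, Finset.mem_Icc] at hp
    have hcongr : ∀ lam ∈ (Finset.univ.filter (P (n := n))).filter
        (fun lam => (jval lam / 2, mval lam) = (k, m)),
        (-1:ℤ)^(mval lam + 1) = (-1:ℤ)^(m+1) := by
      intro lam hlam
      have hpe := (Finset.mem_filter.1 hlam).2
      rw [Prod.mk.injEq] at hpe
      rw [hpe.2]
    rw [Finset.sum_congr rfl hcongr, Finset.sum_const, nsmul_eq_mul]
    by_cases hle : 2*k*m ≤ n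
    · rw [if_pos hle, fiber_card k m hp.1.1 hp.2.1 hle]
      ring
    · rw [if_neg hle, fiber_empty (k, m) hle]
      simp
  rw [Finset.sum_congr rfl hinner, Finset.sum_product]
  refine Finset.sum_congr rfl (fun k _ => ?_)
  apply Finset.sum_nbij' (i := fun m => m - 1) (j := fun i => i + 1)
  · intro m hm
    rw [Finset.mem_Icc] at hm
    rw [Finset.mem_range]
    omega
  · intro i hi
    rw [Finset.mem_range] at hi
    rw [Finset.mem_Icc]
    omega
  · intro m hm
    rw [Finset.mem_Icc] at hm
    omega
  · intro i _
    omega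
  · intro m hm
    rw [Finset.mem_Icc] at hm
    have h1 : m - 1 + 1 = m := by omega
    rw [h1]
    have h2 : (-1:ℤ)^(m+1) = (-1:ℤ)^(m-1) := by
      have : m + 1 = (m - 1) + 2 := by omega
      rw [this, pow_add]
      norm_num
    rw [h2]


lemma O_eq_D (M : ℕ) : O M = D M := by
  rw [O, D]; exact Theorems100.partition_theorem M

end Aux

theorem total_even_eq_sign_b (n : ℕ) (hn : 1 ≤ n) :
    (totalEvenDistinct n : ℤ) = (-1) ^ n * ((bOdd n : ℤ) - (bEven n : ℤ)) := by
  rw [Aux.rhs_eq n, Aux.stepA n]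
  push_cast
  rw [Finset.sum_congr rfl (fun k hk =>
    Aux.telescope n k (Finset.mem_Icc.1 hk).1)]
  exact Finset.sum_congr rfl (fun k _ => Finset.sum_congr rfl (fun i _ => by
    rw [Aux.O_eq_D]))
end

section
/- Let p and r be non-negative integers with p ≥ r + 2. Then for all n ≥ 1, the total number of parts congruent to −r modulo p counted over all partitions of n into distinct parts equals g_{r,o}(n,p) − g_{r,e}(n,p), where g_{r,o}(n,p) (resp. g_{r,e}(n,p)) is the number of partitions of n in which exactly one part is repeated, this repeated part is odd (resp. even), and its multiplicity is at least p − r and congruent to −r or −r+1 modulo p. -/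
/-- `a_r(n,p)`: total number of parts congruent to `-r` modulo `p` in all partitions of `n`
into distinct parts. -/
def aModDistinct (p r n : ℕ) : ℕ :=
  ∑ lam ∈ Nat.Partition.distincts n, (lam.parts.filter (fun x => (x + r) % p = 0)).card

/-- `g_{r,o}(n,p)`: partitions of `n` in which exactly one part is repeated, this repeated part
is odd, and its multiplicity is at least `p - r` and congruent to `-r` or `-r + 1` modulo `p`. -/
noncomputable def gOdd (p r n : ℕ) : ℕ :=
  Nat.card {lam : n.Partition //
    ∃ j, Odd j ∧ 2 ≤ lam.parts.count j ∧
      p - r ≤ lam.parts.count j ∧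
      ((lam.parts.count j + r) % p = 0 ∨ (lam.parts.count j + r) % p = 1 % p) ∧
      ∀ i, i ≠ j → lam.parts.count i ≤ 1}

/-- `g_{r,e}(n,p)`: as `g_{r,o}(n,p)` but with the repeated part even. -/
noncomputable def gEven (p r n : ℕ) : ℕ :=
  Nat.card {lam : n.Partition //
    ∃ j, Even j ∧ 2 ≤ lam.parts.count j ∧
      p - r ≤ lam.parts.count j ∧
      ((lam.parts.count j + r) % p = 0 ∨ (lam.parts.count j + r) % p = 1 % p) ∧
      ∀ i, i ≠ j → lam.parts.count i ≤ 1}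

open Finset Multiset

namespace AModG

/-- number of partitions of `s` into distinct parts -/
def D (s : ℕ) : ℕ := (Nat.Partition.distincts s).card

/-- distinct partitions of `s` avoiding the part `j` -/
def E (j s : ℕ) : ℕ :=
  ((Nat.Partition.distincts s).filter (fun l => j ∉ l.parts)).card

/-- distinct partitions of `s` containing the part `a` -/
def Cc (a s : ℕ) : ℕ :=
  ((Nat.Partition.distincts s).filter (fun l => a ∈ l.parts)).card

lemma mem_distincts {s : ℕ} (l : s.Partition) :
    l ∈ Nat.Partition.distincts s ↔ l.parts.Nodup := by
  simp [Nat.Partition.distincts]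

lemma part_le {s : ℕ} (l : s.Partition) {a : ℕ} (h : a ∈ l.parts) : a ≤ s := by
  obtain ⟨t, ht⟩ := Multiset.exists_cons_of_mem h
  have hs := l.parts_sum
  rw [ht, Multiset.sum_cons] at hs
  omega

lemma sub_sum {s : ℕ} (l : s.Partition) {j m : ℕ} (h : m ≤ l.parts.count j) :
    (l.parts - Multiset.replicate m j).sum + m * j = s := by
  have h1 : (l.parts - Multiset.replicate m j) + Multiset.replicate m j = l.parts :=
    tsub_add_cancel_of_le (Multiset.le_count_iff_replicate_le.mp h)
  have h2 := congrArg Multiset.sum h1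
  rwa [Multiset.sum_add, Multiset.sum_replicate, smul_eq_mul, l.parts_sum] at h2

lemma count_mul_le {s : ℕ} (l : s.Partition) (j : ℕ) : j * l.parts.count j ≤ s := by
  have := sub_sum l (le_refl (l.parts.count j))
  rw [mul_comm]
  omega


lemma E_eq_D {j s : ℕ} (h : s < j) : E j s = D s := by
  rw [E, D, Finset.filter_true_of_mem]
  exact fun l _ hj => absurd (part_le l hj) (by omega)

/-- The key bijection: partitions of `s` in which `j` occurs exactly `m` times and every
other value at most once correspond to distinct partitions of `s - j*m` avoiding `j`. -/
lemma key {j m s : ℕ} (hj : 1 ≤ j) (hjm : j * m ≤ s) (F : Finset s.Partition)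
    (hF : ∀ l, l ∈ F ↔ (l.parts.count j = m ∧ ∀ i, i ≠ j → l.parts.count i ≤ 1)) :
    F.card = E j (s - j * m) := by
  rw [E]
  refine Finset.card_bij'
    (fun l hl => ⟨l.parts - Multiset.replicate m j, ?_, ?_⟩)
    (fun l hl => ⟨l.parts + Multiset.replicate m j, ?_, ?_⟩) ?_ ?_ ?_ ?_
  · -- positivity of forward parts
    intro i hi
    exact l.parts_pos (Multiset.mem_of_le (tsub_le_self) hi)
  · -- sum of forward parts
    have hc := ((hF l).mp hl).1
    have := sub_sum l (le_of_eq hc.symm)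
    rw [mul_comm] at this
    omega
  · -- positivity backward
    intro i hi
    rcases Multiset.mem_add.mp hi with h1 | h1
    · exact l.parts_pos h1
    · rw [Multiset.eq_of_mem_replicate h1]; exact hj
  · -- sum backward
    rw [Multiset.sum_add, Multiset.sum_replicate, smul_eq_mul, l.parts_sum, mul_comm m j]
    omega
  · -- forward lands in target
    intro l hl
    obtain ⟨hc, hoth⟩ := (hF l).mp hl
    have hcount : ∀ i, (l.parts - Multiset.replicate m j).count i
        = l.parts.count i - (if j = i then m else 0) := by
      intro i
      rw [Multiset.count_sub, Multiset.count_replicate]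
    simp only [Finset.mem_filter, mem_distincts]
    constructor
    · rw [Multiset.nodup_iff_count_le_one]
      intro i
      rcases eq_or_ne i j with rfl | hne
      · rw [hcount, if_pos rfl, hc]; omega
      · rw [hcount, if_neg (fun h => hne h.symm)]
        have := hoth i hne
        omega
    · rw [← Multiset.count_pos]
      rw [hcount, if_pos rfl, hc]
      omega
  · -- backward lands in source
    intro l hl
    simp only [Finset.mem_filter, mem_distincts] at hl
    obtain ⟨hnd, hjn⟩ := hl
    rw [hF]
    have hcount : ∀ i, (l.parts + Multiset.replicate m j).count i
        = l.parts.count i + (if j = i then m else 0) := by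
      intro i
      rw [Multiset.count_add, Multiset.count_replicate]
    constructor
    · rw [hcount, if_pos rfl, Multiset.count_eq_zero_of_notMem hjn, zero_add]
    · intro i hne
      rw [hcount, if_neg (fun h => hne h.symm)]
      have := Multiset.nodup_iff_count_le_one.mp hnd i
      omega
  · -- left inverse
    intro l hl
    ext1
    exact tsub_add_cancel_of_le
      (Multiset.le_count_iff_replicate_le.mp (le_of_eq ((hF l).mp hl).1.symm))
  · -- right inverse
    intro l hl
    ext1
    exact add_tsub_cancel_right _ _


open scoped Classical in
/-- number of partitions of `n` where `j` occurs exactly `m` times and all other values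
at most once -/
noncomputable def gc (j m n : ℕ) : ℕ :=
  (Finset.univ.filter (fun l : n.Partition =>
    l.parts.count j = m ∧ ∀ i, i ≠ j → l.parts.count i ≤ 1)).card

lemma gc_eq {j m n : ℕ} (hj : 1 ≤ j) (hjm : j * m ≤ n) : gc j m n = E j (n - j * m) := by
  classical
  rw [gc]
  exact key hj hjm _ (fun l => by simp)

lemma gc_zero {j m n : ℕ} (hj : 1 ≤ j) (h : n < j * m) : gc j m n = 0 := by
  classical
  rw [gc, Finset.card_eq_zero, Finset.filter_eq_empty_iff]
  rintro l - ⟨hc, -⟩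
  have := count_mul_le l j
  rw [hc] at this
  omega

lemma Cc_eq {a s : ℕ} (ha : 1 ≤ a) (has : a ≤ s) : Cc a s = E a (s - a) := by
  have h := key (m := 1) ha (by omega)
    ((Nat.Partition.distincts s).filter (fun l => a ∈ l.parts)) ?_
  · rw [Cc, h, mul_one]
  · intro l
    simp only [Finset.mem_filter, mem_distincts]
    constructor
    · rintro ⟨hnd, hmem⟩
      refine ⟨Multiset.count_eq_one_of_mem hnd hmem, fun i _ => ?_⟩
      exact Multiset.nodup_iff_count_le_one.mp hnd i
    · rintro ⟨hc, hoth⟩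
      have hmem : a ∈ l.parts := by rw [← Multiset.count_pos]; omega
      refine ⟨Multiset.nodup_iff_count_le_one.mpr fun i => ?_, hmem⟩
      rcases eq_or_ne i a with rfl | hne
      · omega
      · exact hoth i hne

lemma Dsplit (a t : ℕ) : D t = E a t + Cc a t := by
  classical
  rw [D, E, Cc]
  rw [← Finset.card_filter_add_card_filter_not
    (s := Nat.Partition.distincts t) (p := fun l => a ∉ l.parts)]
  congr 1
  apply congrArg Finset.card
  apply Finset.filter_congr
  intro l _
  simp

lemma Cc_zero {a s : ℕ} (h : s < a) : Cc a s = 0 := by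
  rw [Cc, Finset.card_eq_zero, Finset.filter_eq_empty_iff]
  exact fun l _ hmem => absurd (part_le l hmem) (by omega)

lemma Calt (a : ℕ) (ha : 1 ≤ a) : ∀ s, (Cc a s : ℤ) =
    ∑ j ∈ Finset.Icc 1 s, (if j * a ≤ s then (-1 : ℤ)^(j+1) * (D (s - j*a) : ℤ) else 0) := by
  intro s
  induction s using Nat.strong_induction_on with
  | _ s ih =>
  by_cases hs : a ≤ s
  · have h1 : (Cc a s : ℤ) = (D (s-a) : ℤ) - (Cc a (s-a) : ℤ) := by
      have h2 := Dsplit a (s - a)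
      rw [Cc_eq ha hs]
      push_cast [h2]
      ring
    have hlt : s - a < s := by omega
    rw [h1, ih _ hlt]
    have hIcc : Finset.Icc 1 s = insert 1 (Finset.Icc 2 s) := by
      ext x; simp only [Finset.mem_Icc, Finset.mem_insert]; omega
    rw [hIcc, Finset.sum_insert (by simp)]
    have h1a : (if 1 * a ≤ s then (-1 : ℤ)^(1+1) * (D (s - 1*a) : ℤ) else 0) = (D (s-a) : ℤ) := by
      rw [if_pos (by omega)]
      norm_num
    rw [h1a]
    have hmap : Finset.Icc 2 s = Finset.map ⟨fun x => x + 1, add_left_injective 1⟩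
        (Finset.Icc 1 (s-1)) := by
      ext x
      simp only [Finset.mem_Icc, Finset.mem_map, Function.Embedding.coeFn_mk]
      constructor
      · intro h; exact ⟨x - 1, by omega, by omega⟩
      · rintro ⟨y, hy, rfl⟩; omega
    rw [hmap, Finset.sum_map]
    simp only [Function.Embedding.coeFn_mk]
    have hterm : ∀ j, 1 ≤ j →
        (if (j+1) * a ≤ s then (-1 : ℤ)^(j+1+1) * (D (s - (j+1)*a) : ℤ) else 0)
        = -(if j * a ≤ s - a then (-1 : ℤ)^(j+1) * (D ((s-a) - j*a) : ℤ) else 0) := by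
      intro j hjj
      have hmul : (j+1) * a = j*a + a := by ring
      by_cases hc : j * a ≤ s - a
      · rw [if_pos (by omega), if_pos hc]
        have : s - (j+1)*a = (s-a) - j*a := by omega
        rw [this, pow_succ]
        ring
      · rw [if_neg (by omega), if_neg hc]
        ring
    rw [Finset.sum_congr rfl (fun j hj => hterm j (Finset.mem_Icc.mp hj).1)]
    rw [Finset.sum_neg_distrib]
    have hext : ∑ j ∈ Finset.Icc 1 (s-1),
        (if j * a ≤ s - a then (-1 : ℤ)^(j+1) * (D ((s-a) - j*a) : ℤ) else 0)
        = ∑ j ∈ Finset.Icc 1 (s-a),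
        (if j * a ≤ s - a then (-1 : ℤ)^(j+1) * (D ((s-a) - j*a) : ℤ) else 0) := by
      symm
      apply Finset.sum_subset
      · intro x hx
        simp only [Finset.mem_Icc] at *
        omega
      · intro x hx hnx
        simp only [Finset.mem_Icc] at hx hnx
        have : ¬ (x * a ≤ s - a) := by
          have : x ≤ x * a := Nat.le_mul_of_pos_right x (by omega)
          omega
        rw [if_neg this]
    rw [hext]
    ring
  · rw [Cc_zero (by omega)]
    symm
    push_cast
    apply Finset.sum_eq_zero
    intro j hj
    rw [Finset.mem_Icc] at hj
    have : a ≤ j * a := Nat.le_mul_of_pos_left a (by omega)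
    rw [if_neg (by omega)]


lemma split {j t : ℕ} (hj : 1 ≤ j) (hjt : j ≤ t) : D t = E j t + E j (t - j) := by
  rw [Dsplit j t, Cc_eq hj hjt]

lemma pair {j a n : ℕ} (hj : 1 ≤ j) (ha : 1 ≤ a) :
    ((gc j a n : ℤ) + (gc j (a+1) n : ℤ)) = if j * a ≤ n then (D (n - j*a) : ℤ) else 0 := by
  have hmul : j * (a + 1) = j * a + j := by ring
  by_cases h1 : j * a ≤ n
  · rw [if_pos h1, gc_eq hj h1]
    by_cases h2 : j * (a+1) ≤ n
    · rw [gc_eq hj h2]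
      have hjt : j ≤ n - j * a := by omega
      have heq : n - j * (a+1) = (n - j * a) - j := by omega
      rw [heq, split hj hjt]
      push_cast
      ring
    · rw [gc_zero hj (by omega)]
      have hlt : n - j * a < j := by omega
      rw [E_eq_D hlt]
      push_cast
      ring
  · rw [if_neg h1, gc_zero hj (by omega), gc_zero hj (by omega)]
    norm_num


def valid (p r m : ℕ) : Prop :=
  2 ≤ m ∧ p - r ≤ m ∧ ((m + r) % p = 0 ∨ (m + r) % p = 1 % p)

instance (p r : ℕ) : DecidablePred (valid p r) := fun m => by unfold valid; infer_instance

lemma msum {p r n j : ℕ} (hpr : r + 2 ≤ p) (hj : 1 ≤ j) :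
    ∑ m ∈ (Finset.Icc 2 n).filter (fun m => valid p r m), gc j m n
    = ∑ a ∈ (Finset.Icc 1 n).filter (fun a => (a + r) % p = 0),
        (gc j a n + gc j (a+1) n) := by
  have h1p : 1 % p = 1 := Nat.mod_eq_of_lt (by omega)
  have hsplit : ∀ m ∈ Finset.Icc 2 n, (if valid p r m then gc j m n else 0)
      = (if valid p r m ∧ (m+r) % p = 0 then gc j m n else 0)
      + (if valid p r m ∧ (m+r) % p = 1 then gc j m n else 0) := by
    intro m _
    by_cases hv : valid p r m
    · rw [if_pos hv]
      have hmod := hv.2.2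
      rw [h1p] at hmod
      rcases hmod with h0 | h1
      · rw [if_pos ⟨hv, h0⟩, if_neg (by rintro ⟨-, hh⟩; omega), add_zero]
      · rw [if_neg (by rintro ⟨-, hh⟩; omega), if_pos ⟨hv, h1⟩, zero_add]
    · simp [hv]
  have hA : (Finset.Icc 2 n).filter (fun m => valid p r m ∧ (m+r)%p = 0)
      = (Finset.Icc 1 n).filter (fun a => (a+r)%p = 0) := by
    ext m
    simp only [Finset.mem_filter, Finset.mem_Icc]
    simp only [valid]
    constructor
    · rintro ⟨⟨h2, hn'⟩, -, h0⟩
      exact ⟨⟨by omega, hn'⟩, h0⟩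
    · rintro ⟨⟨h1', hn'⟩, h0⟩
      have hge : p ≤ m + r := Nat.le_of_dvd (by omega) (Nat.dvd_of_mod_eq_zero h0)
      exact ⟨⟨by omega, hn'⟩, ⟨by omega, by omega, Or.inl h0⟩, h0⟩
  have hB : (Finset.Icc 2 n).filter (fun m => valid p r m ∧ (m+r)%p = 1)
      = ((Finset.Icc 1 (n-1)).filter (fun a => (a+r)%p = 0)).image (fun a => a + 1) := by
    ext m
    simp only [Finset.mem_filter, Finset.mem_Icc, Finset.mem_image]
    simp only [valid]
    constructor
    · rintro ⟨⟨h2, hn'⟩, ⟨-, hge, -⟩, h1'⟩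
      refine ⟨m - 1, ⟨⟨by omega, by omega⟩, ?_⟩, by omega⟩
      have hq := Nat.div_add_mod (m + r) p
      rw [h1'] at hq
      have hgep : p ≤ m + r := by omega
      have hq1 : 1 ≤ (m + r) / p := by
        rcases Nat.eq_zero_or_pos ((m + r) / p) with hz | hz
        · rw [hz] at hq; omega
        · omega
      have hmr : m - 1 + r = p * ((m+r)/p) := by omega
      rw [hmr, Nat.mul_mod_right]
    · rintro ⟨a, ⟨⟨ha1, han⟩, h0⟩, rfl⟩
      have hge : p ≤ a + r := Nat.le_of_dvd (by omega) (Nat.dvd_of_mod_eq_zero h0)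
      have hmod : (a + 1 + r) % p = 1 := by
        have he : a + 1 + r = (a + r) + 1 := by ring
        rw [he, Nat.add_mod, h0, zero_add, Nat.mod_mod_of_dvd _ dvd_rfl, h1p]
      exact ⟨⟨by omega, by omega⟩, ⟨by omega, by omega, Or.inr (by rw [hmod, h1p])⟩, hmod⟩
  rw [Finset.sum_filter, Finset.sum_congr rfl hsplit, Finset.sum_add_distrib,
    ← Finset.sum_filter, ← Finset.sum_filter, hA, hB,
    Finset.sum_image (by intro x _ y _ h; simp only at h; omega), Finset.sum_add_distrib]
  congr 1
  apply Finset.sum_subset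
  · intro x hx
    simp only [Finset.mem_filter, Finset.mem_Icc] at *
    exact ⟨⟨hx.1.1, by omega⟩, hx.2⟩
  · intro x hx hnx
    simp only [Finset.mem_filter, Finset.mem_Icc] at hx hnx
    have hxn : x = n := by omega
    subst hxn
    apply gc_zero hj
    have : x + 1 ≤ j * (x+1) := Nat.le_mul_of_pos_left _ (by omega)
    omega

lemma g_eq (p r n : ℕ) (pre : ℕ → Prop) [DecidablePred pre] :
    Nat.card {lam : n.Partition //
      ∃ j, pre j ∧ 2 ≤ lam.parts.count j ∧
        p - r ≤ lam.parts.count j ∧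
        ((lam.parts.count j + r) % p = 0 ∨ (lam.parts.count j + r) % p = 1 % p) ∧
        ∀ i, i ≠ j → lam.parts.count i ≤ 1}
    = ∑ j ∈ (Finset.Icc 1 n).filter pre,
        ∑ m ∈ (Finset.Icc 2 n).filter (fun m => valid p r m), gc j m n := by
  classical
  rw [Nat.card_eq_fintype_card, Fintype.card_subtype]
  have e1 : (Finset.univ.filter (fun lam : n.Partition =>
      ∃ j, pre j ∧ 2 ≤ lam.parts.count j ∧
        p - r ≤ lam.parts.count j ∧
        ((lam.parts.count j + r) % p = 0 ∨ (lam.parts.count j + r) % p = 1 % p) ∧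
        ∀ i, i ≠ j → lam.parts.count i ≤ 1))
      = ((Finset.Icc 1 n).filter pre).biUnion (fun j => Finset.univ.filter
          (fun l : n.Partition => valid p r (l.parts.count j) ∧
            ∀ i, i ≠ j → l.parts.count i ≤ 1)) := by
    ext l
    simp only [Finset.mem_filter, Finset.mem_univ, true_and, Finset.mem_biUnion,
      Finset.mem_Icc]
    simp only [valid]
    constructor
    · rintro ⟨j, hpre, h2, hge, hmod, hoth⟩
      have hmem : j ∈ l.parts := by rw [← Multiset.count_pos]; omega
      exact ⟨j, ⟨⟨l.parts_pos hmem, part_le l hmem⟩, hpre⟩, ⟨h2, hge, hmod⟩, hoth⟩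
    · rintro ⟨j, ⟨_, hpre⟩, ⟨h2, hge, hmod⟩, hoth⟩
      exact ⟨j, hpre, h2, hge, hmod, hoth⟩
  rw [e1, Finset.card_biUnion]
  · apply Finset.sum_congr rfl
    intro j hj
    have hj1 : 1 ≤ j := (Finset.mem_Icc.mp (Finset.mem_filter.mp hj).1).1
    have e2 : (Finset.univ.filter (fun l : n.Partition =>
        valid p r (l.parts.count j) ∧ ∀ i, i ≠ j → l.parts.count i ≤ 1))
        = ((Finset.Icc 2 n).filter (fun m => valid p r m)).biUnion
          (fun m => Finset.univ.filter (fun l : n.Partition =>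
            l.parts.count j = m ∧ ∀ i, i ≠ j → l.parts.count i ≤ 1)) := by
      ext l
      simp only [Finset.mem_filter, Finset.mem_univ, true_and, Finset.mem_biUnion,
        Finset.mem_Icc]
      constructor
      · rintro ⟨hv, hoth⟩
        have h2 := hv.1
        have h1 := count_mul_le l j
        have h3 : l.parts.count j ≤ j * l.parts.count j :=
          Nat.le_mul_of_pos_left _ (by omega)
        exact ⟨l.parts.count j, ⟨⟨h2, by omega⟩, hv⟩, rfl, hoth⟩
      · rintro ⟨m, ⟨-, hv⟩, hc, hoth⟩
        exact ⟨hc ▸ hv, hoth⟩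
    rw [e2, Finset.card_biUnion]
    · apply Finset.sum_congr rfl
      intro m _
      by_cases hjm : j * m ≤ n
      · rw [gc_eq hj1 hjm]
        exact key hj1 hjm _ (fun l => by simp)
      · rw [gc_zero hj1 (by omega)]
        rw [Finset.card_eq_zero, Finset.filter_eq_empty_iff]
        rintro l - ⟨hc, -⟩
        have := count_mul_le l j
        rw [hc] at this
        omega
    · intro m hm m' hm' hne
      simp only [Finset.disjoint_left, Finset.mem_filter, Finset.mem_univ, true_and]
      rintro l ⟨hc, -⟩ ⟨hc', -⟩
      exact hne (hc.symm.trans hc')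
  · intro j hj j' hj' hne
    simp only [Finset.disjoint_left, Finset.mem_filter, Finset.mem_univ, true_and]
    rintro l ⟨hv, hoth⟩ ⟨hv', hoth'⟩
    have h1 : l.parts.count j' ≤ 1 := hoth j' (fun h => hne h.symm)
    have h2 := hv'.1
    omega

lemma lhs_decomp (p r n : ℕ) : aModDistinct p r n
    = ∑ a ∈ (Finset.Icc 1 n).filter (fun a => (a + r) % p = 0), Cc a n := by
  have step : ∀ l ∈ Nat.Partition.distincts n,
      Multiset.card (l.parts.filter (fun x => (x + r) % p = 0))
      = ∑ a ∈ Finset.Icc 1 n, (if (a + r) % p = 0 ∧ a ∈ l.parts then 1 else 0) := by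
    intro l hl
    have hnd : l.parts.Nodup := (mem_distincts l).mp hl
    set m := l.parts.filter (fun x => (x + r) % p = 0) with hm
    have hsub : m.toFinset ⊆ Finset.Icc 1 n := by
      intro x hx
      have hx' := Multiset.mem_of_mem_filter (Multiset.mem_toFinset.mp hx)
      exact Finset.mem_Icc.mpr ⟨l.parts_pos hx', part_le l hx'⟩
    calc Multiset.card m = ∑ a ∈ m.toFinset, m.count a :=
          (Multiset.toFinset_sum_count_eq m).symm
      _ = ∑ a ∈ Finset.Icc 1 n, m.count a := by
          apply Finset.sum_subset hsub
          intro x _ hx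
          exact Multiset.count_eq_zero.mpr (fun h => hx (Multiset.mem_toFinset.mpr h))
      _ = ∑ a ∈ Finset.Icc 1 n, (if (a + r) % p = 0 ∧ a ∈ l.parts then 1 else 0) := by
          apply Finset.sum_congr rfl
          intro a _
          rw [hm, Multiset.count_filter]
          by_cases h1 : (a + r) % p = 0
          · rw [if_pos h1]
            by_cases h2 : a ∈ l.parts
            · rw [if_pos ⟨h1, h2⟩, Multiset.count_eq_one_of_mem hnd h2]
            · rw [if_neg (by rintro ⟨-, hh⟩; exact h2 hh),
                Multiset.count_eq_zero_of_notMem h2]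
          · rw [if_neg h1, if_neg (by rintro ⟨hh, -⟩; exact h1 hh)]
  rw [aModDistinct, Finset.sum_congr rfl step, Finset.sum_comm, Finset.sum_filter]
  apply Finset.sum_congr rfl
  intro a _
  by_cases h : (a + r) % p = 0
  · rw [if_pos h, Cc, Finset.card_filter]
    apply Finset.sum_congr rfl
    intro l _
    by_cases h2 : a ∈ l.parts
    · rw [if_pos ⟨h, h2⟩, if_pos h2]
    · rw [if_neg (by rintro ⟨-, hh⟩; exact h2 hh), if_neg h2]
  · rw [if_neg h]
    apply Finset.sum_eq_zero
    intro l _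
    rw [if_neg (by rintro ⟨hh, -⟩; exact h hh)]

end AModG

theorem aMod_eq_g (p r : ℕ) (hpr : r + 2 ≤ p) (n : ℕ) (hn : 1 ≤ n) :
    (aModDistinct p r n : ℤ) = (gOdd p r n : ℤ) - (gEven p r n : ℤ) := by
  classical
  have hO : (gOdd p r n : ℤ) = ∑ j ∈ Finset.Icc 1 n,
      (if Odd j then
        ∑ m ∈ (Finset.Icc 2 n).filter (fun m => AModG.valid p r m),
          (AModG.gc j m n : ℤ) else 0) := by
    rw [gOdd, AModG.g_eq p r n (fun j => Odd j)]
    push_cast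
    exact Finset.sum_filter _ _
  have hE : (gEven p r n : ℤ) = ∑ j ∈ Finset.Icc 1 n,
      (if Even j then
        ∑ m ∈ (Finset.Icc 2 n).filter (fun m => AModG.valid p r m),
          (AModG.gc j m n : ℤ) else 0) := by
    rw [gEven, AModG.g_eq p r n (fun j => Even j)]
    push_cast
    exact Finset.sum_filter _ _
  have hLHS : (aModDistinct p r n : ℤ) = ∑ j ∈ Finset.Icc 1 n,
      ∑ a ∈ (Finset.Icc 1 n).filter (fun a => (a + r) % p = 0),
        (if j * a ≤ n then (-1 : ℤ)^(j+1) * (AModG.D (n - j*a) : ℤ) else 0) := by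
    rw [AModG.lhs_decomp p r n, Nat.cast_sum]
    rw [Finset.sum_congr rfl (fun a ha =>
      AModG.Calt a (Finset.mem_Icc.mp (Finset.mem_filter.mp ha).1).1 n)]
    exact Finset.sum_comm
  rw [hLHS, hO, hE, ← Finset.sum_sub_distrib]
  apply Finset.sum_congr rfl
  intro j hj
  have hj1 : 1 ≤ j := (Finset.mem_Icc.mp hj).1
  have hXj : ∑ m ∈ (Finset.Icc 2 n).filter (fun m => AModG.valid p r m),
      (AModG.gc j m n : ℤ)
      = ∑ a ∈ (Finset.Icc 1 n).filter (fun a => (a + r) % p = 0),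
        (if j * a ≤ n then (AModG.D (n - j*a) : ℤ) else 0) := by
    rw [← Nat.cast_sum, AModG.msum hpr hj1]
    push_cast
    exact Finset.sum_congr rfl (fun a ha =>
      AModG.pair hj1 (Finset.mem_Icc.mp (Finset.mem_filter.mp ha).1).1)
  rcases Nat.even_or_odd j with hje | hjo
  · rw [if_neg (Nat.not_odd_iff_even.mpr hje), if_pos hje, zero_sub, hXj,
      ← Finset.sum_neg_distrib]
    refine Finset.sum_congr rfl (fun a ha => ?_)
    by_cases hc : j * a ≤ n
    · rw [if_pos hc, if_pos hc, Odd.neg_one_pow (hje.add_one), neg_one_mul]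
    · rw [if_neg hc, if_neg hc, neg_zero]
  · rw [if_pos hjo, if_neg (Nat.not_even_iff_odd.mpr hjo), sub_zero, hXj]
    refine Finset.sum_congr rfl (fun a ha => ?_)
    by_cases hc : j * a ≤ n
    · rw [if_pos hc, if_pos hc, Even.neg_one_pow (hjo.add_one), one_mul]
    · rw [if_neg hc, if_neg hc]
end

section
/- As formal power series in q, the generating function for the total number of parts congruent to −r modulo p in partitions into distinct parts satisfies ∑_{n≥0} a_r(n,p) q^n = (−q;q)_∞ · ∑_{n≥1} q^{pn−r}/(1 + q^{pn−r}), where p ≥ r + 2 are non-negative integers. -/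
open PowerSeries

/-- The infinite product `(-q;q)_∞ = ∏_{j ≥ 1} (1 + q^j)` as a formal power series:
its `n`-th coefficient agrees with that of any truncation past `n`. -/
noncomputable def negPochhammer : PowerSeries ℚ :=
  PowerSeries.mk fun n =>
    coeff n (∏ j ∈ Finset.Icc 1 n, (1 + (X : PowerSeries ℚ) ^ j))

/-- The series `∑_{n ≥ 1} q^{pn - r} / (1 + q^{pn - r})`: since the `n`-th summand has order
`pn - r ≥ n` (as `p ≥ r + 2`), the `N`-th coefficient agrees with that of the partial sum. -/
noncomputable def tailSum (p r : ℕ) : PowerSeries ℚ :=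
  PowerSeries.mk fun N =>
    coeff N (∑ n ∈ Finset.Icc 1 N,
      (X : PowerSeries ℚ) ^ (p * n - r) * (1 + (X : PowerSeries ℚ) ^ (p * n - r))⁻¹)

open Finset in
private def cnt (N m : ℕ) : ℕ :=
  (((Finset.Icc 1 N).powerset).filter fun t => m ∈ t ∧ ∑ j ∈ t, j = N).card

open Finset in
lemma card_erase_cnt (N m : ℕ) (hm : m ∈ Finset.Icc 1 N) :
    ((((Finset.Icc 1 N).erase m).powerset).filter fun t => ∑ j ∈ t, j = N - m).card
      = cnt N m := by
  rw [Finset.mem_Icc] at hm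
  refine Finset.card_bij' (fun t _ => insert m t) (fun t _ => t.erase m) ?hi ?hj ?li ?ri
  case hi =>
    intro t ht
    simp only [Finset.mem_filter, Finset.mem_powerset, cnt] at ht ⊢
    have hmt : m ∉ t := fun h => Finset.notMem_erase m _ (ht.1 h)
    refine ⟨?_, Finset.mem_insert_self _ _, ?_⟩
    · intro x hx
      rcases Finset.mem_insert.mp hx with rfl | hx
      · exact Finset.mem_Icc.mpr hm
      · exact Finset.erase_subset _ _ (ht.1 hx)
    · rw [Finset.sum_insert hmt, ht.2]; omega
  case hj =>
    intro t ht
    simp only [Finset.mem_filter, Finset.mem_powerset, cnt] at ht ⊢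
    refine ⟨Finset.erase_subset_erase m ht.1, ?_⟩
    have h2 : m + ∑ j ∈ t.erase m, j = ∑ j ∈ t, j :=
      Finset.add_sum_erase t (fun j => j) ht.2.1
    omega
  case li =>
    intro t ht
    simp only [Finset.mem_filter, Finset.mem_powerset] at ht
    exact Finset.erase_insert (fun h => Finset.notMem_erase m _ (ht.1 h))
  case ri =>
    intro t ht
    simp only [Finset.mem_filter, Finset.mem_powerset, cnt] at ht
    exact Finset.insert_erase ht.2.1


lemma prod_one_add (s : Finset ℕ) :
    ∏ j ∈ s, (1 + (X : PowerSeries ℚ) ^ j) =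
    ∑ t ∈ s.powerset, (X : PowerSeries ℚ) ^ (∑ j ∈ t, j) := by
  calc ∏ j ∈ s, (1 + (X : PowerSeries ℚ) ^ j)
      = ∏ j ∈ s, ((X : PowerSeries ℚ) ^ j + 1) := by simp [add_comm]
    _ = ∑ t ∈ s.powerset, (∏ j ∈ t, (X : PowerSeries ℚ) ^ j) * ∏ j ∈ s \ t, 1 :=
        Finset.prod_add _ _ _
    _ = ∑ t ∈ s.powerset, (X : PowerSeries ℚ) ^ (∑ j ∈ t, j) := by
        refine Finset.sum_congr rfl fun t _ => ?_
        simp [Finset.prod_pow_eq_pow_sum t (fun j => j) (X : PowerSeries ℚ)]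

lemma coeff_prod_one_add (s : Finset ℕ) (k : ℕ) :
    coeff k (∏ j ∈ s, (1 + (X : PowerSeries ℚ) ^ j)) =
    ((s.powerset.filter fun t => ∑ j ∈ t, j = k).card : ℚ) := by
  rw [prod_one_add, map_sum]
  simp only [coeff_X_pow]
  rw [Finset.sum_boole]
  norm_cast
  exact congrArg Finset.card (Finset.filter_congr (q := fun t => ∑ j ∈ t, j = k) fun t _ => eq_comm)

lemma filter_powerset_Icc (i n : ℕ) (hin : i ≤ n) :
    ((Finset.Icc 1 n).powerset.filter fun t => ∑ j ∈ t, j = i) =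
    ((Finset.Icc 1 i).powerset.filter fun t => ∑ j ∈ t, j = i) := by
  ext t
  simp only [Finset.mem_filter, Finset.mem_powerset]
  constructor
  · rintro ⟨hsub, hsum⟩
    refine ⟨fun j hj => ?_, hsum⟩
    have h1 := (hsub hj)
    rw [Finset.mem_Icc] at h1 ⊢
    refine ⟨h1.1, ?_⟩
    calc j ≤ ∑ j ∈ t, j := Finset.single_le_sum (f := fun j => j) (fun _ _ => Nat.zero_le _) hj
      _ = i := hsum
  · rintro ⟨hsub, hsum⟩
    exact ⟨hsub.trans (Finset.Icc_subset_Icc_right hin), hsum⟩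

lemma coeff_P_stable (i n m : ℕ) (hin : i ≤ n) (him : i ≤ m) :
    coeff i (∏ j ∈ Finset.Icc 1 n, (1 + (X : PowerSeries ℚ) ^ j)) =
    coeff i (∏ j ∈ Finset.Icc 1 m, (1 + (X : PowerSeries ℚ) ^ j)) := by
  rw [coeff_prod_one_add, coeff_prod_one_add, filter_powerset_Icc i n hin,
    filter_powerset_Icc i m him]

lemma key_ineq (p r n : ℕ) (hpr : r + 2 ≤ p) (hn : 1 ≤ n) : n + 1 + r ≤ p * n := by
  have h1 : (r + 2) * n ≤ p * n := Nat.mul_le_mul_right n hpr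
  have h2 : r ≤ r * n := Nat.le_mul_of_pos_right r hn
  have h3 : (r + 2) * n = r * n + 2 * n := by ring
  omega

lemma coeff_S_stable (p r : ℕ) (hpr : r + 2 ≤ p) (j N : ℕ) (hjN : j ≤ N) :
    coeff j (∑ n ∈ Finset.Icc 1 N,
      (X : PowerSeries ℚ) ^ (p * n - r) * (1 + (X : PowerSeries ℚ) ^ (p * n - r))⁻¹) =
    coeff j (∑ n ∈ Finset.Icc 1 j,
      (X : PowerSeries ℚ) ^ (p * n - r) * (1 + (X : PowerSeries ℚ) ^ (p * n - r))⁻¹) := by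
  have hsplit : ∑ n ∈ Finset.Icc 1 j,
        (X : PowerSeries ℚ) ^ (p * n - r) * (1 + (X : PowerSeries ℚ) ^ (p * n - r))⁻¹
      + ∑ n ∈ Finset.Ioc j N,
        (X : PowerSeries ℚ) ^ (p * n - r) * (1 + (X : PowerSeries ℚ) ^ (p * n - r))⁻¹
      = ∑ n ∈ Finset.Icc 1 N,
        (X : PowerSeries ℚ) ^ (p * n - r) * (1 + (X : PowerSeries ℚ) ^ (p * n - r))⁻¹ := by
    rw [show Finset.Icc 1 j = Finset.Ioc 0 j by rfl, show Finset.Icc 1 N = Finset.Ioc 0 N by rfl]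
    exact Finset.sum_Ioc_consecutive _ (Nat.zero_le j) hjN
  rw [← hsplit, map_add]
  have hz : ∀ n ∈ Finset.Ioc j N,
      coeff j ((X : PowerSeries ℚ) ^ (p * n - r) * (1 + (X : PowerSeries ℚ) ^ (p * n - r))⁻¹)
        = 0 := by
    intro n hn
    rw [Finset.mem_Ioc] at hn
    rw [coeff_X_pow_mul', if_neg]
    have := key_ineq p r n hpr (by omega)
    omega
  have hz' : coeff j (∑ n ∈ Finset.Ioc j N,
      (X : PowerSeries ℚ) ^ (p * n - r) * (1 + (X : PowerSeries ℚ) ^ (p * n - r))⁻¹) = 0 := by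
    rw [map_sum]; exact Finset.sum_eq_zero hz
  rw [hz', add_zero]

lemma constCoeff_one_add_X_pow (m : ℕ) (hm : 1 ≤ m) :
    constantCoeff (1 + (X : PowerSeries ℚ) ^ m) = 1 := by
  rw [map_add, constantCoeff_one]
  rw [← coeff_zero_eq_constantCoeff, coeff_X_pow, if_neg (by omega)]
  ring

lemma coeff_summand (p r N n : ℕ) (hpr : r + 2 ≤ p) (hn : 1 ≤ n) :
    coeff N (((X : PowerSeries ℚ) ^ (p * n - r) *
        (1 + (X : PowerSeries ℚ) ^ (p * n - r))⁻¹) *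
        ∏ j ∈ Finset.Icc 1 N, (1 + (X : PowerSeries ℚ) ^ j)) =
      if p * n - r ≤ N then ((cnt N (p * n - r) : ℚ)) else 0 := by
  set m := p * n - r with hmdef
  have hki := key_ineq p r n hpr hn
  have hm1 : 1 ≤ m := by omega
  rw [mul_assoc, coeff_X_pow_mul']
  by_cases hmN : m ≤ N
  · rw [if_pos hmN, if_pos hmN]
    have hmem : m ∈ Finset.Icc 1 N := Finset.mem_Icc.mpr ⟨hm1, hmN⟩
    rw [← Finset.mul_prod_erase _ _ hmem, ← mul_assoc,
      PowerSeries.inv_mul_cancel _ (by rw [constCoeff_one_add_X_pow m hm1]; norm_num),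
      one_mul, coeff_prod_one_add, card_erase_cnt N m hmem]
  · rw [if_neg hmN, if_neg hmN]

lemma rhs_coeff (p r N : ℕ) (hpr : r + 2 ≤ p) :
    coeff N (negPochhammer * tailSum p r) =
      ∑ n ∈ Finset.Icc 1 N, if p * n - r ≤ N then ((cnt N (p * n - r) : ℚ)) else 0 := by
  rw [coeff_mul]
  have hstep : ∀ ij ∈ Finset.HasAntidiagonal.antidiagonal N,
      coeff ij.1 negPochhammer * coeff ij.2 (tailSum p r)
        = coeff ij.1 (∏ j ∈ Finset.Icc 1 N, (1 + (X : PowerSeries ℚ) ^ j))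
          * coeff ij.2 (∑ n ∈ Finset.Icc 1 N,
              (X : PowerSeries ℚ) ^ (p * n - r) * (1 + (X : PowerSeries ℚ) ^ (p * n - r))⁻¹) := by
    intro ij hij
    rw [Finset.HasAntidiagonal.mem_antidiagonal] at hij
    rw [negPochhammer, tailSum, coeff_mk, coeff_mk,
      coeff_P_stable ij.1 ij.1 N le_rfl (by omega),
      coeff_S_stable p r hpr ij.2 N (by omega)]
  rw [Finset.sum_congr rfl hstep, ← coeff_mul, Finset.mul_sum, map_sum]
  apply Finset.sum_congr rfl
  intro n hn
  rw [Finset.mem_Icc] at hn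
  rw [mul_comm, coeff_summand p r N n hpr hn.1]

section LHS
variable (p r N : ℕ)

/-- Step A: sum over distinct partitions equals sum over subsets of `Icc 1 N` summing to `N`. -/
lemma stepA (P : ℕ → Prop) [DecidablePred P] :
    ∑ lam ∈ Nat.Partition.distincts N, (lam.parts.filter P).card
      = ∑ t ∈ ((Finset.Icc 1 N).powerset).filter (fun t => ∑ j ∈ t, j = N),
          (t.filter P).card := by
  refine Finset.sum_bij' (fun lam _ => lam.parts.toFinset)
    (fun t ht => ⟨t.val, ?_, ?_⟩) ?hi ?hj ?li ?ri ?h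
  · -- parts_pos
    intro x hx
    have h1 := (Finset.mem_filter.mp ht).1
    have h2 := Finset.mem_powerset.mp h1
    have h4 := h2 hx
    rw [Finset.mem_Icc] at h4
    omega
  · -- parts_sum
    have h3 := (Finset.mem_filter.mp ht).2
    rw [← h3, Finset.sum_val]
    rfl
  case hi =>
    intro lam hlam
    have hnd : lam.parts.Nodup := by
      simpa [Nat.Partition.distincts] using hlam
    simp only [Finset.mem_filter, Finset.mem_powerset]
    constructor
    · intro x hx
      rw [Multiset.mem_toFinset] at hx
      rw [Finset.mem_Icc]
      refine ⟨lam.parts_pos hx, ?_⟩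
      calc x ≤ lam.parts.sum := Multiset.le_sum_of_mem hx
        _ = N := lam.parts_sum
    · have : lam.parts.toFinset.val.sum = ∑ j ∈ lam.parts.toFinset, j := by
        rw [Finset.sum_val]; rfl
      rw [← this, Multiset.toFinset_val, Multiset.dedup_eq_self.mpr hnd, lam.parts_sum]
  case hj =>
    intro t ht
    simp [Nat.Partition.distincts, t.nodup]
  case li =>
    intro lam hlam
    have hnd : lam.parts.Nodup := by
      simpa [Nat.Partition.distincts] using hlam
    ext1
    simp [Multiset.toFinset_val, Multiset.dedup_eq_self.mpr hnd]
  case ri =>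
    intro t ht
    exact Finset.val_toFinset t
  case h =>
    intro lam hlam
    have hnd : lam.parts.Nodup := by
      simpa [Nat.Partition.distincts] using hlam
    rw [Finset.card_def, Finset.filter_val, Multiset.toFinset_val,
      Multiset.dedup_eq_self.mpr hnd]
end LHS

lemma stepB (N : ℕ) (P : ℕ → Prop) [DecidablePred P] :
    ∑ t ∈ ((Finset.Icc 1 N).powerset).filter (fun t => ∑ j ∈ t, j = N),
        (t.filter P).card
      = ∑ m ∈ (Finset.Icc 1 N).filter P,
          (((Finset.Icc 1 N).powerset).filter fun t => m ∈ t ∧ ∑ j ∈ t, j = N).card := by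
  set T := ((Finset.Icc 1 N).powerset).filter (fun t => ∑ j ∈ t, j = N) with hT
  have h1 : ∀ t ∈ T, (t.filter P).card
      = ∑ m ∈ Finset.Icc 1 N, if P m ∧ m ∈ t then 1 else 0 := by
    intro t ht
    rw [Finset.sum_boole]
    norm_cast
    congr 1
    ext m
    simp only [Finset.mem_filter]
    have hsub := Finset.mem_powerset.mp (Finset.mem_filter.mp ht).1
    constructor
    · rintro ⟨hmt, hPm⟩
      exact ⟨hsub hmt, hPm, hmt⟩
    · rintro ⟨_, hPm, hmt⟩
      exact ⟨hmt, hPm⟩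
  rw [Finset.sum_congr rfl h1, Finset.sum_comm]
  rw [← Finset.sum_filter_add_sum_filter_not (Finset.Icc 1 N) P]
  have h0 : ∑ m ∈ (Finset.Icc 1 N).filter (fun m => ¬ P m), (∑ t ∈ T, if P m ∧ m ∈ t then 1 else 0) = 0 := by
    apply Finset.sum_eq_zero
    intro m hm
    have := (Finset.mem_filter.mp hm).2
    apply Finset.sum_eq_zero
    intro t _
    simp [this]
  rw [h0, add_zero]
  apply Finset.sum_congr rfl
  intro m hm
  have hPm := (Finset.mem_filter.mp hm).2
  rw [Finset.sum_boole]
  norm_cast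
  rw [hT, Finset.filter_filter]
  congr 1
  apply Finset.filter_congr
  intro t _
  simp [hPm, and_comm]

lemma stepC (p r N : ℕ) (hpr : r + 2 ≤ p) :
    ∑ m ∈ (Finset.Icc 1 N).filter (fun m => (m + r) % p = 0), cnt N m
      = ∑ n ∈ Finset.Icc 1 N, if p * n - r ≤ N then cnt N (p * n - r) else 0 := by
  rw [← Finset.sum_filter]
  refine Finset.sum_nbij' (fun m => (m + r) / p) (fun n => p * n - r) ?hi ?hj ?li ?ri ?h
  case hi =>
    intro m hm
    simp only [Finset.mem_filter, Finset.mem_Icc] at hm ⊢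
    obtain ⟨⟨hm1, hmN⟩, hmod⟩ := hm
    have hdvd : p ∣ (m + r) := Nat.dvd_of_mod_eq_zero hmod
    have hd : p * ((m + r) / p) = m + r := Nat.mul_div_cancel' hdvd
    set n := (m + r) / p with hn
    have hn0 : n ≠ 0 := by rintro h; rw [h, Nat.mul_zero] at hd; omega
    have hnN : n ≤ N := by
      by_contra hc
      push_neg at hc
      have h5 : (r + 2) * (N + 1) ≤ p * n := Nat.mul_le_mul hpr hc
      have h6 : (r + 2) * (N + 1) = r * N + r + 2 * N + 2 := by ring
      omega
    refine ⟨⟨Nat.one_le_iff_ne_zero.mpr hn0, hnN⟩, by omega⟩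
  case hj =>
    intro n hn
    simp only [Finset.mem_filter, Finset.mem_Icc] at hn ⊢
    obtain ⟨⟨hn1, hnN⟩, hmN⟩ := hn
    have hki := key_ineq p r n hpr hn1
    refine ⟨⟨by omega, hmN⟩, ?_⟩
    have : p * n - r + r = p * n := by omega
    rw [this, Nat.mul_mod_right]
  case li =>
    intro m hm
    simp only [Finset.mem_filter, Finset.mem_Icc] at hm
    have hdvd : p ∣ (m + r) := Nat.dvd_of_mod_eq_zero hm.2
    have hd : p * ((m + r) / p) = m + r := Nat.mul_div_cancel' hdvd
    omega
  case ri =>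
    intro n hn
    simp only [Finset.mem_filter, Finset.mem_Icc] at hn
    have hki := key_ineq p r n hpr hn.1.1
    have : p * n - r + r = p * n := by omega
    rw [this, Nat.mul_div_cancel_left n (by omega : 0 < p)]
  case h =>
    intro m hm
    simp only [Finset.mem_filter, Finset.mem_Icc] at hm
    have hdvd : p ∣ (m + r) := Nat.dvd_of_mod_eq_zero hm.2
    have hd : p * ((m + r) / p) = m + r := Nat.mul_div_cancel' hdvd
    congr 1
    omega


lemma lhs_count (p r N : ℕ) (hpr : r + 2 ≤ p) :
    aModDistinct p r N
      = ∑ n ∈ Finset.Icc 1 N, if p * n - r ≤ N then cnt N (p * n - r) else 0 := by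
  rw [aModDistinct, stepA N (fun x => (x + r) % p = 0), stepB N (fun x => (x + r) % p = 0),
    ← stepC p r N hpr]
  rfl

theorem aMod_genFun (p r : ℕ) (hpr : r + 2 ≤ p) :
    PowerSeries.mk (fun n => (aModDistinct p r n : ℚ)) = negPochhammer * tailSum p r := by
  ext N
  rw [coeff_mk, rhs_coeff p r N hpr, lhs_count p r N hpr, Nat.cast_sum]
  apply Finset.sum_congr rfl
  intro n _
  split_ifs <;> simp
end

section
/- Let p ≥ 2 be an integer. For all n ≥ 0, a(n,p) ≡ o_p(n) (mod p), where a(n,p) is the total number of parts congruent to 0 modulo p counted over all partitions of n into parts appearing at most p − 1 times, and o_p(n) is the number of partitions of n in which the set of parts congruent to 0 modulo p is a singleton. -/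
/-- `a(n,p)`: total number of parts congruent to `0` modulo `p` in all partitions of `n`
into parts appearing at most `p - 1` times. -/
def aCnt (n p : ℕ) : ℕ :=
  ∑ lam ∈ Finset.univ.filter
      (fun lam : n.Partition => ∀ j ∈ lam.parts, lam.parts.count j ≤ p - 1),
    (lam.parts.filter (fun x => p ∣ x)).card

/-- `o_p(n)`: partitions of `n` in which the set of parts congruent to `0` modulo `p`
is a singleton. -/
noncomputable def oCnt (p n : ℕ) : ℕ :=
  Nat.card {lam : n.Partition //
    ∃ j, p ∣ j ∧ j ∈ lam.parts ∧ ∀ i ∈ lam.parts, p ∣ i → i = j}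


namespace AOP

open Finset

open scoped Classical in
/-- partitions of `n` in which `j` occurs exactly `r` times and every other occurring
part value `i` satisfies `C i (count i)`. -/
noncomputable def srt (C : ℕ → ℕ → Prop) (j r n : ℕ) : Finset (Nat.Partition n) :=
  univ.filter (fun lam => lam.parts.count j = r ∧
    ∀ i ∈ lam.parts, i ≠ j → C i (lam.parts.count i))

noncomputable def nf (C : ℕ → ℕ → Prop) (j r n : ℕ) : ℕ := (srt C j r n).card

theorem mem_srt {C : ℕ → ℕ → Prop} {j r n : ℕ} {lam : Nat.Partition n} :
    lam ∈ srt C j r n ↔ lam.parts.count j = r ∧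
      ∀ i ∈ lam.parts, i ≠ j → C i (lam.parts.count i) := by
  classical
  simp [srt]

theorem replicate_count_le {n : ℕ} (lam : Nat.Partition n) (j : ℕ) :
    Multiset.replicate (lam.parts.count j) j ≤ lam.parts :=
  Multiset.le_iff_count.2 (fun a => by
    rcases eq_or_ne a j with rfl | ha
    · simp
    · rw [Multiset.count_replicate, if_neg (fun h => ha h.symm)]
      exact Nat.zero_le _)

theorem count_mul_le {n : ℕ} (lam : Nat.Partition n) (j : ℕ) :
    lam.parts.count j * j ≤ n := by
  have h := replicate_count_le lam j
  obtain ⟨u, hu⟩ := Multiset.le_iff_exists_add.1 h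
  have : lam.parts.sum = (Multiset.replicate (lam.parts.count j) j).sum + u.sum := by
    rw [← Multiset.sum_add, ← hu]
  rw [lam.parts_sum, Multiset.sum_replicate, smul_eq_mul] at this
  omega

theorem srt_empty_of_not_le (C : ℕ → ℕ → Prop) {j r n : ℕ} (h : ¬ r * j ≤ n) :
    srt C j r n = ∅ := by
  ext lam
  simp only [mem_srt, Finset.notMem_empty, iff_false]
  rintro ⟨hc, -⟩
  exact h (hc ▸ count_mul_le lam j)

theorem master (C : ℕ → ℕ → Prop) {j r n : ℕ} (hj : 0 < j) (h : r * j ≤ n) :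
    nf C j r n = nf C j 0 (n - r * j) := by
  classical
  refine Finset.card_bij'
    (i := fun lam hlam =>
      ⟨lam.parts - Multiset.replicate r j,
        fun {i} hi => lam.parts_pos (Multiset.mem_of_le tsub_le_self hi),
        by
          have hrep : Multiset.replicate r j ≤ lam.parts := by
            have := (mem_srt.1 hlam).1
            simpa [this] using replicate_count_le lam j
          have hadd : lam.parts - Multiset.replicate r j + Multiset.replicate r j
              = lam.parts := tsub_add_cancel_of_le hrep
          have := congrArg Multiset.sum hadd
          rw [Multiset.sum_add, Multiset.sum_replicate, smul_eq_mul, lam.parts_sum] at this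
          omega⟩)
    (j := fun mu hmu =>
      ⟨mu.parts + Multiset.replicate r j,
        fun {i} hi => by
          rcases Multiset.mem_add.1 hi with h' | h'
          · exact mu.parts_pos h'
          · rwa [Multiset.eq_of_mem_replicate h'],
        by
          rw [Multiset.sum_add, Multiset.sum_replicate, smul_eq_mul, mu.parts_sum]
          omega⟩)
    ?_ ?_ ?_ ?_
  · intro lam hlam
    obtain ⟨hc, hC⟩ := mem_srt.1 hlam
    refine mem_srt.2 ⟨by simp [Multiset.count_sub, hc], ?_⟩
    intro i hi hij
    have hi' : i ∈ lam.parts := Multiset.mem_of_le tsub_le_self hi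
    have : Multiset.count i (lam.parts - Multiset.replicate r j)
        = Multiset.count i lam.parts := by
      rw [Multiset.count_sub, Multiset.count_replicate, if_neg (fun h => hij h.symm)]
      omega
    rw [this]
    exact hC i hi' hij
  · intro mu hmu
    obtain ⟨hc, hC⟩ := mem_srt.1 hmu
    refine mem_srt.2 ⟨by simp [Multiset.count_add, hc, Multiset.count_replicate], ?_⟩
    intro i hi hij
    have hi' : i ∈ mu.parts := by
      rcases Multiset.mem_add.1 hi with h' | h'
      · exact h'
      · exact absurd (Multiset.eq_of_mem_replicate h') hij
    have : Multiset.count i (mu.parts + Multiset.replicate r j)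
        = Multiset.count i mu.parts := by
      rw [Multiset.count_add, Multiset.count_replicate, if_neg (fun h => hij h.symm)]
      omega
    rw [this]
    exact hC i hi' hij
  · intro lam hlam
    apply Nat.Partition.ext
    have hrep : Multiset.replicate r j ≤ lam.parts := by
      have := (mem_srt.1 hlam).1
      simpa [this] using replicate_count_le lam j
    exact tsub_add_cancel_of_le hrep
  · intro mu hmu
    apply Nat.Partition.ext
    simp

def C1 (p : ℕ) : ℕ → ℕ → Prop := fun _ c => c ≤ p - 1
def C2 (p : ℕ) : ℕ → ℕ → Prop := fun i _ => ¬ p ∣ i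

open scoped Classical in
noncomputable def Rset (p n : ℕ) : Finset (Nat.Partition n) :=
  univ.filter (fun lam => ∀ j ∈ lam.parts, lam.parts.count j ≤ p - 1)
open scoped Classical in
noncomputable def Gset (p n : ℕ) : Finset (Nat.Partition n) :=
  univ.filter (fun lam => ∀ j ∈ lam.parts, ¬ p ∣ j)
noncomputable def Rc (p n : ℕ) : ℕ := (Rset p n).card
noncomputable def Gc (p n : ℕ) : ℕ := (Gset p n).card

theorem mem_Rset {p n : ℕ} {lam : Nat.Partition n} :
    lam ∈ Rset p n ↔ ∀ j ∈ lam.parts, lam.parts.count j ≤ p - 1 := by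
  classical
  simp [Rset]

theorem mem_Gset {p n : ℕ} {lam : Nat.Partition n} :
    lam ∈ Gset p n ↔ ∀ j ∈ lam.parts, ¬ p ∣ j := by
  classical
  simp [Gset]

theorem part_le {n : ℕ} (lam : Nat.Partition n) {i : ℕ} (hi : i ∈ lam.parts) : i ≤ n := by
  obtain ⟨t, ht⟩ := Multiset.exists_cons_of_mem hi
  have h := lam.parts_sum
  rw [ht, Multiset.sum_cons] at h
  omega


theorem card_eq_sum_count_range {s : Multiset ℕ} {N : ℕ} (h : ∀ x ∈ s, x < N) :
    Multiset.card s = ∑ j ∈ range N, s.count j := by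
  classical
  rw [← Multiset.toFinset_sum_count_eq]
  apply Finset.sum_subset
  · intro x hx
    exact Finset.mem_range.2 (h x (Multiset.mem_toFinset.1 hx))
  · intro x _ hx
    exact Multiset.count_eq_zero_of_notMem (fun h' => hx (Multiset.mem_toFinset.2 h'))

/-- fibers of `Rset` by the count of `j` are the `srt` sets -/
theorem Rset_fiber {p n j m : ℕ} (hm : m ≤ p - 1) :
    {lam ∈ Rset p n | lam.parts.count j = m} = srt (C1 p) j m n := by
  classical
  ext lam
  simp only [Finset.mem_filter, mem_Rset, mem_srt]
  constructor
  · rintro ⟨hR, hc⟩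
    exact ⟨hc, fun i hi _ => hR i hi⟩
  · rintro ⟨hc, hC⟩
    refine ⟨fun i hi => ?_, hc⟩
    rcases eq_or_ne i j with rfl | hij
    · omega
    · exact hC i hi hij

theorem Rc_decomp {p n j : ℕ} (hp : 1 ≤ p) :
    Rc p n = ∑ m ∈ range p, nf (C1 p) j m n := by
  classical
  rw [Rc, Finset.card_eq_sum_card_fiberwise
    (f := fun lam : Nat.Partition n => lam.parts.count j) (t := range p) ?_]
  · apply Finset.sum_congr rfl
    intro m hm
    rw [Rset_fiber (by have := Finset.mem_range.1 hm; omega), nf]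
  · intro lam hl
    show lam.parts.count j ∈ range p
    by_cases hmem : j ∈ lam.parts
    · have := mem_Rset.1 hl j hmem
      exact Finset.mem_range.2 (by omega)
    · rw [Multiset.count_eq_zero_of_notMem hmem]
      exact Finset.mem_range.2 (by omega)

/-- total count of part `j` over restricted partitions as a weighted sum of `nf`s -/
theorem sum_count_Rset {p n j : ℕ} (hp : 1 ≤ p) :
    ∑ lam ∈ Rset p n, lam.parts.count j = ∑ m ∈ range p, m * nf (C1 p) j m n := by
  classical
  rw [← Finset.sum_fiberwise_of_maps_to
    (g := fun lam : Nat.Partition n => lam.parts.count j) (t := range p) ?_]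
  · apply Finset.sum_congr rfl
    intro m hm
    have : ∀ lam ∈ {lam ∈ Rset p n | lam.parts.count j = m}, lam.parts.count j = m :=
      fun lam hl => (Finset.mem_filter.1 hl).2
    rw [Finset.sum_congr rfl this, Finset.sum_const, smul_eq_mul,
      Rset_fiber (by have := Finset.mem_range.1 hm; omega), nf, mul_comm]
  · intro lam hl
    show lam.parts.count j ∈ range p
    by_cases hmem : j ∈ lam.parts
    · have := mem_Rset.1 hl j hmem
      exact Finset.mem_range.2 (by omega)
    · rw [Multiset.count_eq_zero_of_notMem hmem]
      exact Finset.mem_range.2 (by omega)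

theorem aCnt_eq (p n : ℕ) (hp : 1 ≤ p) :
    aCnt n p = ∑ j ∈ range (n+1),
      if p ∣ j then ∑ m ∈ range p, m * nf (C1 p) j m n else 0 := by
  classical
  have h1 : aCnt n p = ∑ lam ∈ Rset p n, Multiset.card (lam.parts.filter (p ∣ ·)) := by
    rw [aCnt, Rset]
  rw [h1]
  have h2 : ∀ lam ∈ Rset p n, Multiset.card (lam.parts.filter (p ∣ ·))
      = ∑ j ∈ range (n+1), if p ∣ j then lam.parts.count j else 0 := by
    intro lam _
    rw [card_eq_sum_count_range (N := n+1) ?_]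
    · apply Finset.sum_congr rfl
      intro j _
      rw [Multiset.count_filter]
    · intro x hx
      have := part_le lam (Multiset.mem_of_le (Multiset.filter_le _ _) hx)
      omega
  rw [Finset.sum_congr rfl h2, Finset.sum_comm]
  apply Finset.sum_congr rfl
  intro j _
  split_ifs with h
  · exact sum_count_Rset hp
  · exact Finset.sum_const_zero

theorem filter_eq_replicate {p j : ℕ} (hpj : p ∣ j) {s : Multiset ℕ}
    [DecidablePred (p ∣ ·)] (h : ∀ i ∈ s, p ∣ i → i = j) :
    s.filter (p ∣ ·) = Multiset.replicate (s.count j) j := by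
  classical
  ext a
  rw [Multiset.count_filter, Multiset.count_replicate]
  rcases eq_or_ne a j with rfl | ha
  · rw [if_pos hpj, if_pos rfl]
  · rw [if_neg (show ¬ j = a from fun h' => ha h'.symm)]
    split_ifs with hd
    · by_cases hm : a ∈ s
      · exact absurd (h a hm hd) ha
      · exact Multiset.count_eq_zero_of_notMem hm
    · rfl

theorem sup_replicate {r j : ℕ} (hr : 0 < r) : (Multiset.replicate r j).sup = j := by
  induction r with
  | zero => omega
  | succ r ih =>
    rw [Multiset.replicate_succ, Multiset.sup_cons]
    rcases Nat.eq_zero_or_pos r with rfl | hr'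
    · simp
    · rw [ih hr']
      exact sup_idem j

open scoped Classical in
noncomputable def Oset (p n : ℕ) : Finset (Nat.Partition n) :=
  univ.filter (fun lam =>
    ∃ j, p ∣ j ∧ j ∈ lam.parts ∧ ∀ i ∈ lam.parts, p ∣ i → i = j)

theorem mem_Oset {p n : ℕ} {lam : Nat.Partition n} :
    lam ∈ Oset p n ↔
      ∃ j, p ∣ j ∧ j ∈ lam.parts ∧ ∀ i ∈ lam.parts, p ∣ i → i = j := by
  classical
  simp [Oset]

theorem oCnt_eq_card (p n : ℕ) : oCnt p n = (Oset p n).card := by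
  classical
  rw [oCnt, Nat.card_eq_fintype_card, Fintype.card_subtype, Oset]

open scoped Classical in
noncomputable def fpr (p : ℕ) {n : ℕ} (lam : Nat.Partition n) : ℕ × ℕ :=
  ((lam.parts.filter (p ∣ ·)).sup, lam.parts.count ((lam.parts.filter (p ∣ ·)).sup))

noncomputable def Aidx (p n : ℕ) : Finset (ℕ × ℕ) :=
  ((range (n+1)) ×ˢ (range (n+1))).filter (fun q => p ∣ q.1 ∧ 0 < q.1 ∧ 0 < q.2)

theorem fpr_eq {p n j : ℕ} {lam : Nat.Partition n} (hpj : p ∣ j) (hj : j ∈ lam.parts)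
    (h : ∀ i ∈ lam.parts, p ∣ i → i = j) : fpr p lam = (j, lam.parts.count j) := by
  classical
  have h1 : lam.parts.filter (p ∣ ·) = Multiset.replicate (lam.parts.count j) j :=
    filter_eq_replicate hpj h
  have hc : 0 < lam.parts.count j := Multiset.count_pos.2 hj
  have h2 : (lam.parts.filter (p ∣ ·)).sup = j := by rw [h1]; exact sup_replicate hc
  rw [fpr]
  congr 1 <;> rw [h2]

theorem Oset_fiber {p n j r : ℕ} (hpj : p ∣ j) (hr : 0 < r) :
    {lam ∈ Oset p n | fpr p lam = (j, r)} = srt (C2 p) j r n := by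
  classical
  ext lam
  simp only [Finset.mem_filter, mem_Oset, mem_srt]
  constructor
  · rintro ⟨⟨j0, hpj0, hj0, h0⟩, hf⟩
    rw [fpr_eq hpj0 hj0 h0] at hf
    simp only [Prod.mk.injEq] at hf
    obtain ⟨rfl, rfl⟩ := hf
    exact ⟨rfl, fun i hi hij => fun hd => hij (h0 i hi hd)⟩
  · rintro ⟨hc, hC⟩
    have hj : j ∈ lam.parts := Multiset.count_pos.1 (hc ▸ hr)
    have h0 : ∀ i ∈ lam.parts, p ∣ i → i = j := by
      intro i hi hd
      by_contra hij
      exact hC i hi hij hd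
    refine ⟨⟨j, hpj, hj, h0⟩, ?_⟩
    rw [fpr_eq hpj hj h0, hc]

theorem oCnt_eq (p n : ℕ) :
    oCnt p n = ∑ q ∈ Aidx p n, nf (C2 p) q.1 q.2 n := by
  classical
  rw [oCnt_eq_card, Finset.card_eq_sum_card_fiberwise
    (f := fpr p) (t := Aidx p n) ?_]
  · apply Finset.sum_congr rfl
    intro q hq
    obtain ⟨-, hd, h1, h2⟩ := Finset.mem_filter.1 hq
    have := Oset_fiber (n := n) hd h2
    rw [show (q.1, q.2) = q from rfl] at this
    rw [nf, ← this]
  · intro lam hl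
    obtain ⟨j, hpj, hj, h0⟩ := mem_Oset.1 hl
    rw [fpr_eq hpj hj h0]
    have hjpos : 0 < j := lam.parts_pos hj
    have hcpos : 0 < lam.parts.count j := Multiset.count_pos.2 hj
    have hle := count_mul_le lam j
    refine Finset.mem_filter.2 ⟨Finset.mem_product.2 ⟨?_, ?_⟩, hpj, hjpos, hcpos⟩
    · exact Finset.mem_range.2 (by nlinarith [part_le lam hj])
    · exact Finset.mem_range.2 (by nlinarith)


open PowerSeries
open scoped Classical

universe u
variable {α : Type*} {ι : Type u}

/-- A convenience constructor for the power series whose coefficients indicate a subset. -/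
noncomputable def indicatorSeries (α : Type*) [Semiring α] (s : Set ℕ) : PowerSeries α :=
  PowerSeries.mk fun n => if n ∈ s then 1 else 0

theorem coeff_indicator (s : Set ℕ) [Semiring α] (n : ℕ) :
    coeff n (indicatorSeries α s) = if n ∈ s then 1 else 0 :=
  coeff_mk _ _

theorem coeff_indicator_pos (s : Set ℕ) [Semiring α] (n : ℕ) (h : n ∈ s) :
    coeff n (indicatorSeries α s) = 1 := by rw [coeff_indicator, if_pos h]

theorem coeff_indicator_neg (s : Set ℕ) [Semiring α] (n : ℕ) (h : n ∉ s) :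
    coeff n (indicatorSeries α s) = 0 := by rw [coeff_indicator, if_neg h]

theorem constantCoeff_indicator (s : Set ℕ) [Semiring α] :
    constantCoeff (indicatorSeries α s) = if 0 ∈ s then 1 else 0 :=
  rfl

theorem two_series (i : ℕ) [Semiring α] :
    1 + (X : PowerSeries α) ^ i.succ = indicatorSeries α {0, i.succ} := by
  ext n
  simp only [coeff_indicator, coeff_one, coeff_X_pow, Set.mem_insert_iff, Set.mem_singleton_iff,
    map_add]
  cases' n with d
  · simp [(Nat.succ_ne_zero i).symm]
  · simp [Nat.succ_ne_zero d]

theorem num_series' [Field α] (i : ℕ) :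
    (1 - (X : PowerSeries α) ^ (i + 1))⁻¹ = indicatorSeries α {k | i + 1 ∣ k} := by
  rw [PowerSeries.inv_eq_iff_mul_eq_one]
  · ext n
    cases n with
    | zero => simp [mul_sub, zero_pow, constantCoeff_indicator]
    | succ n =>
      simp only [coeff_one, if_false, mul_sub, mul_one, coeff_indicator,
        LinearMap.map_sub, reduceCtorEq]
      simp_rw [coeff_mul, coeff_X_pow, coeff_indicator, @boole_mul _ _ _ _]
      erw [@sum_ite _ _ _ _ (fun x : ℕ × ℕ => x.1 ∈ {k | i + 1 ∣ k}) (fun _ => Classical.propDecidable _), sum_ite]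
      simp_rw [@filter_filter _ _ _ _ _, sum_const_zero, add_zero, sum_const, nsmul_eq_mul, mul_one,
        sub_eq_iff_eq_add, zero_add]
      symm
      split_ifs with h
      · suffices #{a ∈ antidiagonal (n + 1) | i + 1 ∣ a.fst ∧ a.snd = i + 1} = 1 by
          simp only [Set.mem_setOf_eq]; convert congr_arg ((↑) : ℕ → α) this; norm_cast
        rw [card_eq_one]
        cases' h with p hp
        refine ⟨((i + 1) * (p - 1), i + 1), ?_⟩
        ext ⟨a₁, a₂⟩
        simp only [mem_filter, Prod.mk_inj, HasAntidiagonal.mem_antidiagonal, mem_singleton]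
        constructor
        · rintro ⟨a_left, ⟨a, rfl⟩, rfl⟩
          refine ⟨?_, rfl⟩
          rw [Nat.mul_sub_left_distrib, ← hp, ← a_left, mul_one, Nat.add_sub_cancel]
        · rintro ⟨rfl, rfl⟩
          match p with
          | 0 => rw [mul_zero] at hp; cases hp
          | p + 1 => rw [hp]; simp [mul_add]
      · suffices #{a ∈ antidiagonal (n + 1) | i + 1 ∣ a.fst ∧ a.snd = i + 1} = 0 by
          simp only [Set.mem_setOf_eq]; convert congr_arg ((↑) : ℕ → α) this; norm_cast
        rw [card_eq_zero]
        apply eq_empty_of_forall_notMem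
        simp only [Prod.forall, mem_filter, not_and, HasAntidiagonal.mem_antidiagonal]
        rintro _ h₁ h₂ ⟨a, rfl⟩ rfl
        apply h
        simp [← h₂]
  · simp [zero_pow]

def mkOdd : ℕ ↪ ℕ :=
  ⟨fun i => 2 * i + 1, fun x y h => by linarith⟩

-- The main workhorse of the partition theorem proof.
theorem partialGF_prop (α : Type*) [CommSemiring α] (n : ℕ) (s : Finset ℕ) (hs : ∀ i ∈ s, 0 < i)
    (c : ℕ → Set ℕ) (hc : ∀ i, i ∉ s → 0 ∈ c i) :
    #{p : n.Partition | (∀ j, p.parts.count j ∈ c j) ∧ ∀ j ∈ p.parts, j ∈ s} =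
      coeff n (∏ i ∈ s, indicatorSeries α ((· * i) '' c i)) := by
  simp_rw [coeff_prod, coeff_indicator, prod_boole, sum_boole]
  apply congr_arg
  simp only [mem_univ, forall_true_left, not_and, not_forall, exists_prop,
    Set.mem_image, not_exists]
  set φ : (a : Nat.Partition n) →
    a ∈ filter (fun p ↦ (∀ (j : ℕ), Multiset.count j p.parts ∈ c j) ∧ ∀ j ∈ p.parts, j ∈ s) univ →
    ℕ →₀ ℕ := fun p _ => {
      toFun := fun i => Multiset.count i p.parts • i
      support := Finset.filter (fun i => i ≠ 0) p.parts.toFinset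
      mem_support_toFun := fun a => by
        simp only [smul_eq_mul, ne_eq, mul_eq_zero, Multiset.count_eq_zero]
        rw [not_or, not_not]
        simp only [Multiset.mem_toFinset, not_not, mem_filter] }
  refine Finset.card_bij φ ?_ ?_ ?_
  · intro a ha
    simp only [φ, not_forall, not_exists, not_and, exists_prop, mem_filter]
    rw [mem_finsuppAntidiag]
    dsimp only [ne_eq, smul_eq_mul, id_eq, eq_mpr_eq_cast, le_eq_subset, Finsupp.coe_mk]
    simp only [mem_univ, forall_true_left, not_and, not_forall, exists_prop,
      mem_filter, true_and] at ha
    refine ⟨⟨?_, fun i ↦ ?_⟩, fun i _ ↦ ⟨a.parts.count i, ha.1 i, rfl⟩⟩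
    · conv_rhs => simp [← a.parts_sum]
      rw [sum_multiset_count_of_subset _ s]
      · simp only [smul_eq_mul]
      · intro i
        simp only [Multiset.mem_toFinset, not_not, mem_filter]
        apply ha.2
    · simp only [ne_eq, Multiset.mem_toFinset, not_not, mem_filter, and_imp]
      exact fun hi _ ↦ ha.2 i hi
  · intro p₁ hp₁ p₂ hp₂ h
    apply Nat.Partition.ext
    simp only [true_and, mem_univ, mem_filter] at hp₁ hp₂
    ext i
    simp only [φ, ne_eq, Multiset.mem_toFinset, not_not, smul_eq_mul, Finsupp.mk.injEq] at h
    by_cases hi : i = 0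
    · rw [hi]
      rw [Multiset.count_eq_zero_of_notMem]
      · rw [Multiset.count_eq_zero_of_notMem]
        intro a; exact Nat.lt_irrefl 0 (hs 0 (hp₂.2 0 a))
      intro a; exact Nat.lt_irrefl 0 (hs 0 (hp₁.2 0 a))
    · rw [← mul_left_inj' hi]
      rw [funext_iff] at h
      exact h.2 i
  · simp only [φ, mem_filter, mem_finsuppAntidiag, mem_univ, exists_prop, true_and, and_assoc]
    rintro f ⟨hf, hf₃, hf₄⟩
    have hf' : f ∈ finsuppAntidiag s n := mem_finsuppAntidiag.mpr ⟨hf, hf₃⟩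
    simp only [mem_finsuppAntidiag] at hf'
    refine ⟨⟨∑ i ∈ s, Multiset.replicate (f i / i) i, ?_, ?_⟩, ?_, ?_, ?_⟩
    · intro i hi
      simp only [exists_prop, Multiset.mem_sum, mem_map, Function.Embedding.coeFn_mk] at hi
      rcases hi with ⟨t, ht, z⟩
      apply hs
      rwa [Multiset.eq_of_mem_replicate z]
    · simp_rw [Multiset.sum_sum, Multiset.sum_replicate, Nat.nsmul_eq_mul]
      rw [← hf'.1]
      refine sum_congr rfl fun i hi => Nat.div_mul_cancel ?_
      rcases hf₄ i hi with ⟨w, _, hw₂⟩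
      rw [← hw₂]
      exact dvd_mul_left _ _
    · intro i
      simp_rw [Multiset.count_sum', Multiset.count_replicate, sum_ite_eq']
      split_ifs with h
      · rcases hf₄ i h with ⟨w, hw₁, hw₂⟩
        rwa [← hw₂, Nat.mul_div_cancel _ (hs i h)]
      · exact hc _ h
    · intro i hi
      rw [Multiset.mem_sum] at hi
      rcases hi with ⟨j, hj₁, hj₂⟩
      rwa [Multiset.eq_of_mem_replicate hj₂]
    · ext i
      simp_rw [Multiset.count_sum', Multiset.count_replicate, sum_ite_eq']
      simp only [ne_eq, Multiset.mem_toFinset, not_not, smul_eq_mul, ite_mul,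
        zero_mul, Finsupp.coe_mk]
      split_ifs with h
      · apply Nat.div_mul_cancel
        rcases hf₄ i h with ⟨w, _, hw₂⟩
        apply Dvd.intro_left _ hw₂
      · apply symm
        rw [← Finsupp.notMem_support_iff]
        exact notMem_mono hf'.2 h

section Glaisher

variable {p : ℕ}

theorem indicator_mul_image_Iio {i : ℕ} (hi : 0 < i) (hp : 0 < p) :
    indicatorSeries ℚ ((· * i) '' Set.Iio p) = ∑ m ∈ range p, (X : PowerSeries ℚ) ^ (m * i) := by
  ext k
  rw [coeff_indicator]
  simp only [map_sum, coeff_X_pow]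
  by_cases h : ∃ m < p, m * i = k
  · obtain ⟨m0, hm0, hk⟩ := h
    rw [if_pos ⟨m0, hm0, hk⟩]
    have : ∀ m ∈ range p, (if k = m * i then (1 : ℚ) else 0) = if m = m0 then 1 else 0 := by
      intro m _
      rw [← hk]
      by_cases hmm : m = m0
      · rw [if_pos (by rw [hmm]), if_pos hmm]
      · rw [if_neg, if_neg hmm]
        intro h'
        exact hmm (Nat.eq_of_mul_eq_mul_right hi h'.symm)
    rw [Finset.sum_congr rfl this, Finset.sum_ite_eq' (range p) m0 (fun _ => (1:ℚ))]
    rw [if_pos (Finset.mem_range.2 hm0)]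
  · rw [if_neg (by simpa using h)]
    symm
    apply Finset.sum_eq_zero
    intro m hm
    rw [if_neg]
    intro hk
    exact h ⟨m, Finset.mem_range.1 hm, hk.symm⟩

theorem indicator_mul_image_univ {i : ℕ} (hi : 0 < i) :
    indicatorSeries ℚ ((· * i) '' Set.univ) = (1 - (X : PowerSeries ℚ) ^ i)⁻¹ := by
  obtain ⟨i, rfl⟩ : ∃ i', i = i' + 1 := ⟨i - 1, by omega⟩
  rw [num_series']
  have hset : ((· * (i + 1)) '' Set.univ) = {k | i + 1 ∣ k} := by
    ext k
    constructor
    · rintro ⟨m, -, rfl⟩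
      exact Dvd.intro_left m rfl
    · rintro ⟨c, rfl⟩
      exact ⟨c, Set.mem_univ c, mul_comm _ _⟩
  rw [hset]

theorem indicator_zero_set (i : ℕ) :
    indicatorSeries ℚ ((· * i) '' ({0} : Set ℕ)) = 1 := by
  have : ((· * i) '' ({0} : Set ℕ)) = {0} := by
    ext k; simp
  rw [this]
  ext k
  rw [coeff_indicator]
  simp [PowerSeries.coeff_one]

theorem dvd_prod_sub_one {R : Type*} [CommRing R] {d : R} {s : Finset ℕ}
    {f : ℕ → R} (h : ∀ i ∈ s, d ∣ f i - 1) : d ∣ (∏ i ∈ s, f i) - 1 := by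
  classical
  induction s using Finset.induction_on with
  | empty => simp
  | @insert a s' hx ih =>
    rw [Finset.prod_insert hx]
    have h1 : d ∣ f a - 1 := h a (Finset.mem_insert_self a s')
    have h2 : d ∣ (∏ i ∈ s', f i) - 1 := ih (fun i hi => h i (Finset.mem_insert_of_mem hi))
    have : f a * (∏ i ∈ s', f i) - 1
        = f a * ((∏ i ∈ s', f i) - 1) + (f a - 1) := by ring
    rw [this]
    exact dvd_add (Dvd.dvd.mul_left h2 _) h1

theorem Rc_eq_Gc (hp : 2 ≤ p) (n : ℕ) : Rc p n = Gc p n := by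
  classical
  have hp0 : 0 < p := by omega
  set s : Finset ℕ := Finset.Icc 1 n with hs
  have hs1 : ∀ i ∈ s, 0 < i := fun i hi => (Finset.mem_Icc.1 hi).1
  have hparts : ∀ (lam : Nat.Partition n), ∀ j ∈ lam.parts, j ∈ s := fun lam j hj =>
    Finset.mem_Icc.2 ⟨lam.parts_pos hj, part_le lam hj⟩
  -- R side
  have hR : (Rc p n : ℚ) = coeff n (∏ i ∈ s, ∑ m ∈ range p, (X : PowerSeries ℚ) ^ (m * i)) := by
    have h1 := partialGF_prop ℚ n s hs1 (fun _ => Set.Iio p) (fun i _ => hp0)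
    have h2 : Finset.filter (fun lam : Nat.Partition n =>
        (∀ j, lam.parts.count j ∈ (fun _ => Set.Iio p) j) ∧ ∀ j ∈ lam.parts, j ∈ s)
        Finset.univ = Rset p n := by
      ext lam
      simp only [Finset.mem_filter, Finset.mem_univ, true_and, mem_Rset, Set.mem_Iio]
      constructor
      · rintro ⟨h, -⟩ j hj
        have := h j
        omega
      · intro h
        refine ⟨fun j => ?_, hparts lam⟩
        by_cases hj : j ∈ lam.parts
        · have := h j hj; omega
        · rw [Multiset.count_eq_zero_of_notMem hj]; omega
    rw [h2] at h1
    rw [Rc, h1]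
    apply congrArg
    apply Finset.prod_congr rfl
    intro i hi
    exact indicator_mul_image_Iio (hs1 i hi) hp0
  -- G side
  set t : Finset ℕ := s.filter (fun i => ¬ p ∣ i) with ht
  have hG : (Gc p n : ℚ) = coeff n (∏ i ∈ t, (1 - (X : PowerSeries ℚ) ^ i)⁻¹) := by
    have h1 := partialGF_prop ℚ n s hs1
      (fun i => if p ∣ i then ({0} : Set ℕ) else Set.univ)
      (fun i _ => by
        by_cases h : p ∣ i
        · simp [h]
        · simp [h])
    have h2 : Finset.filter (fun lam : Nat.Partition n =>
        (∀ j, lam.parts.count j ∈ (fun i => if p ∣ i then ({0} : Set ℕ) else Set.univ) j)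
          ∧ ∀ j ∈ lam.parts, j ∈ s)
        Finset.univ = Gset p n := by
      ext lam
      simp only [Finset.mem_filter, Finset.mem_univ, true_and, mem_Gset]
      constructor
      · rintro ⟨h, -⟩ j hj hd
        have h' := h j
        rw [if_pos hd] at h'
        have hz : lam.parts.count j = 0 := by simpa using h'
        have := Multiset.count_pos.2 hj
        omega
      · intro h
        refine ⟨fun j => ?_, hparts lam⟩
        split_ifs with hd
        · by_cases hj : j ∈ lam.parts
          · exact absurd hd (h j hj)
          · simp [Multiset.count_eq_zero_of_notMem hj]
        · trivial
    rw [h2] at h1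
    have hprod : (∏ i ∈ s, indicatorSeries ℚ
        ((fun x => x * i) '' (fun i => if p ∣ i then ({0} : Set ℕ) else Set.univ) i))
        = ∏ i ∈ t, (1 - (X : PowerSeries ℚ) ^ i)⁻¹ := by
      rw [ht, Finset.prod_filter]
      apply Finset.prod_congr rfl
      intro i hi
      show indicatorSeries ℚ ((fun x => x * i) '' (if p ∣ i then ({0} : Set ℕ) else Set.univ))
        = if ¬ p ∣ i then (1 - (X : PowerSeries ℚ) ^ i)⁻¹ else 1
      by_cases hd : p ∣ i
      · rw [if_pos hd, if_neg (not_not_intro hd), indicator_zero_set]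
      · rw [if_neg hd, if_pos hd, indicator_mul_image_univ (hs1 i hi)]
    rw [Gc, h1, hprod]
  -- algebra
  have hconst : ∀ i, 0 < i → constantCoeff (1 - (X : PowerSeries ℚ) ^ i) = 1 := by
    intro i hi
    rw [map_sub, map_one, map_pow, constantCoeff_X, zero_pow (by omega), sub_zero]
  have hnz : ∀ i ∈ s, (1 - (X : PowerSeries ℚ) ^ i) ≠ 0 := by
    intro i hi h0
    have h1 := hconst i (hs1 i hi)
    rw [h0, map_zero] at h1
    exact one_ne_zero h1.symm
  set U : PowerSeries ℚ := ∏ i ∈ s, (1 - X ^ i) with hU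
  have hUnz : U ≠ 0 := Finset.prod_ne_zero_iff.2 hnz
  set u : Finset ℕ := s.filter (fun i => p ∣ i) with hu
  set E : PowerSeries ℚ := ∏ i ∈ s \ Finset.Icc 1 (n / p), (1 - X ^ (p * i)) with hE
  have claim1 : (∏ i ∈ s, ∑ m ∈ range p, (X : PowerSeries ℚ) ^ (m * i)) * U
      = ∏ i ∈ s, (1 - X ^ (p * i)) := by
    rw [hU, ← Finset.prod_mul_distrib]
    apply Finset.prod_congr rfl
    intro i hi
    have hg := geom_sum_mul ((X : PowerSeries ℚ) ^ i) p
    have h' : ∑ m ∈ range p, (X : PowerSeries ℚ) ^ (m * i)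
        = ∑ m ∈ range p, ((X : PowerSeries ℚ) ^ i) ^ m := by
      apply Finset.sum_congr rfl
      intro m _
      rw [← pow_mul, mul_comm]
    rw [h']
    calc (∑ m ∈ range p, ((X : PowerSeries ℚ) ^ i) ^ m) * (1 - X ^ i)
        = -((∑ m ∈ range p, ((X : PowerSeries ℚ) ^ i) ^ m) * ((X ^ i) - 1)) := by ring
      _ = -(((X : PowerSeries ℚ) ^ i) ^ p - 1) := by rw [hg]
      _ = 1 - X ^ (p * i) := by rw [← pow_mul, mul_comm i p]; ring
  have hsplit : (∏ i ∈ u, (1 - (X : PowerSeries ℚ) ^ i)) * (∏ i ∈ t, (1 - X ^ i)) = U :=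
    Finset.prod_filter_mul_prod_filter_not s _ _
  have claim2 : (∏ i ∈ t, (1 - (X : PowerSeries ℚ) ^ i)⁻¹) * U
      = ∏ i ∈ u, (1 - X ^ i) := by
    rw [← hsplit, show (∏ i ∈ t, (1 - (X : PowerSeries ℚ) ^ i)⁻¹) *
        ((∏ i ∈ u, (1 - X ^ i)) * (∏ i ∈ t, (1 - X ^ i)))
        = (∏ i ∈ u, (1 - X ^ i)) *
          ((∏ i ∈ t, ((1 - X ^ i)⁻¹ * (1 - X ^ i)))) from by
          rw [Finset.prod_mul_distrib]; ring]
    rw [Finset.prod_congr rfl (fun i hi => PowerSeries.inv_mul_cancel _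
        (by rw [hconst i (hs1 i (Finset.mem_filter.1 hi).1)]; exact one_ne_zero)),
      Finset.prod_const_one, mul_one]
  have claim3 : u = (Finset.Icc 1 (n / p)).image (fun k => p * k) := by
    ext i
    simp only [hu, Finset.mem_filter, Finset.mem_Icc, Finset.mem_image, hs]
    constructor
    · rintro ⟨hi, c, rfl⟩
      have h1 := hi.1
      have h2 := hi.2
      have hc1 : 1 ≤ c := by
        rcases Nat.eq_zero_or_pos c with rfl | h
        · rw [mul_zero] at h1; omega
        · omega
      exact ⟨c, ⟨hc1, (Nat.le_div_iff_mul_le hp0).2 (by rw [mul_comm]; exact h2)⟩, rfl⟩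
    · rintro ⟨k, ⟨hk1, hk2⟩, rfl⟩
      have hkp := (Nat.le_div_iff_mul_le hp0).1 hk2
      refine ⟨⟨Nat.one_le_iff_ne_zero.2 (by positivity), by rw [mul_comm]; exact hkp⟩, ⟨k, rfl⟩⟩
  have claim3' : ∏ i ∈ u, (1 - (X : PowerSeries ℚ) ^ i)
      = ∏ k ∈ Finset.Icc 1 (n / p), (1 - X ^ (p * k)) := by
    rw [claim3, Finset.prod_image]
    intro k1 _ k2 _ h
    exact Nat.eq_of_mul_eq_mul_left hp0 h
  have hsub : Finset.Icc 1 (n / p) ⊆ s := by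
    intro k hk
    obtain ⟨h1, h2⟩ := Finset.mem_Icc.1 hk
    exact Finset.mem_Icc.2 ⟨h1, le_trans h2 (Nat.div_le_self n p)⟩
  have claim4 : ∏ i ∈ s, (1 - (X : PowerSeries ℚ) ^ (p * i))
      = E * ∏ k ∈ Finset.Icc 1 (n / p), (1 - X ^ (p * k)) := by
    rw [hE, Finset.prod_sdiff hsub]
  have claim5 : (X : PowerSeries ℚ) ^ (n + 1) ∣ E - 1 := by
    apply dvd_prod_sub_one
    intro i hi
    obtain ⟨his, hnot⟩ := Finset.mem_sdiff.1 hi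
    have h1 : 1 ≤ i := hs1 i his
    have h2 : n / p < i := by
      by_contra h'
      exact hnot (Finset.mem_Icc.2 ⟨h1, by omega⟩)
    have h3 : n < i * p := (Nat.div_lt_iff_lt_mul hp0).1 h2
    have : (1 - (X : PowerSeries ℚ) ^ (p * i)) - 1 = -(X ^ (p * i)) := by ring
    rw [this]
    exact (dvd_neg).2 (pow_dvd_pow X (by rw [mul_comm p i]; omega))
  have claim6 : ∀ B : PowerSeries ℚ, coeff n (B * E) = coeff n B := by
    intro B
    have hdvd : (X : PowerSeries ℚ) ^ (n + 1) ∣ B * E - B := by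
      rw [show B * E - B = (E - 1) * B from by ring]
      exact Dvd.dvd.mul_right claim5 B
    have h0 := (PowerSeries.X_pow_dvd_iff.1 hdvd) n (by omega)
    rw [map_sub] at h0
    linarith [h0]
  have hmain : (∏ i ∈ s, ∑ m ∈ range p, (X : PowerSeries ℚ) ^ (m * i))
      = (∏ i ∈ t, (1 - X ^ i)⁻¹) * E := by
    apply mul_right_cancel₀ hUnz
    rw [claim1, claim4, ← claim3', ← claim2]
    ring
  have : (Rc p n : ℚ) = (Gc p n : ℚ) := by
    rw [hR, hG, hmain, mul_comm (∏ i ∈ t, (1 - (X : PowerSeries ℚ) ^ i)⁻¹) E,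
      show E * (∏ i ∈ t, (1 - (X : PowerSeries ℚ) ^ i)⁻¹)
        = (∏ i ∈ t, (1 - (X : PowerSeries ℚ) ^ i)⁻¹) * E from by ring, claim6]
  exact_mod_cast this

end Glaisher

section Final

variable {p : ℕ}

/-- guard form of `nf` -/
theorem nf_guard (C : ℕ → ℕ → Prop) {j : ℕ} (hj : 0 < j) (r n : ℕ) :
    nf C j r n = if r * j ≤ n then nf C j 0 (n - r * j) else 0 := by
  split_ifs with h
  · exact master C hj h
  · rw [nf, srt_empty_of_not_le C h, Finset.card_empty]

theorem nf_shift (C : ℕ → ℕ → Prop) {j n : ℕ} (hj : 0 < j) (hjn : j ≤ n) (m : ℕ) :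
    nf C j m (n - j) = nf C j (m + 1) n := by
  rw [nf_guard C hj m (n - j), nf_guard C hj (m + 1) n]
  have hmul : (m + 1) * j = m * j + j := by ring
  rw [hmul]
  by_cases h : m * j ≤ n - j
  · rw [if_pos h, if_pos (by omega)]
    congr 1
    omega
  · rw [if_neg h, if_neg (by omega)]

theorem nf_j0 {C : ℕ → ℕ → Prop} {m n : ℕ} (hm : 0 < m) : nf C 0 m n = 0 := by
  rw [nf, Finset.card_eq_zero]
  ext lam
  simp only [mem_srt, Finset.notMem_empty, iff_false]
  rintro ⟨hc, -⟩
  have : (0 : ℕ) ∉ lam.parts := fun h => lt_irrefl 0 (lam.parts_pos h)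
  rw [Multiset.count_eq_zero_of_notMem this] at hc
  omega

theorem nfC2_eq_Gc {j : ℕ} (hpj : p ∣ j) (m : ℕ) : nf (C2 p) j 0 m = Gc p m := by
  rw [nf, Gc]
  congr 1
  ext lam
  rw [mem_srt, mem_Gset]
  constructor
  · rintro ⟨hc, hC⟩ i hi
    rcases eq_or_ne i j with rfl | hij
    · have := Multiset.count_pos.2 hi
      omega
    · exact hC i hi hij
  · intro h
    constructor
    · rw [Multiset.count_eq_zero]
      intro hj
      exact h j hj hpj
    · intro i hi _
      exact h i hi

/-- the `a`-side local sum, in `ZMod p` -/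
noncomputable def lsum (p j n : ℕ) : ZMod p :=
  ∑ m ∈ range p, (m : ZMod p) * (nf (C1 p) j m n : ZMod p)

/-- the `o`-side local sum, in `ZMod p` -/
noncomputable def osum (p j N n : ℕ) : ZMod p :=
  ∑ r ∈ range N, if 0 < r ∧ r * j ≤ n then (Gc p (n - r * j) : ZMod p) else 0

theorem osum_ext {j : ℕ} (hj : 0 < j) {N N' n : ℕ} (hN : n + 1 ≤ N) (hNN : N ≤ N') :
    osum p j N' n = osum p j N n := by
  rw [osum, osum]
  symm
  apply Finset.sum_subset
  · intro r hr
    exact Finset.mem_range.2 (lt_of_lt_of_le (Finset.mem_range.1 hr) hNN)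
  · intro r _ hr
    rw [if_neg]
    rintro ⟨hr0, hrj⟩
    have h1 : n + 1 ≤ r := le_trans hN (Nat.not_lt.1 (fun h => hr (Finset.mem_range.2 h)))
    have h2 : r ≤ r * j := Nat.le_mul_of_pos_right r hj
    omega

theorem osum_rec {j n : ℕ} (hj : 0 < j) (hjn : j ≤ n) :
    osum p j (n + 2) n = (Gc p (n - j) : ZMod p) + osum p j (n + 1) (n - j) := by
  rw [osum, Finset.sum_range_succ']
  have h0 : (if 0 < 0 ∧ 0 * j ≤ n then (Gc p (n - 0 * j) : ZMod p) else 0) = 0 := by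
    rw [if_neg]; rintro ⟨h, -⟩; omega
  rw [h0, add_zero]
  have hterm : ∀ r ∈ range (n + 1),
      (if 0 < r + 1 ∧ (r + 1) * j ≤ n then (Gc p (n - (r + 1) * j) : ZMod p) else 0)
      = (if r = 0 then (Gc p (n - j) : ZMod p) else 0)
        + (if 0 < r ∧ r * j ≤ n - j then (Gc p (n - j - r * j) : ZMod p) else 0) := by
    intro r _
    rcases Nat.eq_zero_or_pos r with rfl | hr
    · rw [show (0 + 1) * j = j from by ring, if_pos ⟨by omega, hjn⟩, if_pos rfl,
        if_neg (fun h => absurd h.1 (lt_irrefl 0)), add_zero]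
    · have hmul : (r + 1) * j = r * j + j := by ring
      rw [if_neg (show ¬ r = 0 from by omega), zero_add, hmul]
      by_cases h : r * j ≤ n - j
      · have h' : r * j + j ≤ n := by omega
        rw [if_pos ⟨by omega, h'⟩, if_pos ⟨hr, h⟩,
          show n - (r * j + j) = n - j - r * j from by omega]
      · have h2 : ¬ (0 < r + 1 ∧ r * j + j ≤ n) := by
          rintro ⟨-, h'⟩
          exact h (by omega)
        have h3 : ¬ (0 < r ∧ r * j ≤ n - j) := by
          rintro ⟨-, h'⟩
          exact h h'
        rw [if_neg h2, if_neg h3]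
  rw [Finset.sum_congr rfl hterm, Finset.sum_add_distrib,
    Finset.sum_ite_eq' (range (n + 1)) 0 (fun _ => (Gc p (n - j) : ZMod p)),
    if_pos (Finset.mem_range.2 (by omega))]
  rfl

theorem lsum_rec (hp : 2 ≤ p) {j n : ℕ} (hj : 0 < j) (hjn : j ≤ n) :
    lsum p j n = lsum p j (n - j) + (Rc p (n - j) : ZMod p) := by
  have hdec : (Rc p (n - j) : ZMod p)
      = ∑ m ∈ range p, (nf (C1 p) j (m + 1) n : ZMod p) := by
    rw [Rc_decomp (n := n - j) (j := j) (by omega), Nat.cast_sum]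
    apply Finset.sum_congr rfl
    intro m _
    rw [nf_shift (C1 p) hj hjn m]
  have hls : lsum p j (n - j) = ∑ m ∈ range p, (m : ZMod p) * (nf (C1 p) j (m + 1) n : ZMod p) := by
    rw [lsum]
    apply Finset.sum_congr rfl
    intro m _
    rw [nf_shift (C1 p) hj hjn m]
  rw [hls, hdec, ← Finset.sum_add_distrib]
  have hsum : ∀ m ∈ range p,
      (m : ZMod p) * (nf (C1 p) j (m + 1) n : ZMod p) + (nf (C1 p) j (m + 1) n : ZMod p)
      = ((m + 1 : ℕ) : ZMod p) * (nf (C1 p) j (m + 1) n : ZMod p) := by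
    intro m _
    push_cast
    ring
  rw [Finset.sum_congr rfl hsum]
  have h1 : ∑ m ∈ range p, ((m + 1 : ℕ) : ZMod p) * (nf (C1 p) j (m + 1) n : ZMod p)
      = ∑ k ∈ range (p + 1), (k : ZMod p) * (nf (C1 p) j k n : ZMod p) := by
    rw [Finset.sum_range_succ' (fun k => (k : ZMod p) * (nf (C1 p) j k n : ZMod p)) p]
    simp
  rw [h1, Finset.sum_range_succ, ZMod.natCast_self, zero_mul, add_zero, lsum]

/-- the key congruence, by strong induction -/
theorem keyj (hp : 2 ≤ p) {j : ℕ} (hpj : p ∣ j) (hj : 0 < j) :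
    ∀ n, lsum p j n = osum p j (n + 1) n := by
  intro n
  induction n using Nat.strong_induction_on with
  | _ n ih =>
    by_cases hjn : j ≤ n
    · have hlt : n - j < n := by omega
      have step1 := lsum_rec hp hj hjn (n := n)
      have step2 : osum p j (n + 1) n = (Gc p (n - j) : ZMod p) + osum p j (n + 1) (n - j) := by
        rw [← osum_ext hj (le_refl (n + 1)) (by omega : n + 1 ≤ n + 2)]
        exact osum_rec hj hjn
      have step3 : osum p j (n + 1) (n - j) = osum p j (n - j + 1) (n - j) :=
        osum_ext hj (by omega) (by omega)
      rw [step1, ih (n - j) hlt, step2, step3, Rc_eq_Gc hp, add_comm]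
    · have hL : lsum p j n = 0 := by
        rw [lsum]
        apply Finset.sum_eq_zero
        intro m hm
        rcases Nat.eq_zero_or_pos m with rfl | hm0
        · rw [Nat.cast_zero, zero_mul]
        · have : ¬ m * j ≤ n := by
            have : j ≤ m * j := Nat.le_mul_of_pos_left j hm0
            omega
          rw [nf_guard (C1 p) hj, if_neg this, Nat.cast_zero, mul_zero]
      have hR : osum p j (n + 1) n = 0 := by
        rw [osum]
        apply Finset.sum_eq_zero
        intro r _
        rw [if_neg]
        rintro ⟨hr0, hrj⟩
        have : j ≤ r * j := Nat.le_mul_of_pos_left j hr0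
        omega
      rw [hL, hR]

theorem aCnt_cast (hp : 2 ≤ p) (n : ℕ) :
    (aCnt n p : ZMod p) = ∑ j ∈ range (n + 1),
      if p ∣ j ∧ 0 < j then lsum p j n else 0 := by
  rw [aCnt_eq p n (by omega), Nat.cast_sum]
  apply Finset.sum_congr rfl
  intro j _
  rcases Nat.eq_zero_or_pos j with rfl | hj
  · rw [if_neg (show ¬ (p ∣ 0 ∧ 0 < 0) from fun h => lt_irrefl 0 h.2)]
    by_cases h : p ∣ 0
    · have h0 : ∑ m ∈ range p, m * nf (C1 p) 0 m n = 0 := by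
        apply Finset.sum_eq_zero
        intro m _
        rcases Nat.eq_zero_or_pos m with rfl | hm
        · rw [zero_mul]
        · rw [nf_j0 hm, mul_zero]
      rw [if_pos h, h0, Nat.cast_zero]
    · rw [if_neg h, Nat.cast_zero]
  · by_cases h : p ∣ j
    · rw [if_pos h, if_pos ⟨h, hj⟩, Nat.cast_sum, lsum]
      apply Finset.sum_congr rfl
      intro m _
      rw [Nat.cast_mul]
    · rw [if_neg h, if_neg (fun hh => h hh.1), Nat.cast_zero]

theorem oCnt_cast (hp : 2 ≤ p) (n : ℕ) :
    (oCnt p n : ZMod p) = ∑ j ∈ range (n + 1),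
      if p ∣ j ∧ 0 < j then osum p j (n + 1) n else 0 := by
  rw [oCnt_eq p n, Nat.cast_sum, Aidx, Finset.sum_filter, Finset.sum_product]
  apply Finset.sum_congr rfl
  intro j _
  by_cases h1 : p ∣ j ∧ 0 < j
  · rw [if_pos h1, osum]
    apply Finset.sum_congr rfl
    intro r _
    by_cases h2 : 0 < r
    · rw [if_pos ⟨h1.1, h1.2, h2⟩, nf_guard (C2 p) h1.2]
      by_cases h3 : r * j ≤ n
      · rw [if_pos h3, if_pos ⟨h2, h3⟩, nfC2_eq_Gc h1.1]
      · rw [if_neg h3, if_neg (fun h => h3 h.2), Nat.cast_zero]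
    · rw [if_neg (fun h => h2 h.2.2), if_neg (fun h => h2 h.1)]
  · rw [if_neg h1]
    apply Finset.sum_eq_zero
    intro r _
    rw [if_neg (fun h => h1 ⟨h.1, h.2.1⟩)]

end Final

end AOP

theorem aCnt_modEq_oCnt (p : ℕ) (hp : 2 ≤ p) (n : ℕ) :
    aCnt n p ≡ oCnt p n [MOD p] := by
  rw [← ZMod.natCast_eq_natCast_iff]
  rw [AOP.aCnt_cast hp n, AOP.oCnt_cast hp n]
  apply Finset.sum_congr rfl
  intro j _
  split_ifs with h
  · exact AOP.keyj hp h.1 h.2 n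
  · rfl
end

section
/- Let p ≥ 2. For all n ≥ 0, the number of partitions of n in which the set of parts divisible by p is a singleton and the number of parts divisible by p is odd equals the number of partitions of n into parts either not divisible by p, or congruent to p modulo 2p, such that the set of parts congruent to p modulo 2p is a singleton. -/
/-- `o_{p,o}(n)`: partitions of `n` whose set of parts divisible by `p` is a singleton and
in which the number of parts divisible by `p` (counted with multiplicity) is odd. -/
noncomputable def oPO (p n : ℕ) : ℕ :=
  Nat.card {lam : n.Partition //
    (∃ j, p ∣ j ∧ j ∈ lam.parts ∧ ∀ i ∈ lam.parts, p ∣ i → i = j) ∧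
      Odd (lam.parts.filter (fun i => p ∣ i)).card}

/-- `h_p(n,p)`: partitions of `n` into parts either not divisible by `p` or congruent to
`p` modulo `2p`, in which the set of parts congruent to `p` modulo `2p` is a singleton. -/
noncomputable def hP (p n : ℕ) : ℕ :=
  Nat.card {lam : n.Partition //
    (∀ j ∈ lam.parts, ¬ p ∣ j ∨ j % (2 * p) = p) ∧
      ∃ j, j % (2 * p) = p ∧ j ∈ lam.parts ∧ ∀ i ∈ lam.parts, i % (2 * p) = p → i = j}

open Multiset

namespace OPOHP

/-- The left-hand predicate. -/
def PL (p n : ℕ) (lam : n.Partition) : Prop :=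
  (∃ j, p ∣ j ∧ j ∈ lam.parts ∧ ∀ i ∈ lam.parts, p ∣ i → i = j) ∧
    Odd (lam.parts.filter (fun i => p ∣ i)).card

/-- The right-hand predicate. -/
def PR (p n : ℕ) (lam : n.Partition) : Prop :=
  (∀ j ∈ lam.parts, ¬ p ∣ j ∨ j % (2 * p) = p) ∧
    ∃ j, j % (2 * p) = p ∧ j ∈ lam.parts ∧ ∀ i ∈ lam.parts, i % (2 * p) = p → i = j

lemma dvd_of_mod_eq {p i : ℕ} (hi : i % (2 * p) = p) : p ∣ i := by
  have h : i % (2 * p) % p = i % p := Nat.mod_mod_of_dvd i ⟨2, by ring⟩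
  rw [hi, Nat.mod_self] at h
  exact Nat.dvd_of_mod_eq_zero h.symm

lemma mod_eq_of_odd {p q : ℕ} (hp : 0 < p) (hq : Odd q) : (p * q) % (2 * p) = p := by
  obtain ⟨t, ht⟩ := hq
  have h : p * q = p + 2 * p * t := by rw [ht]; ring
  rw [h, Nat.add_mul_mod_self_left, Nat.mod_eq_of_lt (by omega)]

lemma odd_ordCompl {m : ℕ} (hm : m ≠ 0) : Odd (ordCompl[2] m) := by
  have h := Nat.not_dvd_ordCompl Nat.prime_two hm
  rcases Nat.even_or_odd (ordCompl[2] m) with h' | h'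
  · exact absurd h'.two_dvd h
  · exact h'

lemma fact_two_pow_mul {a c : ℕ} (hc : Odd c) : (2 ^ a * c).factorization 2 = a := by
  have hc0 : c ≠ 0 := by rintro rfl; simp [Nat.odd_iff] at hc
  have hnd : ¬ (2 ∣ c) := Nat.two_dvd_ne_zero.mpr (Nat.odd_iff.mp hc)
  rw [Nat.factorization_mul (pow_ne_zero _ two_ne_zero) hc0]
  simp [Nat.factorization_pow, Nat.prime_two.factorization, Nat.factorization_eq_zero_of_not_dvd hnd]

lemma ordCompl_two_pow_mul {a c : ℕ} (hc : Odd c) : ordCompl[2] (2 ^ a * c) = c := by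
  rw [fact_two_pow_mul hc, Nat.mul_div_cancel_left _ (pow_pos two_pos a)]

section maps

variable (p n : ℕ)

/-! ### The forward map -/

noncomputable def jL (x : {lam : n.Partition // PL p n lam}) : ℕ := x.2.1.choose

lemma jL_spec (x : {lam : n.Partition // PL p n lam}) :
    p ∣ jL p n x ∧ jL p n x ∈ x.1.parts ∧
      ∀ i ∈ x.1.parts, p ∣ i → i = jL p n x := x.2.1.choose_spec

noncomputable def mL (x : {lam : n.Partition // PL p n lam}) : ℕ := jL p n x / p

noncomputable def cL (x : {lam : n.Partition // PL p n lam}) : ℕ :=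
  (x.1.parts.filter (fun i => p ∣ i)).card

lemma cL_odd (x : {lam : n.Partition // PL p n lam}) : Odd (cL p n x) := x.2.2

lemma filter_eq_replicate_L (x : {lam : n.Partition // PL p n lam}) :
    x.1.parts.filter (fun i => p ∣ i) = replicate (cL p n x) (jL p n x) :=
  eq_replicate_card.mpr fun b hb =>
    (jL_spec p n x).2.2 b ((mem_filter.mp hb).1) ((mem_filter.mp hb).2)

lemma mL_pos (hp : 2 ≤ p) (x : {lam : n.Partition // PL p n lam}) : 0 < mL p n x :=
  Nat.div_pos (Nat.le_of_dvd (x.1.parts_pos (jL_spec p n x).2.1) (jL_spec p n x).1)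
    (by omega)

lemma mul_mL (x : {lam : n.Partition // PL p n lam}) : p * mL p n x = jL p n x :=
  Nat.mul_div_cancel' (jL_spec p n x).1

noncomputable def F (hp : 2 ≤ p) (x : {lam : n.Partition // PL p n lam}) : n.Partition where
  parts := x.1.parts.filter (fun i => ¬ p ∣ i) +
    replicate (2 ^ (mL p n x).factorization 2 * cL p n x) (p * ordCompl[2] (mL p n x))
  parts_pos := by
    intro i hi
    rcases mem_add.mp hi with h | h
    · exact x.1.parts_pos ((mem_filter.mp h).1)
    · rw [eq_of_mem_replicate h]
      exact Nat.mul_pos (by omega) (Nat.ordCompl_pos 2 (mL_pos p n hp x).ne')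
  parts_sum := by
    have hm0 : mL p n x ≠ 0 := (mL_pos p n hp x).ne'
    have h2 : 2 ^ (mL p n x).factorization 2 * ordCompl[2] (mL p n x) = mL p n x :=
      Nat.ordProj_mul_ordCompl_eq_self _ 2
    have h1 : (x.1.parts.filter (fun i => p ∣ i)).sum +
        (x.1.parts.filter (fun i => ¬ p ∣ i)).sum = n := by
      rw [← Multiset.sum_add, Multiset.filter_add_not, x.1.parts_sum]
    rw [filter_eq_replicate_L, Multiset.sum_replicate, smul_eq_mul] at h1
    rw [Multiset.sum_add, Multiset.sum_replicate, smul_eq_mul]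
    have h3 : 2 ^ (mL p n x).factorization 2 * cL p n x * (p * ordCompl[2] (mL p n x)) =
        cL p n x * jL p n x := by
      calc 2 ^ (mL p n x).factorization 2 * cL p n x * (p * ordCompl[2] (mL p n x))
          = cL p n x * (p * (2 ^ (mL p n x).factorization 2 * ordCompl[2] (mL p n x))) := by ring
        _ = cL p n x * jL p n x := by rw [h2, mul_mL]
    omega

lemma F_parts (hp : 2 ≤ p) (x : {lam : n.Partition // PL p n lam}) :
    (F p n hp x).parts = x.1.parts.filter (fun i => ¬ p ∣ i) +
      replicate (2 ^ (mL p n x).factorization 2 * cL p n x) (p * ordCompl[2] (mL p n x)) :=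
  rfl

lemma F_mem (hp : 2 ≤ p) (x : {lam : n.Partition // PL p n lam}) : PR p n (F p n hp x) := by
  have hm0 : mL p n x ≠ 0 := (mL_pos p n hp x).ne'
  have hqodd : Odd (ordCompl[2] (mL p n x)) := odd_ordCompl hm0
  have hc0 : cL p n x ≠ 0 := (cL_odd p n x).pos.ne'
  have hmod : (p * ordCompl[2] (mL p n x)) % (2 * p) = p := mod_eq_of_odd (by omega) hqodd
  constructor
  · intro j hj
    rcases mem_add.mp ((F_parts p n hp x) ▸ hj) with h | h
    · exact Or.inl ((mem_filter.mp h).2)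
    · rw [eq_of_mem_replicate h]
      exact Or.inr hmod
  · refine ⟨p * ordCompl[2] (mL p n x), hmod, ?_, ?_⟩
    · rw [F_parts]
      exact mem_add.mpr (Or.inr (mem_replicate.mpr
        ⟨by positivity, rfl⟩))
    · intro i hi hipr
      rcases mem_add.mp ((F_parts p n hp x) ▸ hi) with h | h
      · exact absurd (dvd_of_mod_eq hipr) ((mem_filter.mp h).2)
      · exact eq_of_mem_replicate h

/-! ### The backward map -/

noncomputable def jR (x : {lam : n.Partition // PR p n lam}) : ℕ := x.2.2.choose

lemma jR_spec (x : {lam : n.Partition // PR p n lam}) :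
    jR p n x % (2 * p) = p ∧ jR p n x ∈ x.1.parts ∧
      ∀ i ∈ x.1.parts, i % (2 * p) = p → i = jR p n x := x.2.2.choose_spec

noncomputable def qR (x : {lam : n.Partition // PR p n lam}) : ℕ := jR p n x / p

noncomputable def rR (x : {lam : n.Partition // PR p n lam}) : ℕ :=
  (x.1.parts.filter (fun i => i % (2 * p) = p)).card

lemma filter_eq_replicate_R (x : {lam : n.Partition // PR p n lam}) :
    x.1.parts.filter (fun i => i % (2 * p) = p) = replicate (rR p n x) (jR p n x) :=
  eq_replicate_card.mpr fun b hb =>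
    (jR_spec p n x).2.2 b ((mem_filter.mp hb).1) ((mem_filter.mp hb).2)

lemma mul_qR (x : {lam : n.Partition // PR p n lam}) : p * qR p n x = jR p n x :=
  Nat.mul_div_cancel' (dvd_of_mod_eq (jR_spec p n x).1)

lemma qR_odd (hp : 2 ≤ p) (x : {lam : n.Partition // PR p n lam}) : Odd (qR p n x) := by
  rcases Nat.even_or_odd (qR p n x) with h | h
  · exfalso
    obtain ⟨t, ht⟩ := h
    have hj : jR p n x = 2 * p * t := by rw [← mul_qR p n x, ht]; ring
    have := (jR_spec p n x).1
    rw [hj, Nat.mul_mod_right] at this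
    omega
  · exact h

lemma rR_pos (x : {lam : n.Partition // PR p n lam}) : 0 < rR p n x := by
  have : jR p n x ∈ x.1.parts.filter (fun i => i % (2 * p) = p) :=
    mem_filter.mpr ⟨(jR_spec p n x).2.1, (jR_spec p n x).1⟩
  exact card_pos.mpr fun h => by simp [h] at this

noncomputable def G (hp : 2 ≤ p) (x : {lam : n.Partition // PR p n lam}) : n.Partition where
  parts := x.1.parts.filter (fun i => ¬ i % (2 * p) = p) +
    replicate (ordCompl[2] (rR p n x)) (p * (2 ^ (rR p n x).factorization 2 * qR p n x))
  parts_pos := by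
    intro i hi
    rcases mem_add.mp hi with h | h
    · exact x.1.parts_pos ((mem_filter.mp h).1)
    · rw [eq_of_mem_replicate h]
      have := (qR_odd p n hp x).pos
      positivity
  parts_sum := by
    have hr0 : rR p n x ≠ 0 := (rR_pos p n x).ne'
    have h2 : 2 ^ (rR p n x).factorization 2 * ordCompl[2] (rR p n x) = rR p n x :=
      Nat.ordProj_mul_ordCompl_eq_self _ 2
    have h1 : (x.1.parts.filter (fun i => i % (2 * p) = p)).sum +
        (x.1.parts.filter (fun i => ¬ i % (2 * p) = p)).sum = n := by
      rw [← Multiset.sum_add, Multiset.filter_add_not, x.1.parts_sum]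
    rw [filter_eq_replicate_R, Multiset.sum_replicate, smul_eq_mul] at h1
    rw [Multiset.sum_add, Multiset.sum_replicate, smul_eq_mul]
    have h3 : ordCompl[2] (rR p n x) * (p * (2 ^ (rR p n x).factorization 2 * qR p n x)) =
        rR p n x * jR p n x := by
      calc ordCompl[2] (rR p n x) * (p * (2 ^ (rR p n x).factorization 2 * qR p n x))
          = (2 ^ (rR p n x).factorization 2 * ordCompl[2] (rR p n x)) * (p * qR p n x) := by ring
        _ = rR p n x * jR p n x := by rw [h2, mul_qR]
    omega

lemma G_parts (hp : 2 ≤ p) (x : {lam : n.Partition // PR p n lam}) :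
    (G p n hp x).parts = x.1.parts.filter (fun i => ¬ i % (2 * p) = p) +
      replicate (ordCompl[2] (rR p n x)) (p * (2 ^ (rR p n x).factorization 2 * qR p n x)) :=
  rfl

lemma not_dvd_of_mem_filterR (x : {lam : n.Partition // PR p n lam}) {i : ℕ}
    (hi : i ∈ x.1.parts.filter (fun i => ¬ i % (2 * p) = p)) : ¬ p ∣ i := by
  rcases x.2.1 i ((mem_filter.mp hi).1) with h | h
  · exact h
  · exact absurd h ((mem_filter.mp hi).2)

lemma G_mem (hp : 2 ≤ p) (x : {lam : n.Partition // PR p n lam}) : PL p n (G p n hp x) := by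
  have hr0 : rR p n x ≠ 0 := (rR_pos p n x).ne'
  have hc0 : ordCompl[2] (rR p n x) ≠ 0 := (Nat.ordCompl_pos 2 hr0).ne'
  constructor
  · refine ⟨p * (2 ^ (rR p n x).factorization 2 * qR p n x), Dvd.intro _ rfl, ?_, ?_⟩
    · rw [G_parts]
      exact mem_add.mpr (Or.inr (mem_replicate.mpr ⟨hc0, rfl⟩))
    · intro i hi hdvd
      rcases mem_add.mp ((G_parts p n hp x) ▸ hi) with h | h
      · exact absurd hdvd (not_dvd_of_mem_filterR p n x h)
      · exact eq_of_mem_replicate h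
  · have hfil : (G p n hp x).parts.filter (fun i => p ∣ i) =
        replicate (ordCompl[2] (rR p n x)) (p * (2 ^ (rR p n x).factorization 2 * qR p n x)) := by
      rw [G_parts, filter_add]
      rw [filter_eq_nil.mpr (fun a ha => not_dvd_of_mem_filterR p n x ha),
        Multiset.filter_eq_self.mpr (fun b hb => by
          rw [eq_of_mem_replicate hb]; exact Dvd.intro _ rfl), zero_add]
    rw [hfil, card_replicate]
    exact odd_ordCompl hr0


/-! ### Round trips -/

lemma GF (hp : 2 ≤ p) (x : {lam : n.Partition // PL p n lam})
    (y : {lam : n.Partition // PR p n lam}) (hy : y.1 = F p n hp x) :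
    G p n hp y = x.1 := by
  have hm0 : mL p n x ≠ 0 := (mL_pos p n hp x).ne'
  have hcodd : Odd (cL p n x) := cL_odd p n x
  have hcount0 : 2 ^ (mL p n x).factorization 2 * cL p n x ≠ 0 :=
    Nat.mul_ne_zero (pow_ne_zero _ two_ne_zero) hcodd.pos.ne'
  have hqodd : Odd (ordCompl[2] (mL p n x)) := odd_ordCompl hm0
  have hmod : (p * ordCompl[2] (mL p n x)) % (2 * p) = p := mod_eq_of_odd (by omega) hqodd
  have hyp : y.1.parts = x.1.parts.filter (fun i => ¬ p ∣ i) +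
      replicate (2 ^ (mL p n x).factorization 2 * cL p n x) (p * ordCompl[2] (mL p n x)) := by
    rw [hy, F_parts]
  have hmem : p * ordCompl[2] (mL p n x) ∈ y.1.parts := by
    rw [hyp]; exact mem_add.mpr (Or.inr (mem_replicate.mpr ⟨hcount0, rfl⟩))
  have hjy : jR p n y = p * ordCompl[2] (mL p n x) :=
    ((jR_spec p n y).2.2 _ hmem hmod).symm
  have hqy : qR p n y = ordCompl[2] (mL p n x) := by
    have h := mul_qR p n y
    rw [hjy] at h
    exact Nat.eq_of_mul_eq_mul_left (by omega) h
  have e1 : (x.1.parts.filter (fun i => ¬ p ∣ i)).filter (fun i => i % (2 * p) = p) = 0 :=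
    filter_eq_nil.mpr (fun b hb hbm => (mem_filter.mp hb).2 (dvd_of_mod_eq hbm))
  have e2 : (replicate (2 ^ (mL p n x).factorization 2 * cL p n x)
        (p * ordCompl[2] (mL p n x))).filter (fun i => i % (2 * p) = p) =
      replicate (2 ^ (mL p n x).factorization 2 * cL p n x) (p * ordCompl[2] (mL p n x)) :=
    Multiset.filter_eq_self.mpr (fun b hb => by rw [eq_of_mem_replicate hb]; exact hmod)
  have e3 : (x.1.parts.filter (fun i => ¬ p ∣ i)).filter (fun i => ¬ i % (2 * p) = p) =
      x.1.parts.filter (fun i => ¬ p ∣ i) :=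
    Multiset.filter_eq_self.mpr (fun b hb hbm => (mem_filter.mp hb).2 (dvd_of_mod_eq hbm))
  have e4 : (replicate (2 ^ (mL p n x).factorization 2 * cL p n x)
        (p * ordCompl[2] (mL p n x))).filter (fun i => ¬ i % (2 * p) = p) = 0 :=
    filter_eq_nil.mpr (fun b hb => by
      rw [eq_of_mem_replicate hb]; exact not_not_intro hmod)
  have hfil1 : y.1.parts.filter (fun i => i % (2 * p) = p) =
      replicate (2 ^ (mL p n x).factorization 2 * cL p n x) (p * ordCompl[2] (mL p n x)) := by
    rw [hyp, filter_add, e1, e2, zero_add]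
  have hry : rR p n y = 2 ^ (mL p n x).factorization 2 * cL p n x := by
    show (y.1.parts.filter (fun i => i % (2 * p) = p)).card = _
    rw [hfil1, card_replicate]
  have hfil2 : y.1.parts.filter (fun i => ¬ i % (2 * p) = p) =
      x.1.parts.filter (fun i => ¬ p ∣ i) := by
    rw [hyp, filter_add, e3, e4, add_zero]
  apply Nat.Partition.ext
  rw [G_parts, hfil2, hry, ordCompl_two_pow_mul hcodd, fact_two_pow_mul hcodd, hqy,
    Nat.ordProj_mul_ordCompl_eq_self, mul_mL]
  conv_rhs => rw [← Multiset.filter_add_not (fun i => p ∣ i) x.1.parts]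
  rw [filter_eq_replicate_L]
  exact add_comm _ _

lemma FG (hp : 2 ≤ p) (y : {lam : n.Partition // PR p n lam})
    (x : {lam : n.Partition // PL p n lam}) (hx : x.1 = G p n hp y) :
    F p n hp x = y.1 := by
  have hr0 : rR p n y ≠ 0 := (rR_pos p n y).ne'
  have hc0 : ordCompl[2] (rR p n y) ≠ 0 := (Nat.ordCompl_pos 2 hr0).ne'
  have hqodd : Odd (qR p n y) := qR_odd p n hp y
  have hxp : x.1.parts = y.1.parts.filter (fun i => ¬ i % (2 * p) = p) +
      replicate (ordCompl[2] (rR p n y))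
        (p * (2 ^ (rR p n y).factorization 2 * qR p n y)) := by
    rw [hx, G_parts]
  have hmem : p * (2 ^ (rR p n y).factorization 2 * qR p n y) ∈ x.1.parts := by
    rw [hxp]; exact mem_add.mpr (Or.inr (mem_replicate.mpr ⟨hc0, rfl⟩))
  have hjx : jL p n x = p * (2 ^ (rR p n y).factorization 2 * qR p n y) :=
    ((jL_spec p n x).2.2 _ hmem (Dvd.intro _ rfl)).symm
  have hmx : mL p n x = 2 ^ (rR p n y).factorization 2 * qR p n y := by
    have h := mul_mL p n x
    rw [hjx] at h
    exact Nat.eq_of_mul_eq_mul_left (by omega) h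
  have e1 : (y.1.parts.filter (fun i => ¬ i % (2 * p) = p)).filter (fun i => p ∣ i) = 0 :=
    filter_eq_nil.mpr (fun b hb hd => not_dvd_of_mem_filterR p n y hb hd)
  have e2 : (replicate (ordCompl[2] (rR p n y))
        (p * (2 ^ (rR p n y).factorization 2 * qR p n y))).filter (fun i => p ∣ i) =
      replicate (ordCompl[2] (rR p n y))
        (p * (2 ^ (rR p n y).factorization 2 * qR p n y)) :=
    Multiset.filter_eq_self.mpr (fun b hb => by
      rw [eq_of_mem_replicate hb]; exact Dvd.intro _ rfl)
  have e3 : (y.1.parts.filter (fun i => ¬ i % (2 * p) = p)).filter (fun i => ¬ p ∣ i) =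
      y.1.parts.filter (fun i => ¬ i % (2 * p) = p) :=
    Multiset.filter_eq_self.mpr (fun b hb => not_dvd_of_mem_filterR p n y hb)
  have e4 : (replicate (ordCompl[2] (rR p n y))
        (p * (2 ^ (rR p n y).factorization 2 * qR p n y))).filter (fun i => ¬ p ∣ i) = 0 :=
    filter_eq_nil.mpr (fun b hb => by
      rw [eq_of_mem_replicate hb]; exact not_not_intro (Dvd.intro _ rfl))
  have hfilx : x.1.parts.filter (fun i => p ∣ i) =
      replicate (ordCompl[2] (rR p n y))
        (p * (2 ^ (rR p n y).factorization 2 * qR p n y)) := by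
    rw [hxp, filter_add, e1, e2, zero_add]
  have hcx : cL p n x = ordCompl[2] (rR p n y) := by
    show (x.1.parts.filter (fun i => p ∣ i)).card = _
    rw [hfilx, card_replicate]
  have hfilx2 : x.1.parts.filter (fun i => ¬ p ∣ i) =
      y.1.parts.filter (fun i => ¬ i % (2 * p) = p) := by
    rw [hxp, filter_add, e3, e4, add_zero]
  apply Nat.Partition.ext
  rw [F_parts, hfilx2, hcx, hmx, ordCompl_two_pow_mul hqodd, fact_two_pow_mul hqodd,
    Nat.ordProj_mul_ordCompl_eq_self, mul_qR]
  conv_rhs => rw [← Multiset.filter_add_not (fun i => i % (2 * p) = p) y.1.parts]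
  rw [filter_eq_replicate_R]
  exact add_comm _ _

end maps

end OPOHP

theorem oPO_eq_hP (p : ℕ) (hp : 2 ≤ p) (n : ℕ) : oPO p n = hP p n := by
  apply Nat.card_congr
  exact {
    toFun := fun x => ⟨OPOHP.F p n hp x, OPOHP.F_mem p n hp x⟩
    invFun := fun y => ⟨OPOHP.G p n hp y, OPOHP.G_mem p n hp y⟩
    left_inv := fun x => Subtype.ext
      (OPOHP.GF p n hp x ⟨OPOHP.F p n hp x, OPOHP.F_mem p n hp x⟩ rfl)
    right_inv := fun y => Subtype.ext
      (OPOHP.FG p n hp y ⟨OPOHP.G p n hp y, OPOHP.G_mem p n hp y⟩ rfl) }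
end

section
/- Let p ≥ 2. For all n ≥ 0, the number of partitions of n in which the set of parts divisible by p is a singleton and the number of parts divisible by p is even equals the number of partitions of n into parts either not divisible by p, or divisible by 2p, such that the set of parts divisible by 2p is a singleton. -/
/-- `o_{p,e}(n)`: partitions of `n` whose set of parts divisible by `p` is a singleton and
in which the number of parts divisible by `p` (counted with multiplicity) is even. -/
noncomputable def oPE (p n : ℕ) : ℕ :=
  Nat.card {lam : n.Partition //
    (∃ j, p ∣ j ∧ j ∈ lam.parts ∧ ∀ i ∈ lam.parts, p ∣ i → i = j) ∧
      Even (lam.parts.filter (fun i => p ∣ i)).card}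

/-- `h_0(n,p)`: partitions of `n` into parts either not divisible by `p` or divisible by `2p`,
in which the set of parts divisible by `2p` is a singleton. -/
noncomputable def hZero (p n : ℕ) : ℕ :=
  Nat.card {lam : n.Partition //
    (∀ j ∈ lam.parts, ¬ p ∣ j ∨ 2 * p ∣ j) ∧
      ∃ j, 2 * p ∣ j ∧ j ∈ lam.parts ∧ ∀ i ∈ lam.parts, 2 * p ∣ i → i = j}

/-- Common parametrization: `(j, t, m)` with `p ∣ j`, `j > 0`, `t > 0`, `m` a multiset of
positive parts not divisible by `p`, and `m.sum + j * (2 * t) = n`. -/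
def OHAux (p n : ℕ) : Type :=
  {x : ℕ × ℕ × Multiset ℕ // p ∣ x.1 ∧ 0 < x.1 ∧ 0 < x.2.1 ∧
    (∀ i ∈ x.2.2, 0 < i ∧ ¬ p ∣ i) ∧ x.2.2.sum + x.1 * (2 * x.2.1) = n}

private lemma filter_aux (q j t : ℕ) (m : Multiset ℕ) (hm : ∀ i ∈ m, ¬ q ∣ i) (hj : q ∣ j) :
    (m + Multiset.replicate t j).filter (fun i => q ∣ i) = Multiset.replicate t j ∧
    (m + Multiset.replicate t j).filter (fun i => ¬ q ∣ i) = m := by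
  constructor
  · rw [Multiset.filter_add, Multiset.filter_eq_nil.2 hm,
      Multiset.filter_eq_self.2 (fun a ha => by rwa [Multiset.eq_of_mem_replicate ha]),
      zero_add]
  · rw [Multiset.filter_add, Multiset.filter_eq_self.2 hm,
      Multiset.filter_eq_nil.2 (fun a ha => by
        simp only [not_not]; rwa [Multiset.eq_of_mem_replicate ha]), add_zero]

private lemma oPE_card_aux (p n : ℕ) : oPE p n = Nat.card (OHAux p n) := by
  classical
  refine (Nat.card_congr (Equiv.ofBijective (fun x => ?_) ⟨?_, ?_⟩)).symm
  · -- the forward map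
    refine ⟨⟨x.1.2.2 + Multiset.replicate (2 * x.1.2.1) x.1.1, ?_, ?_⟩, ?_, ?_⟩
    · intro i hi
      rcases Multiset.mem_add.1 hi with h | h
      · exact (x.2.2.2.2.1 i h).1
      · rw [Multiset.eq_of_mem_replicate h]; exact x.2.2.1
    · rw [Multiset.sum_add, Multiset.sum_replicate, smul_eq_mul, Nat.mul_comm]
      exact x.2.2.2.2.2
    · refine ⟨x.1.1, x.2.1, Multiset.mem_add.2 (Or.inr (Multiset.mem_replicate.2
        ⟨by have := x.2.2.2.1; omega, rfl⟩)), ?_⟩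
      intro i hi hdvd
      rcases Multiset.mem_add.1 hi with h | h
      · exact absurd hdvd (x.2.2.2.2.1 i h).2
      · exact Multiset.eq_of_mem_replicate h
    · rw [(filter_aux p x.1.1 (2 * x.1.2.1) x.1.2.2
        (fun i hi => (x.2.2.2.2.1 i hi).2) x.2.1).1, Multiset.card_replicate]
      exact even_two_mul _
  · -- injective
    rintro ⟨⟨j₁, t₁, m₁⟩, h₁⟩ ⟨⟨j₂, t₂, m₂⟩, h₂⟩ h
    have hparts : m₁ + Multiset.replicate (2 * t₁) j₁ = m₂ + Multiset.replicate (2 * t₂) j₂ := by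
      have := congrArg (fun y => (y : {lam : n.Partition // _}).1.parts) h
      exact this
    have f₁ := filter_aux p j₁ (2 * t₁) m₁ (fun i hi => (h₁.2.2.2.1 i hi).2) h₁.1
    have f₂ := filter_aux p j₂ (2 * t₂) m₂ (fun i hi => (h₂.2.2.2.1 i hi).2) h₂.1
    have hrep : Multiset.replicate (2 * t₁) j₁ = Multiset.replicate (2 * t₂) j₂ := by
      rw [← f₁.1, ← f₂.1, hparts]
    have hm : m₁ = m₂ := by rw [← f₁.2, ← f₂.2, hparts]
    have hj : j₁ = j₂ := Multiset.eq_of_mem_replicate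
      (hrep ▸ Multiset.mem_replicate.2
        ⟨Nat.mul_ne_zero two_ne_zero (h₁.2.2.1 :  0 < _).ne', rfl⟩)
    have ht : 2 * t₁ = 2 * t₂ := by
      have := congrArg Multiset.card hrep
      simpa using this
    apply Subtype.ext
    simp only [Prod.mk.injEq]
    exact ⟨hj, by omega, hm⟩
  · -- surjective
    rintro ⟨lam, ⟨j, hpj, hjm, huniq⟩, heven⟩
    obtain ⟨t, ht⟩ := heven
    set m := lam.parts.filter (fun i => ¬ p ∣ i) with hm
    have hf : lam.parts.filter (fun i => p ∣ i) =
        Multiset.replicate (t + t) j := by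
      rw [← ht]
      exact Multiset.eq_replicate_card.2 (fun b hb =>
        huniq b (Multiset.mem_filter.1 hb).1 (Multiset.mem_filter.1 hb).2)
    have htpos : 0 < t := by
      have : j ∈ lam.parts.filter (fun i => p ∣ i) := Multiset.mem_filter.2 ⟨hjm, hpj⟩
      rw [hf] at this
      have := Multiset.mem_replicate.1 this
      omega
    have hdecomp : m + Multiset.replicate (2 * t) j = lam.parts := by
      have h0 := Multiset.filter_add_not (fun i => p ∣ i) lam.parts
      rw [hf] at h0
      calc m + Multiset.replicate (2 * t) j
          = Multiset.replicate (t + t) j + m := by rw [two_mul, add_comm]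
        _ = lam.parts := h0
    refine ⟨⟨(j, t, m), hpj, lam.parts_pos hjm, htpos, ?_, ?_⟩, ?_⟩
    · intro i hi
      exact ⟨lam.parts_pos (Multiset.mem_filter.1 hi).1, (Multiset.mem_filter.1 hi).2⟩
    · have hsum : (m + Multiset.replicate (2 * t) j).sum = n := by
        rw [hdecomp]; exact lam.parts_sum
      rw [Multiset.sum_add, Multiset.sum_replicate, smul_eq_mul] at hsum
      rw [← hsum, Nat.mul_comm]
    · apply Subtype.ext
      apply Nat.Partition.ext
      exact hdecomp

private lemma hZero_card_aux (p n : ℕ) : hZero p n = Nat.card (OHAux p n) := by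
  classical
  have hp2 : ∀ i : ℕ, 2 * p ∣ i → p ∣ i := fun i hi =>
    (dvd_mul_left p 2).trans hi
  refine (Nat.card_congr (Equiv.ofBijective (fun x => ?_) ⟨?_, ?_⟩)).symm
  · -- the forward map
    refine ⟨⟨x.1.2.2 + Multiset.replicate x.1.2.1 (2 * x.1.1), ?_, ?_⟩, ?_, ?_⟩
    · intro i hi
      rcases Multiset.mem_add.1 hi with h | h
      · exact (x.2.2.2.2.1 i h).1
      · rw [Multiset.eq_of_mem_replicate h]; have := x.2.2.1; omega
    · rw [Multiset.sum_add, Multiset.sum_replicate, smul_eq_mul]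
      have : x.1.2.1 * (2 * x.1.1) = x.1.1 * (2 * x.1.2.1) := by ring
      rw [this]
      exact x.2.2.2.2.2
    · intro i hi
      rcases Multiset.mem_add.1 hi with h | h
      · exact Or.inl (x.2.2.2.2.1 i h).2
      · rw [Multiset.eq_of_mem_replicate h]
        exact Or.inr (mul_dvd_mul_left 2 x.2.1)
    · refine ⟨2 * x.1.1, mul_dvd_mul_left 2 x.2.1,
        Multiset.mem_add.2 (Or.inr (Multiset.mem_replicate.2 ⟨by have := x.2.2.2.1; omega, rfl⟩)),
        ?_⟩
      intro i hi hdvd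
      rcases Multiset.mem_add.1 hi with h | h
      · exact absurd (hp2 i hdvd) (x.2.2.2.2.1 i h).2
      · exact Multiset.eq_of_mem_replicate h
  · -- injective
    rintro ⟨⟨j₁, t₁, m₁⟩, h₁⟩ ⟨⟨j₂, t₂, m₂⟩, h₂⟩ h
    have hparts : m₁ + Multiset.replicate t₁ (2 * j₁) = m₂ + Multiset.replicate t₂ (2 * j₂) := by
      have := congrArg (fun y => (y : {lam : n.Partition // _}).1.parts) h
      exact this
    have f₁ := filter_aux (2 * p) (2 * j₁) t₁ m₁
      (fun i hi hd => (h₁.2.2.2.1 i hi).2 (hp2 i hd)) (mul_dvd_mul_left 2 h₁.1)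
    have f₂ := filter_aux (2 * p) (2 * j₂) t₂ m₂
      (fun i hi hd => (h₂.2.2.2.1 i hi).2 (hp2 i hd)) (mul_dvd_mul_left 2 h₂.1)
    have hrep : Multiset.replicate t₁ (2 * j₁) = Multiset.replicate t₂ (2 * j₂) := by
      rw [← f₁.1, ← f₂.1, hparts]
    have hm : m₁ = m₂ := by rw [← f₁.2, ← f₂.2, hparts]
    have hj : 2 * j₁ = 2 * j₂ := Multiset.eq_of_mem_replicate
      (hrep ▸ Multiset.mem_replicate.2 ⟨(h₁.2.2.1 : 0 < _).ne', rfl⟩)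
    have ht : t₁ = t₂ := by
      have := congrArg Multiset.card hrep
      simpa using this
    apply Subtype.ext
    simp only [Prod.mk.injEq]
    exact ⟨by omega, ht, hm⟩
  · -- surjective
    rintro ⟨lam, hall, ⟨j, h2pj, hjm, huniq⟩⟩
    obtain ⟨c, hc⟩ := h2pj
    have hjpos : 0 < j := lam.parts_pos hjm
    set m := lam.parts.filter (fun i => ¬ 2 * p ∣ i) with hm
    set t := (lam.parts.filter (fun i => 2 * p ∣ i)).card with hts
    have hf : lam.parts.filter (fun i => 2 * p ∣ i) = Multiset.replicate t j :=
      Multiset.eq_replicate_card.2 (fun b hb =>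
        huniq b (Multiset.mem_filter.1 hb).1 (Multiset.mem_filter.1 hb).2)
    have htpos : 0 < t := by
      have : j ∈ lam.parts.filter (fun i => 2 * p ∣ i) :=
        Multiset.mem_filter.2 ⟨hjm, ⟨c, hc⟩⟩
      rw [hf] at this
      have := Multiset.mem_replicate.1 this
      omega
    have hj2 : j = 2 * (p * c) := by rw [hc]; ring
    have hdecomp : m + Multiset.replicate t (2 * (p * c)) = lam.parts := by
      have h0 := Multiset.filter_add_not (fun i => 2 * p ∣ i) lam.parts
      rw [hf] at h0
      calc m + Multiset.replicate t (2 * (p * c))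
          = Multiset.replicate t j + m := by rw [← hj2, add_comm]
        _ = lam.parts := h0
    refine ⟨⟨(p * c, t, m), dvd_mul_right p c, by omega, htpos, ?_, ?_⟩, ?_⟩
    · intro i hi
      refine ⟨lam.parts_pos (Multiset.mem_filter.1 hi).1, ?_⟩
      have hnd : ¬ 2 * p ∣ i := (Multiset.mem_filter.1 hi).2
      rcases hall i (Multiset.mem_filter.1 hi).1 with h | h
      · exact h
      · exact absurd h hnd
    · have hsum : (m + Multiset.replicate t (2 * (p * c))).sum = n := by
        rw [hdecomp]; exact lam.parts_sum
      rw [Multiset.sum_add, Multiset.sum_replicate, smul_eq_mul] at hsum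
      have : p * c * (2 * t) = t * (2 * (p * c)) := by ring
      rw [this, hsum]
    · apply Subtype.ext
      apply Nat.Partition.ext
      exact hdecomp

theorem oPE_eq_hZero (p : ℕ) (hp : 2 ≤ p) (n : ℕ) : oPE p n = hZero p n := by
  rw [oPE_card_aux, hZero_card_aux]
end
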